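/- arXiv:1203.1389 — 5 statements merged into one kernel-verified Lean document; each statement's English description precedes it below -/
import Mathlib

section
/- Let $Z$ be a random walk on $\mathbb{Z}^d$ with i.i.d. increments of law $p$, with $n$-step distribution $p_n(x):=\mathbb{P}^Z_0(Z_n=x)$, where $p_0=\delta_0$ and by convention $p_{-1}\equiv 0$; write $p_{n,n+1}(x):=p_n(x)+p_{n+1}(x)$. Assume that (a) $p_{n,n+1}(0)\geq p_{n+1,n+2}(0)$ for all $n\geq -1$, and (b) $p_{n,n+1}(0)\geq p_{n,n+1}(x)$ for all $n\geq -1$ and all $x\in\mathbb{Z}^d$. Then for every deterministic sequence $\phi=(\phi_i)_{i\geq 0}$ in $\mathbb{Z}^d$ and every $n\in\mathbb{N}$, $\sum_{x\in\mathbb{Z}^d}\mathbb{P}^Z_x(\tilde\tau_\phi\leq n)\geq\sum_{x\in\mathbb{Z}^d}\mathbb{P}^Z_x(\tilde\tau_0\leq n)$, where $\tilde\tau_\phi:=\min\{m\geq 0: Z_m=\phi_m \text{ or } Z_m=\phi_{m+1}\}$ and $\tilde\tau_0$ is the case $\phi\equiv 0$. -/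
open MeasureTheory ProbabilityTheory Finset
open scoped ENNReal

set_option linter.unusedSectionVars false
set_option linter.unusedVariables false

section pascal
variable {V : Type*} [AddCommGroup V] [MeasurableSpace V] [MeasurableSingletonClass V] [Countable V]
variable {Ω : Type*} [MeasurableSpace Ω] {μ : Measure Ω} {ξ : ℕ → Ω → V} {p : V → ℝ≥0∞}

def ppS (ξ : ℕ → Ω → V) (m : ℕ) (ω : Ω) : V := ∑ i ∈ Finset.range m, ξ i ω

def ppHit (ξ : ℕ → Ω → V) (φ : ℕ → V) (x : V) (k : ℕ) (ω : Ω) : Prop :=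
  x + ppS ξ k ω = φ k ∨ x + ppS ξ k ω = φ (k + 1)

def ppE (ξ : ℕ → Ω → V) (φ : ℕ → V) (x : V) (m : ℕ) : Set Ω :=
  {ω | ppHit ξ φ x m ω ∧ ∀ k < m, ¬ ppHit ξ φ x k ω}

lemma ppS_meas (hmeas : ∀ i, Measurable (ξ i)) (m : ℕ) : Measurable (ppS ξ m) :=
  Finset.measurable_sum _ fun i _ => hmeas i

lemma ppS_set_meas (hmeas : ∀ i, Measurable (ξ i)) (m : ℕ) (c : V) :
    MeasurableSet {ω | ppS ξ m ω = c} :=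
  (ppS_meas hmeas m) (measurableSet_singleton c)

lemma pp_shift_set (x c : V) (K : ℕ) :
    {ω | x + ppS ξ K ω = c} = {ω | ppS ξ K ω = c - x} := by
  ext ω; simp [eq_sub_iff_add_eq']

/-- mass transport: summing over starting points -/
lemma pp_tsum_one [IsProbabilityMeasure μ] (hmeas : ∀ i, Measurable (ξ i)) (m : ℕ) (c : V) :
    ∑' x : V, μ {ω | x + ppS ξ m ω = c} = 1 := by
  have h1 : ∀ x : V, {ω | x + ppS ξ m ω = c} = ppS ξ m ⁻¹' {c - x} := by
    intro x; ext ω; simp [Set.mem_preimage, eq_sub_iff_add_eq']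
  calc ∑' x : V, μ {ω | x + ppS ξ m ω = c}
      = ∑' x : V, μ (ppS ξ m ⁻¹' {c - x}) := by simp_rw [h1]
    _ = ∑' y : V, μ (ppS ξ m ⁻¹' {y}) := by
        exact (Equiv.subLeft c).tsum_eq (fun y => μ (ppS ξ m ⁻¹' {y}))
    _ = μ (⋃ y : V, ppS ξ m ⁻¹' {y}) := by
        refine (measure_iUnion ?_ fun y => ppS_set_meas hmeas m y).symm
        intro y z hyz
        refine Set.disjoint_left.2 fun ω hy hz => hyz ?_
        simp only [Set.mem_preimage, Set.mem_singleton_iff] at hy hz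
        rw [← hy, ← hz]
    _ = 1 := by
        rw [Set.iUnion_eq_univ_iff.2 fun ω => ⟨ppS ξ m ω, rfl⟩, measure_univ]

lemma pp_atom (hindep : iIndepFun ξ μ)
    (hlaw : ∀ i (x : V), μ {ω | ξ i ω = x} = p x)
    (s : Finset ℕ) (f : ↥s → V) :
    μ {ω | ∀ i : ↥s, ξ i ω = f i} = ∏ i : ↥s, p (f i) := by
  classical
  set g : ℕ → V := fun i => if h : i ∈ s then f ⟨i, h⟩ else 0 with hg
  have hset : {ω | ∀ i : ↥s, ξ i ω = f i} = ⋂ i ∈ s, ξ i ⁻¹' {g i} := by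
    ext ω
    simp only [Set.mem_setOf_eq, Set.mem_iInter, Set.mem_preimage, Set.mem_singleton_iff]
    constructor
    · intro h i hi; simp only [hg, dif_pos hi]; exact h ⟨i, hi⟩
    · intro h i; have := h i i.2; simpa only [hg, dif_pos i.2] using this
  rw [hset, (iIndepFun_iff_measure_inter_preimage_eq_mul.1 hindep) s
    (fun i _ => measurableSet_singleton (g i))]
  rw [← Finset.prod_attach s (fun i => μ (ξ i ⁻¹' {g i}))]
  refine Finset.prod_congr rfl fun i _ => ?_
  have : μ (ξ (i : ℕ) ⁻¹' {g i}) = p (g i) := hlaw i (g i)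
  rw [this]; congr 1; simp only [hg, dif_pos i.2]

lemma pp_sum_formula (hmeas : ∀ i, Measurable (ξ i))
    (hindep : iIndepFun ξ μ)
    (hlaw : ∀ i (x : V), μ {ω | ξ i ω = x} = p x)
    (s : Finset ℕ) (z : V) :
    μ {ω | ∑ i ∈ s, ξ i ω = z}
      = ∑' f : {f : ↥s → V // ∑ i, f i = z}, ∏ i : ↥s, p (f.1 i) := by
  classical
  have hset : {ω | ∑ i ∈ s, ξ i ω = z}
      = ⋃ f : {f : ↥s → V // ∑ i, f i = z}, {ω | ∀ i : ↥s, ξ i ω = f.1 i} := by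
    ext ω
    simp only [Set.mem_setOf_eq, Set.mem_iUnion]
    constructor
    · intro h
      refine ⟨⟨fun i => ξ i ω, ?_⟩, fun i => rfl⟩
      rw [Finset.sum_coe_sort s (fun i => ξ i ω)]; exact h
    · rintro ⟨f, hf⟩
      have : ∑ i : ↥s, ξ i ω = z := by
        rw [Finset.sum_congr rfl (fun i _ => hf i)]
        · exact f.2
      rw [← Finset.sum_coe_sort s (fun i => ξ i ω)]; exact this
  rw [hset, measure_iUnion]
  · exact tsum_congr fun f => pp_atom hindep hlaw s f.1
  · intro f g hfg
    refine Set.disjoint_left.2 fun ω hf hg => hfg ?_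
    simp only [Set.mem_setOf_eq] at hf hg
    exact Subtype.ext (funext fun i => (hf i).symm.trans (hg i))
  · intro f
    have : {ω | ∀ i : ↥s, ξ i ω = f.1 i} = ⋂ i : ↥s, ξ i ⁻¹' {f.1 i} := by
      ext ω; simp [Set.mem_iInter]
    rw [this]
    exact MeasurableSet.iInter fun i => (hmeas i) (measurableSet_singleton _)

lemma pp_card_inv (hmeas : ∀ i, Measurable (ξ i))
    (hindep : iIndepFun ξ μ)
    (hlaw : ∀ i (x : V), μ {ω | ξ i ω = x} = p x)
    {s t : Finset ℕ} (hst : s.card = t.card) (z : V) :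
    μ {ω | ∑ i ∈ s, ξ i ω = z} = μ {ω | ∑ i ∈ t, ξ i ω = z} := by
  classical
  rw [pp_sum_formula hmeas hindep hlaw s z, pp_sum_formula hmeas hindep hlaw t z]
  have e : ↥s ≃ ↥t := Finset.equivOfCardEq hst
  let Φ : {f : ↥t → V // ∑ i, f i = z} ≃ {f : ↥s → V // ∑ i, f i = z} :=
    { toFun := fun f => ⟨f.1 ∘ e, by simpa [Function.comp] using (Equiv.sum_comp e f.1).trans f.2⟩
      invFun := fun f => ⟨f.1 ∘ e.symm, by simpa [Function.comp] using (Equiv.sum_comp e.symm f.1).trans f.2⟩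
      left_inv := fun f => Subtype.ext (funext fun i => by simp)
      right_inv := fun f => Subtype.ext (funext fun i => by simp) }
  rw [← Φ.tsum_eq]
  refine tsum_congr fun f => ?_
  exact (Equiv.prod_comp e (fun i => p (f.1 i)))

lemma pp_markov (hmeas : ∀ i, Measurable (ξ i))
    (hindep : iIndepFun ξ μ)
    {m N : ℕ} (hmN : m ≤ N) (A : Set Ω)
    (hdet : ∀ ω₁ ω₂, (∀ i < m, ξ i ω₁ = ξ i ω₂) → (ω₁ ∈ A ↔ ω₂ ∈ A))
    (y : V) (hAy : ∀ ω ∈ A, ppS ξ m ω = y) (v : V) :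
    μ (A ∩ {ω | ppS ξ N ω = v})
      = μ A * μ {ω | ∑ i ∈ Finset.Ico m N, ξ i ω = v - y} := by
  classical
  have hstep : A ∩ {ω | ppS ξ N ω = v} = A ∩ {ω | ∑ i ∈ Finset.Ico m N, ξ i ω = v - y} := by
    ext ω
    simp only [Set.mem_inter_iff, Set.mem_setOf_eq, and_congr_right_iff]
    intro hA
    have hsplit : ppS ξ N ω = y + ∑ i ∈ Finset.Ico m N, ξ i ω := by
      rw [← hAy ω hA]
      simp only [ppS, Finset.range_eq_Ico]
      exact (Finset.sum_Ico_consecutive _ (Nat.zero_le m) hmN).symm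
    rw [hsplit]
    constructor
    · intro h; rw [eq_sub_iff_add_eq']; exact h
    · intro h; rw [eq_sub_iff_add_eq'] at h; exact h
  rw [hstep]
  set T₁ : Ω → (↥(Finset.range m) → V) := fun ω i => ξ i ω with hT₁
  set T₂ : Ω → (↥(Finset.Ico m N) → V) := fun ω i => ξ i ω with hT₂
  have hA' : A = T₁ ⁻¹' (T₁ '' A) := by
    refine Set.Subset.antisymm (Set.subset_preimage_image _ _) ?_
    intro ω hω
    obtain ⟨ω', hω', hTT⟩ := hω
    refine (hdet ω' ω fun i hi => ?_).1 hω'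
    exact congrFun hTT ⟨i, Finset.mem_range.2 hi⟩
  have hB' : {ω | ∑ i ∈ Finset.Ico m N, ξ i ω = v - y}
      = T₂ ⁻¹' {w : ↥(Finset.Ico m N) → V | ∑ i, w i = v - y} := by
    ext ω
    simp only [Set.mem_setOf_eq, Set.mem_preimage, hT₂]
    rw [Finset.sum_coe_sort (Finset.Ico m N) (fun i => ξ i ω)]
  have hdisj : Disjoint (Finset.range m) (Finset.Ico m N) := by
    rw [Finset.range_eq_Ico]
    exact Finset.Ico_disjoint_Ico_consecutive 0 m N
  have hind : IndepFun T₁ T₂ μ :=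
    hindep.indepFun_finset (Finset.range m) (Finset.Ico m N) hdisj hmeas
  rw [hA', hB']
  exact indepFun_iff_measure_inter_preimage_eq_mul.1 hind _ _
    (Set.to_countable _).measurableSet (Set.to_countable _).measurableSet

/-- two-time Markov decomposition -/
lemma pp_two (hmeas : ∀ i, Measurable (ξ i))
    (hindep : iIndepFun ξ μ)
    (hlaw : ∀ i (x : V), μ {ω | ξ i ω = x} = p x)
    {m N : ℕ} (hmN : m ≤ N) (A : Set Ω)
    (hdet : ∀ ω₁ ω₂, (∀ i < m, ξ i ω₁ = ξ i ω₂) → (ω₁ ∈ A ↔ ω₂ ∈ A))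
    (y : V) (hAy : ∀ ω ∈ A, ppS ξ m ω = y) (v : V) :
    μ (A ∩ {ω | ppS ξ N ω = v}) + μ (A ∩ {ω | ppS ξ (N+1) ω = v})
      = μ A * (μ {ω | ppS ξ (N-m) ω = v - y} + μ {ω | ppS ξ (N+1-m) ω = v - y}) := by
  have h1 := pp_markov hmeas hindep hmN A hdet y hAy v
  have h2 := pp_markov hmeas hindep (hmN.trans (Nat.le_succ N)) A hdet y hAy v
  have e1 : μ {ω | ∑ i ∈ Finset.Ico m N, ξ i ω = v - y}
      = μ {ω | ppS ξ (N-m) ω = v - y} := by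
    simp only [ppS]
    exact pp_card_inv hmeas hindep hlaw (by simp [Nat.card_Ico]) _
  have e2 : μ {ω | ∑ i ∈ Finset.Ico m (N+1), ξ i ω = v - y}
      = μ {ω | ppS ξ (N+1-m) ω = v - y} := by
    simp only [ppS]
    exact pp_card_inv hmeas hindep hlaw (by simp [Nat.card_Ico]) _
  rw [h1, h2, e1, e2, mul_add]

lemma ppHit_set_eq (φ : ℕ → V) (x : V) (k : ℕ) :
    {ω | ppHit ξ φ x k ω} = ppS ξ k ⁻¹' {φ k - x} ∪ ppS ξ k ⁻¹' {φ (k+1) - x} := by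
  ext ω
  simp only [ppHit, Set.mem_setOf_eq, Set.mem_union, Set.mem_preimage, Set.mem_singleton_iff,
    eq_sub_iff_add_eq']

lemma ppHit_meas (hmeas : ∀ i, Measurable (ξ i)) (φ : ℕ → V) (x : V) (k : ℕ) :
    MeasurableSet {ω | ppHit ξ φ x k ω} := by
  rw [ppHit_set_eq]
  exact ((ppS_meas hmeas k) (measurableSet_singleton _)).union
    ((ppS_meas hmeas k) (measurableSet_singleton _))

lemma ppE_meas (hmeas : ∀ i, Measurable (ξ i)) (φ : ℕ → V) (x : V) (m : ℕ) :
    MeasurableSet (ppE ξ φ x m) := by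
  have : ppE ξ φ x m
      = {ω | ppHit ξ φ x m ω} ∩ ⋂ k, ⋂ (_ : k < m), {ω | ppHit ξ φ x k ω}ᶜ := by
    ext ω; simp [ppE, Set.mem_iInter]
  rw [this]
  exact (ppHit_meas hmeas φ x m).inter
    (MeasurableSet.iInter fun k => MeasurableSet.iInter fun _ => (ppHit_meas hmeas φ x k).compl)

/-- the first-hit events are determined by the increments before `m` -/
lemma ppE_det (φ : ℕ → V) (x : V) (m : ℕ) :
    ∀ ω₁ ω₂ : Ω, (∀ i < m, ξ i ω₁ = ξ i ω₂) → (ω₁ ∈ ppE ξ φ x m ↔ ω₂ ∈ ppE ξ φ x m) := by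
  intro ω₁ ω₂ h
  have hS : ∀ k ≤ m, ppS ξ k ω₁ = ppS ξ k ω₂ := by
    intro k hk
    exact Finset.sum_congr rfl fun i hi => h i (lt_of_lt_of_le (Finset.mem_range.1 hi) hk)
  have hH : ∀ k ≤ m, (ppHit ξ φ x k ω₁ ↔ ppHit ξ φ x k ω₂) := by
    intro k hk; unfold ppHit; rw [hS k hk]
  constructor
  · rintro ⟨h1, h2⟩
    exact ⟨(hH m le_rfl).1 h1, fun k hk hc => h2 k hk ((hH k hk.le).2 hc)⟩
  · rintro ⟨h1, h2⟩
    exact ⟨(hH m le_rfl).2 h1, fun k hk hc => h2 k hk ((hH k hk.le).1 hc)⟩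

/-- decomposition of `∃ m ≤ n, hit` into first-hit events -/
lemma pp_partition (hmeas : ∀ i, Measurable (ξ i)) (φ : ℕ → V) (x : V) (n : ℕ) :
    μ {ω | ∃ m ≤ n, ppHit ξ φ x m ω} = ∑ m ∈ Finset.range (n+1), μ (ppE ξ φ x m) := by
  classical
  have hset : {ω | ∃ m ≤ n, ppHit ξ φ x m ω} = ⋃ m ∈ Finset.range (n+1), ppE ξ φ x m := by
    ext ω
    simp only [Set.mem_setOf_eq, Set.mem_iUnion, Finset.mem_range, Nat.lt_succ_iff]
    constructor
    · rintro ⟨k, hk, hhit⟩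
      have hex : ∃ j, ppHit ξ φ x j ω := ⟨k, hhit⟩
      refine ⟨Nat.find hex, le_trans (Nat.find_min' hex hhit) hk, Nat.find_spec hex,
        fun j hj => Nat.find_min hex hj⟩
    · rintro ⟨m, hm, hhit, -⟩
      exact ⟨m, hm, hhit⟩
  rw [hset, measure_biUnion_finset ?_ fun m _ => ppE_meas hmeas φ x m]
  · intro i _ j _ hij
    rcases hij.lt_or_gt with h | h
    · exact Set.disjoint_left.2 fun ω hi hj => (hj.2 i h) hi.1
    · exact Set.disjoint_left.2 fun ω hi hj => (hi.2 j h) hj.1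

lemma pp_cover (hmeas : ∀ i, Measurable (ξ i)) (φ : ℕ → V) (x c : V) {N : ℕ}
    (hc : c = φ N ∨ c = φ (N+1)) :
    μ {ω | x + ppS ξ N ω = c}
      = ∑ m ∈ Finset.range (N+1), μ (ppE ξ φ x m ∩ {ω | x + ppS ξ N ω = c}) := by
  classical
  have hmeasc : MeasurableSet {ω | x + ppS ξ N ω = c} := by
    rw [pp_shift_set]
    exact ppS_set_meas hmeas N _
  have hset : {ω | x + ppS ξ N ω = c}
      = ⋃ m ∈ Finset.range (N+1), (ppE ξ φ x m ∩ {ω | x + ppS ξ N ω = c}) := by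
    ext ω
    simp only [Set.mem_setOf_eq, Set.mem_iUnion, Finset.mem_range, Nat.lt_succ_iff,
      Set.mem_inter_iff]
    constructor
    · intro h
      have hhit : ppHit ξ φ x N ω := by
        rcases hc with hc | hc
        · exact Or.inl (by rw [h, hc])
        · exact Or.inr (by rw [h, hc])
      have hex : ∃ j, ppHit ξ φ x j ω := ⟨N, hhit⟩
      exact ⟨Nat.find hex, Nat.find_min' hex hhit,
        ⟨⟨Nat.find_spec hex, fun j hj => Nat.find_min hex hj⟩, h⟩⟩
    · rintro ⟨m, hm, -, h⟩
      exact h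
  conv_lhs => rw [hset]
  rw [measure_biUnion_finset ?_ fun m _ => (ppE_meas hmeas φ x m).inter hmeasc]
  · intro i _ j _ hij
    rcases hij.lt_or_gt with h | h
    · exact Set.disjoint_left.2 fun ω hi hj => (hj.1.2 i h) hi.1.1
    · exact Set.disjoint_left.2 fun ω hi hj => (hi.1.2 j h) hj.1.1

lemma ppE_pair_le (hmeas : ∀ i, Measurable (ξ i))
    (hindep : iIndepFun ξ μ)
    (hlaw : ∀ i (x : V), μ {ω | ξ i ω = x} = p x)
    (hBQ : ∀ (j : ℕ) (z : V), μ {ω | ppS ξ j ω = z} + μ {ω | ppS ξ (j+1) ω = z}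
        ≤ μ {ω | ppS ξ j ω = 0} + μ {ω | ppS ξ (j+1) ω = 0})
    (φ : ℕ → V) (x c : V) {m N : ℕ} (hmN : m ≤ N) :
    μ (ppE ξ φ x m ∩ {ω | x + ppS ξ N ω = c})
      + μ (ppE ξ φ x m ∩ {ω | x + ppS ξ (N+1) ω = c})
      ≤ μ (ppE ξ φ x m) * (μ {ω | ppS ξ (N-m) ω = 0} + μ {ω | ppS ξ (N+1-m) ω = 0}) := by
  classical
  set y₁ := φ m - x with hy₁
  set y₂ := φ (m+1) - x with hy₂
  set v := c - x with hv
  set A := ppE ξ φ x m with hA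
  set A₁ := A ∩ {ω | ppS ξ m ω = y₁} with hA₁
  set A₂ := A ∩ {ω | ppS ξ m ω ≠ y₁} with hA₂
  have hSdet : ∀ ω₁ ω₂ : Ω, (∀ i < m, ξ i ω₁ = ξ i ω₂) → ppS ξ m ω₁ = ppS ξ m ω₂ :=
    fun ω₁ ω₂ h => Finset.sum_congr rfl fun i hi => h i (Finset.mem_range.1 hi)
  have hdet1 : ∀ ω₁ ω₂ : Ω, (∀ i < m, ξ i ω₁ = ξ i ω₂) → (ω₁ ∈ A₁ ↔ ω₂ ∈ A₁) := by
    intro ω₁ ω₂ h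
    simp only [hA₁, hA, Set.mem_inter_iff, Set.mem_setOf_eq, hSdet ω₁ ω₂ h,
      ppE_det φ x m ω₁ ω₂ h]
  have hdet2 : ∀ ω₁ ω₂ : Ω, (∀ i < m, ξ i ω₁ = ξ i ω₂) → (ω₁ ∈ A₂ ↔ ω₂ ∈ A₂) := by
    intro ω₁ ω₂ h
    simp only [hA₂, hA, Set.mem_inter_iff, Set.mem_setOf_eq, hSdet ω₁ ω₂ h,
      ppE_det φ x m ω₁ ω₂ h]
  have hA1y : ∀ ω ∈ A₁, ppS ξ m ω = y₁ := fun ω h => h.2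
  have hA2y : ∀ ω ∈ A₂, ppS ξ m ω = y₂ := by
    rintro ω ⟨hωA, hne⟩
    rcases hωA.1 with h | h
    · exact absurd (eq_sub_iff_add_eq'.2 h) hne
    · exact eq_sub_iff_add_eq'.2 h
  have hmeasA₁ : MeasurableSet A₁ :=
    (ppE_meas hmeas φ x m).inter (ppS_set_meas hmeas m y₁)
  have hmeasA₂ : MeasurableSet A₂ :=
    (ppE_meas hmeas φ x m).inter (ppS_set_meas hmeas m y₁).compl
  have hdisj : Disjoint A₁ A₂ := by
    refine Set.disjoint_left.2 fun ω h1 h2 => h2.2 h1.2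
  have hcup : ∀ W : Set Ω, A ∩ W = (A₁ ∩ W) ∪ (A₂ ∩ W) := by
    intro W
    ext ω
    simp only [Set.mem_inter_iff, Set.mem_union, Set.mem_setOf_eq, hA₁, hA₂]
    by_cases hS : ppS ξ m ω = y₁ <;> tauto
  have hsplit : ∀ W : Set Ω, MeasurableSet W → μ (A ∩ W) = μ (A₁ ∩ W) + μ (A₂ ∩ W) := by
    intro W hW
    rw [hcup W]
    exact measure_union (hdisj.mono Set.inter_subset_left Set.inter_subset_left)
      (hmeasA₂.inter hW)
  have hAA : μ A = μ A₁ + μ A₂ := by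
    have := hsplit Set.univ MeasurableSet.univ
    simpa using this
  have hsucc : N + 1 - m = (N - m) + 1 := by omega
  have key1 := pp_two hmeas hindep hlaw hmN A₁ hdet1 y₁ hA1y v
  have key2 := pp_two hmeas hindep hlaw hmN A₂ hdet2 y₂ hA2y v
  have hWN : {ω : Ω | x + ppS ξ N ω = c} = {ω | ppS ξ N ω = v} := pp_shift_set x c N
  have hWN1 : {ω : Ω | x + ppS ξ (N+1) ω = c} = {ω | ppS ξ (N+1) ω = v} :=
    pp_shift_set x c (N+1)
  rw [hWN, hWN1]
  calc μ (A ∩ {ω | ppS ξ N ω = v}) + μ (A ∩ {ω | ppS ξ (N+1) ω = v})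
      = (μ (A₁ ∩ {ω | ppS ξ N ω = v}) + μ (A₁ ∩ {ω | ppS ξ (N+1) ω = v}))
        + (μ (A₂ ∩ {ω | ppS ξ N ω = v}) + μ (A₂ ∩ {ω | ppS ξ (N+1) ω = v})) := by
        rw [hsplit _ (ppS_set_meas hmeas N v), hsplit _ (ppS_set_meas hmeas (N+1) v)]
        ring
    _ = μ A₁ * (μ {ω | ppS ξ (N-m) ω = v - y₁} + μ {ω | ppS ξ (N+1-m) ω = v - y₁})
        + μ A₂ * (μ {ω | ppS ξ (N-m) ω = v - y₂} + μ {ω | ppS ξ (N+1-m) ω = v - y₂}) := by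
        rw [key1, key2]
    _ ≤ μ A₁ * (μ {ω | ppS ξ (N-m) ω = 0} + μ {ω | ppS ξ (N+1-m) ω = 0})
        + μ A₂ * (μ {ω | ppS ξ (N-m) ω = 0} + μ {ω | ppS ξ (N+1-m) ω = 0}) := by
        refine add_le_add (mul_le_mul_right ?_ _) (mul_le_mul_right ?_ _)
        · have := hBQ (N-m) (v - y₁); rwa [← hsucc] at this
        · have := hBQ (N-m) (v - y₂); rwa [← hsucc] at this
    _ = μ A * (μ {ω | ppS ξ (N-m) ω = 0} + μ {ω | ppS ξ (N+1-m) ω = 0}) := by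
        rw [hAA, add_mul]

lemma ppE_pair_eq (hmeas : ∀ i, Measurable (ξ i))
    (hindep : iIndepFun ξ μ)
    (hlaw : ∀ i (x : V), μ {ω | ξ i ω = x} = p x)
    (x : V) {m N : ℕ} (hmN : m ≤ N) :
    μ (ppE ξ (fun _ => 0) x m ∩ {ω | x + ppS ξ N ω = 0})
      + μ (ppE ξ (fun _ => 0) x m ∩ {ω | x + ppS ξ (N+1) ω = 0})
      = μ (ppE ξ (fun _ => 0) x m)
        * (μ {ω | ppS ξ (N-m) ω = 0} + μ {ω | ppS ξ (N+1-m) ω = 0}) := by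
  classical
  set A := ppE ξ (fun _ => (0:V)) x m with hA
  have hAy : ∀ ω ∈ A, ppS ξ m ω = -x := by
    rintro ω ⟨h1, -⟩
    rcases h1 with h | h <;> exact (neg_eq_of_add_eq_zero_right h).symm
  have key := pp_two hmeas hindep hlaw hmN A (ppE_det _ x m) (-x) hAy (-x)
  have hshift : ∀ K : ℕ, {ω : Ω | x + ppS ξ K ω = 0} = {ω | ppS ξ K ω = -x} := by
    intro K; ext ω
    constructor
    · exact fun h => (neg_eq_of_add_eq_zero_right h).symm
    · intro h
      have h' : ppS ξ K ω = -x := h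
      show x + ppS ξ K ω = 0
      rw [h']
      exact add_neg_cancel x
  rw [hshift N, hshift (N+1), key]
  simp

noncomputable def ppr (μ : Measure Ω) (ξ : ℕ → Ω → V) : ℕ → ℝ≥0∞
  | 0 => 1
  | (j+1) => μ {ω | ppS ξ j ω = 0} + μ {ω | ppS ξ (j+1) ω = 0}

lemma ppr_eq {m N : ℕ} (hmN : m ≤ N) :
    ppr μ ξ (N+1-m) = μ {ω | ppS ξ (N-m) ω = 0} + μ {ω | ppS ξ (N+1-m) ω = 0} := by
  rw [show N+1-m = (N-m)+1 by omega]
  rfl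

lemma pp_key_le [IsProbabilityMeasure μ] (hmeas : ∀ i, Measurable (ξ i))
    (hindep : iIndepFun ξ μ)
    (hlaw : ∀ i (x : V), μ {ω | ξ i ω = x} = p x)
    (hBQ : ∀ (j : ℕ) (z : V), μ {ω | ppS ξ j ω = z} + μ {ω | ppS ξ (j+1) ω = z}
        ≤ μ {ω | ppS ξ j ω = 0} + μ {ω | ppS ξ (j+1) ω = 0})
    (φ : ℕ → V) (N : ℕ) :
    (2 : ℝ≥0∞) ≤ ∑ m ∈ Finset.range (N+2),
      (∑' x : V, μ (ppE ξ φ x m)) * ppr μ ξ (N+1-m) := by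
  classical
  set c := φ (N+1) with hc
  have hx : ∀ x : V, μ {ω | x + ppS ξ N ω = c} + μ {ω | x + ppS ξ (N+1) ω = c}
      ≤ ∑ m ∈ Finset.range (N+2), μ (ppE ξ φ x m) * ppr μ ξ (N+1-m) := by
    intro x
    have hcov1 := pp_cover (μ := μ) hmeas φ x c (N := N) (Or.inr rfl)
    have hcov2 := pp_cover (μ := μ) hmeas φ x c (N := N+1) (Or.inl rfl)
    rw [hcov1, hcov2, Finset.sum_range_succ
      (fun m => μ (ppE ξ φ x m ∩ {ω | x + ppS ξ (N+1) ω = c})) (N+1),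
      ← add_assoc, ← Finset.sum_add_distrib]
    have hmain : ∑ m ∈ Finset.range (N+1),
        (μ (ppE ξ φ x m ∩ {ω | x + ppS ξ N ω = c})
          + μ (ppE ξ φ x m ∩ {ω | x + ppS ξ (N+1) ω = c}))
        ≤ ∑ m ∈ Finset.range (N+1), μ (ppE ξ φ x m) * ppr μ ξ (N+1-m) := by
      refine Finset.sum_le_sum fun m hm => ?_
      have hmN : m ≤ N := Nat.lt_succ_iff.1 (Finset.mem_range.1 hm)
      rw [ppr_eq hmN]
      exact ppE_pair_le hmeas hindep hlaw hBQ φ x c hmN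
    have hbound : μ (ppE ξ φ x (N+1) ∩ {ω | x + ppS ξ (N+1) ω = c})
        ≤ μ (ppE ξ φ x (N+1)) * ppr μ ξ (N+1-(N+1)) := by
      rw [show N+1-(N+1) = 0 by omega]
      show _ ≤ _ * ppr μ ξ 0
      rw [show ppr μ ξ 0 = 1 from rfl, mul_one]
      exact measure_mono Set.inter_subset_left
    calc _ ≤ (∑ m ∈ Finset.range (N+1), μ (ppE ξ φ x m) * ppr μ ξ (N+1-m))
            + μ (ppE ξ φ x (N+1)) * ppr μ ξ (N+1-(N+1)) := add_le_add hmain hbound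
      _ = _ := (Finset.sum_range_succ (fun m => μ (ppE ξ φ x m) * ppr μ ξ (N+1-m)) (N+1)).symm
  have h2 : (2 : ℝ≥0∞) = ∑' x : V, (μ {ω | x + ppS ξ N ω = c} + μ {ω | x + ppS ξ (N+1) ω = c}) := by
    rw [ENNReal.tsum_add, pp_tsum_one hmeas N c, pp_tsum_one hmeas (N+1) c]
    norm_num
  rw [h2]
  calc ∑' x : V, (μ {ω | x + ppS ξ N ω = c} + μ {ω | x + ppS ξ (N+1) ω = c})
      ≤ ∑' x : V, ∑ m ∈ Finset.range (N+2), μ (ppE ξ φ x m) * ppr μ ξ (N+1-m) :=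
        ENNReal.tsum_le_tsum hx
    _ = ∑ m ∈ Finset.range (N+2), ∑' x : V, μ (ppE ξ φ x m) * ppr μ ξ (N+1-m) :=
        Summable.tsum_finsetSum fun m _ => ENNReal.summable
    _ = ∑ m ∈ Finset.range (N+2), (∑' x : V, μ (ppE ξ φ x m)) * ppr μ ξ (N+1-m) := by
        exact Finset.sum_congr rfl fun m _ => ENNReal.tsum_mul_right

lemma pp_key_eq [IsProbabilityMeasure μ] (hmeas : ∀ i, Measurable (ξ i))
    (hindep : iIndepFun ξ μ)
    (hlaw : ∀ i (x : V), μ {ω | ξ i ω = x} = p x)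
    (N : ℕ) :
    (2 : ℝ≥0∞) = ∑ m ∈ Finset.range (N+2),
      (∑' x : V, μ (ppE ξ (fun _ => 0) x m)) * ppr μ ξ (N+1-m) := by
  classical
  have hx : ∀ x : V, μ {ω | x + ppS ξ N ω = 0} + μ {ω | x + ppS ξ (N+1) ω = 0}
      = ∑ m ∈ Finset.range (N+2), μ (ppE ξ (fun _ => 0) x m) * ppr μ ξ (N+1-m) := by
    intro x
    have hcov1 := pp_cover (μ := μ) hmeas (fun _ => (0:V)) x 0 (N := N) (Or.inr rfl)
    have hcov2 := pp_cover (μ := μ) hmeas (fun _ => (0:V)) x 0 (N := N+1) (Or.inl rfl)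
    rw [hcov1, hcov2, Finset.sum_range_succ
      (fun m => μ (ppE ξ (fun _ => 0) x m ∩ {ω | x + ppS ξ (N+1) ω = 0})) (N+1),
      ← add_assoc, ← Finset.sum_add_distrib]
    have hmain : ∑ m ∈ Finset.range (N+1),
        (μ (ppE ξ (fun _ => 0) x m ∩ {ω | x + ppS ξ N ω = 0})
          + μ (ppE ξ (fun _ => 0) x m ∩ {ω | x + ppS ξ (N+1) ω = 0}))
        = ∑ m ∈ Finset.range (N+1), μ (ppE ξ (fun _ => 0) x m) * ppr μ ξ (N+1-m) := by
      refine Finset.sum_congr rfl fun m hm => ?_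
      have hmN : m ≤ N := Nat.lt_succ_iff.1 (Finset.mem_range.1 hm)
      rw [ppr_eq hmN]
      exact ppE_pair_eq hmeas hindep hlaw x hmN
    have hbound : μ (ppE ξ (fun _ => 0) x (N+1) ∩ {ω | x + ppS ξ (N+1) ω = 0})
        = μ (ppE ξ (fun _ => 0) x (N+1)) * ppr μ ξ (N+1-(N+1)) := by
      rw [show N+1-(N+1) = 0 by omega]
      rw [show ppr μ ξ 0 = 1 from rfl, mul_one]
      congr 1
      refine Set.inter_eq_self_of_subset_left fun ω hω => ?_
      rcases hω.1 with h | h <;> exact h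
    rw [hmain, hbound,
      ← Finset.sum_range_succ (fun m => μ (ppE ξ (fun _ => 0) x m) * ppr μ ξ (N+1-m)) (N+1)]
  have h2 : (2 : ℝ≥0∞) = ∑' x : V,
      (μ {ω | x + ppS ξ N ω = 0} + μ {ω | x + ppS ξ (N+1) ω = 0}) := by
    rw [ENNReal.tsum_add, pp_tsum_one hmeas N 0, pp_tsum_one hmeas (N+1) 0]
    norm_num
  rw [h2]
  calc ∑' x : V, (μ {ω | x + ppS ξ N ω = 0} + μ {ω | x + ppS ξ (N+1) ω = 0})
      = ∑' x : V, ∑ m ∈ Finset.range (N+2), μ (ppE ξ (fun _ => 0) x m) * ppr μ ξ (N+1-m) :=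
        tsum_congr hx
    _ = ∑ m ∈ Finset.range (N+2), ∑' x : V, μ (ppE ξ (fun _ => 0) x m) * ppr μ ξ (N+1-m) :=
        Summable.tsum_finsetSum fun m _ => ENNReal.summable
    _ = ∑ m ∈ Finset.range (N+2), (∑' x : V, μ (ppE ξ (fun _ => 0) x m)) * ppr μ ξ (N+1-m) :=
        Finset.sum_congr rfl fun m _ => ENNReal.tsum_mul_right

lemma pp_a_le_two [IsProbabilityMeasure μ] (hmeas : ∀ i, Measurable (ξ i))
    (φ : ℕ → V) (m : ℕ) : ∑' x : V, μ (ppE ξ φ x m) ≤ 2 := by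
  have hsub : ∀ x : V, μ (ppE ξ φ x m)
      ≤ μ {ω | x + ppS ξ m ω = φ m} + μ {ω | x + ppS ξ m ω = φ (m+1)} := by
    intro x
    refine le_trans (measure_mono ?_) (measure_union_le _ _)
    intro ω hω
    rcases hω.1 with h | h
    · exact Or.inl h
    · exact Or.inr h
  calc ∑' x : V, μ (ppE ξ φ x m)
      ≤ ∑' x : V, (μ {ω | x + ppS ξ m ω = φ m} + μ {ω | x + ppS ξ m ω = φ (m+1)}) :=
        ENNReal.tsum_le_tsum hsub
    _ = 1 + 1 := by
        rw [ENNReal.tsum_add, pp_tsum_one hmeas m (φ m), pp_tsum_one hmeas m (φ (m+1))]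
    _ = 2 := by norm_num

lemma pp_a0 [IsProbabilityMeasure μ] (hmeas : ∀ i, Measurable (ξ i)) (φ : ℕ → V) :
    1 ≤ ∑' x : V, μ (ppE ξ φ x 0) := by
  rw [← pp_tsum_one (μ := μ) hmeas 0 (φ 0)]
  refine ENNReal.tsum_le_tsum fun x => measure_mono fun ω h => ?_
  exact ⟨Or.inl h, fun k hk => absurd hk (Nat.not_lt_zero k)⟩

lemma pp_b0 [IsProbabilityMeasure μ] (hmeas : ∀ i, Measurable (ξ i)) :
    ∑' x : V, μ (ppE ξ (fun _ => 0) x 0) = 1 := by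
  have h : ∀ x : V, ppE ξ (fun _ => 0) x 0 = {ω | x + ppS ξ 0 ω = 0} := by
    intro x; ext ω; simp [ppE, ppHit]
  simp_rw [h]
  exact pp_tsum_one hmeas 0 0

end pascal

lemma pp_compare_real (a b r : ℕ → ℝ)
    (hr1 : r 0 = 1) (hrmono : ∀ j, r (j+1) ≤ r j)
    (h0 : b 0 ≤ a 0)
    (hid : ∀ N : ℕ, 0 ≤ ∑ m ∈ Finset.range (N+2), (a m - b m) * r (N+1-m))
    (n : ℕ) : ∑ m ∈ Finset.range (n+1), b m ≤ ∑ m ∈ Finset.range (n+1), a m := by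
  set c : ℕ → ℝ := fun m => a m - b m with hc
  have main : ∀ k, 0 ≤ ∑ m ∈ Finset.range (k+1), c m := by
    intro k
    induction k using Nat.strong_induction_on with
    | _ k IH =>
      match k with
      | 0 => simpa [hc] using sub_nonneg.2 h0
      | (M+1) =>
        have habel := Finset.sum_range_by_parts (fun i => r (M+1-i)) c (M+2)
        simp only [smul_eq_mul, show M+2-1 = M+1 from rfl,
          show M+1-(M+1) = 0 by omega, hr1, one_mul] at habel
        have hkey : 0 ≤ ∑ i ∈ Finset.range (M+2), r (M+1-i) * c i := by
          rw [show (∑ i ∈ Finset.range (M+2), r (M+1-i) * c i)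
            = ∑ i ∈ Finset.range (M+2), c i * r (M+1-i) from
            Finset.sum_congr rfl fun i _ => mul_comm _ _]
          exact hid M
        have hpos : 0 ≤ ∑ i ∈ Finset.range (M+1),
            (r (M+1-(i+1)) - r (M+1-i)) * ∑ j ∈ Finset.range (i+1), c j := by
          refine Finset.sum_nonneg fun i hi => ?_
          have hiM : i ≤ M := Nat.lt_succ_iff.1 (Finset.mem_range.1 hi)
          refine mul_nonneg (sub_nonneg.2 ?_) (IH i (Nat.lt_succ_of_le hiM))
          rw [show M+1-(i+1) = M-i by omega, show M+1-i = (M-i)+1 by omega]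
          exact hrmono (M-i)
        linarith [habel]
  have := main n
  simp only [hc, Finset.sum_sub_distrib] at this
  linarith

lemma pp_compare (a b r : ℕ → ℝ≥0∞)
    (ha2 : ∀ m, a m ≤ 2) (hb2 : ∀ m, b m ≤ 2) (hrle : ∀ j, r j ≤ 1)
    (hr1 : r 0 = 1) (hrmono : ∀ j, r (j+1) ≤ r j) (h0 : b 0 ≤ a 0)
    (hbid : ∀ N : ℕ, ∑ m ∈ Finset.range (N+2), b m * r (N+1-m) = 2)
    (haid : ∀ N : ℕ, (2:ℝ≥0∞) ≤ ∑ m ∈ Finset.range (N+2), a m * r (N+1-m))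
    (n : ℕ) : ∑ m ∈ Finset.range (n+1), b m ≤ ∑ m ∈ Finset.range (n+1), a m := by
  have hafin : ∀ m, a m ≠ ∞ := fun m => ((ha2 m).trans_lt (by norm_num)).ne
  have hbfin : ∀ m, b m ≠ ∞ := fun m => ((hb2 m).trans_lt (by norm_num)).ne
  have hrfin : ∀ j, r j ≠ ∞ := fun j => ((hrle j).trans_lt (by norm_num)).ne
  set A : ℕ → ℝ := fun m => (a m).toReal with hA
  set B : ℕ → ℝ := fun m => (b m).toReal with hB
  set R : ℕ → ℝ := fun j => (r j).toReal with hR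
  have hsumA : ∀ N, (∑ m ∈ Finset.range (N+2), a m * r (N+1-m)).toReal
      = ∑ m ∈ Finset.range (N+2), A m * R (N+1-m) := by
    intro N
    rw [ENNReal.toReal_sum fun m _ => ENNReal.mul_ne_top (hafin m) (hrfin _)]
    exact Finset.sum_congr rfl fun m _ => ENNReal.toReal_mul
  have hsumB : ∀ N, (∑ m ∈ Finset.range (N+2), b m * r (N+1-m)).toReal
      = ∑ m ∈ Finset.range (N+2), B m * R (N+1-m) := by
    intro N
    rw [ENNReal.toReal_sum fun m _ => ENNReal.mul_ne_top (hbfin m) (hrfin _)]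
    exact Finset.sum_congr rfl fun m _ => ENNReal.toReal_mul
  have hid : ∀ N : ℕ, 0 ≤ ∑ m ∈ Finset.range (N+2), (A m - B m) * R (N+1-m) := by
    intro N
    have h1 : (2:ℝ) ≤ ∑ m ∈ Finset.range (N+2), A m * R (N+1-m) := by
      rw [← hsumA N]
      have hfin : (∑ m ∈ Finset.range (N+2), a m * r (N+1-m)) ≠ ∞ := by
        refine (lt_of_le_of_lt (Finset.sum_le_sum fun m _ =>
          mul_le_mul' (ha2 m) (hrle _)) ?_).ne
        simp only [mul_one]
        exact (ENNReal.sum_lt_top.2 fun m _ => (by norm_num : (2:ℝ≥0∞) < ⊤))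
      calc (2:ℝ) = ((2:ℝ≥0∞)).toReal := by norm_num
        _ ≤ _ := ENNReal.toReal_mono hfin (haid N)
    have h2 : (∑ m ∈ Finset.range (N+2), B m * R (N+1-m)) = 2 := by
      rw [← hsumB N, hbid N]; norm_num
    have h3 : ∑ m ∈ Finset.range (N+2), (A m - B m) * R (N+1-m)
        = (∑ m ∈ Finset.range (N+2), A m * R (N+1-m))
          - ∑ m ∈ Finset.range (N+2), B m * R (N+1-m) := by
      rw [← Finset.sum_sub_distrib]
      exact Finset.sum_congr rfl fun m _ => by ring
    rw [h3, h2]; linarith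
  have hreal := pp_compare_real A B R
    (by simp [hR, hr1])
    (fun j => ENNReal.toReal_mono (hrfin j) (hrmono j))
    (ENNReal.toReal_mono (hafin 0) h0)
    hid n
  have hfinsb : (∑ m ∈ Finset.range (n+1), b m) ≠ ∞ :=
    (ENNReal.sum_lt_top.2 fun m _ => ((hb2 m).trans_lt (by norm_num))).ne
  have hfinsa : (∑ m ∈ Finset.range (n+1), a m) ≠ ∞ :=
    (ENNReal.sum_lt_top.2 fun m _ => ((ha2 m).trans_lt (by norm_num))).ne
  rw [← ENNReal.toReal_le_toReal hfinsb hfinsa]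
  rw [ENNReal.toReal_sum fun m _ => hbfin m, ENNReal.toReal_sum fun m _ => hafin m]
  exact hreal

/-- **Pascal principle from monotonicity of `p_{n,n+1}(0)`.**  `Z` is a random walk on
`ℤ^d` with i.i.d. increments `ξ` of law `p`; `pn m x = P(ξ 0 + ⋯ + ξ (m-1) = x)` is its
`m`-step distribution (`pn 0 = δ_0`), and by convention `p_{-1} ≡ 0`.  The hypotheses are
`p_{n,n+1}(0) ≥ p_{n+1,n+2}(0)` and `p_{n,n+1}(0) ≥ p_{n,n+1}(x)` for all `n ≥ -1`
(`hA'`, `hB'` are the `n = -1` cases, where `p_{-1,0} = p_0`).  The conclusion is the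
discrete Pascal principle for the two-point trap field: summing over all starting points
`x`, the trap path `φ` catches at least as many walkers by time `n` as the constant trap
path `0`, where `τ̃_φ ≤ n` is the event `∃ m ≤ n, Z m = φ m ∨ Z m = φ (m+1)`. -/
theorem pascal_of_pn_monotone
    (d : ℕ) (hd : 1 ≤ d)
    (p : (Fin d → ℤ) → ℝ≥0∞) (hsum : ∑' x : Fin d → ℤ, p x = 1)
    {Ω : Type*} [MeasurableSpace Ω] (μ : Measure Ω) [IsProbabilityMeasure μ]
    (ξ : ℕ → Ω → (Fin d → ℤ))
    (hmeas : ∀ i, Measurable (ξ i))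
    (hindep : iIndepFun ξ μ)
    (hlaw : ∀ i (x : Fin d → ℤ), μ {ω | ξ i ω = x} = p x)
    (pn : ℕ → (Fin d → ℤ) → ℝ≥0∞)
    (hpn : ∀ m x, pn m x = μ {ω | ∑ i ∈ Finset.range m, ξ i ω = x})
    (hA' : pn 0 0 + pn 1 0 ≤ pn 0 0)
    (hA : ∀ m : ℕ, pn (m + 1) 0 + pn (m + 2) 0 ≤ pn m 0 + pn (m + 1) 0)
    (hB' : ∀ x, pn 0 x ≤ pn 0 0)
    (hB : ∀ (m : ℕ) (x : Fin d → ℤ), pn m x + pn (m + 1) x ≤ pn m 0 + pn (m + 1) 0)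
    (φ : ℕ → (Fin d → ℤ)) (n : ℕ) :
    ∑' x : Fin d → ℤ, μ {ω | ∃ m ≤ n, x + ∑ i ∈ Finset.range m, ξ i ω = 0} ≤
      ∑' x : Fin d → ℤ, μ {ω | ∃ m ≤ n,
        x + ∑ i ∈ Finset.range m, ξ i ω = φ m ∨
        x + ∑ i ∈ Finset.range m, ξ i ω = φ (m + 1)} := by
  classical
  have hQ : ∀ (j : ℕ) (z : Fin d → ℤ), μ {ω | ppS ξ j ω = z} = pn j z :=
    fun j z => (hpn j z).symm
  have hpn00 : pn 0 0 = 1 := by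
    rw [hpn]
    have huniv : {ω : Ω | ∑ i ∈ Finset.range 0, ξ i ω = 0} = Set.univ := by
      ext ω; simp
    rw [huniv, measure_univ]
  set a : ℕ → ℝ≥0∞ := fun m => ∑' x : Fin d → ℤ, μ (ppE ξ φ x m) with ha
  set b : ℕ → ℝ≥0∞ := fun m => ∑' x : Fin d → ℤ, μ (ppE ξ (fun _ => 0) x m) with hb
  have hLHS : ∑' x : Fin d → ℤ, μ {ω | ∃ m ≤ n, x + ∑ i ∈ Finset.range m, ξ i ω = 0}
      = ∑ m ∈ Finset.range (n+1), b m := by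
    have hev : ∀ x : Fin d → ℤ, {ω | ∃ m ≤ n, x + ∑ i ∈ Finset.range m, ξ i ω = 0}
        = {ω | ∃ m ≤ n, ppHit ξ (fun _ => 0) x m ω} := by
      intro x; ext ω; simp [ppHit, ppS]
    calc ∑' x : Fin d → ℤ, μ {ω | ∃ m ≤ n, x + ∑ i ∈ Finset.range m, ξ i ω = 0}
        = ∑' x : Fin d → ℤ, ∑ m ∈ Finset.range (n+1), μ (ppE ξ (fun _ => 0) x m) := by
          refine tsum_congr fun x => ?_
          rw [hev x, pp_partition hmeas _ x n]
      _ = ∑ m ∈ Finset.range (n+1), b m := Summable.tsum_finsetSum fun m _ => ENNReal.summable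
  have hRHS : (∑' x : Fin d → ℤ, μ {ω | ∃ m ≤ n,
        x + ∑ i ∈ Finset.range m, ξ i ω = φ m ∨
        x + ∑ i ∈ Finset.range m, ξ i ω = φ (m + 1)})
      = ∑ m ∈ Finset.range (n+1), a m := by
    have hev : ∀ x : Fin d → ℤ, {ω | ∃ m ≤ n,
        x + ∑ i ∈ Finset.range m, ξ i ω = φ m ∨
        x + ∑ i ∈ Finset.range m, ξ i ω = φ (m + 1)}
        = {ω | ∃ m ≤ n, ppHit ξ φ x m ω} := by
      intro x; ext ω; simp [ppHit, ppS]
    calc (∑' x : Fin d → ℤ, μ {ω | ∃ m ≤ n,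
        x + ∑ i ∈ Finset.range m, ξ i ω = φ m ∨
        x + ∑ i ∈ Finset.range m, ξ i ω = φ (m + 1)})
        = ∑' x : Fin d → ℤ, ∑ m ∈ Finset.range (n+1), μ (ppE ξ φ x m) := by
          refine tsum_congr fun x => ?_
          rw [hev x, pp_partition hmeas _ x n]
      _ = ∑ m ∈ Finset.range (n+1), a m := Summable.tsum_finsetSum fun m _ => ENNReal.summable
  rw [hLHS, hRHS]
  -- the renewal-comparison argument
  have hrmono : ∀ j, ppr μ ξ (j+1) ≤ ppr μ ξ j := by
    intro j
    match j with
    | 0 =>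
      show μ {ω | ppS ξ 0 ω = 0} + μ {ω | ppS ξ 1 ω = 0} ≤ (1 : ℝ≥0∞)
      rw [hQ 0 0, hQ 1 0]
      exact hA'.trans (le_of_eq hpn00)
    | (j+1) =>
      show μ {ω | ppS ξ (j+1) ω = 0} + μ {ω | ppS ξ (j+2) ω = 0}
        ≤ μ {ω | ppS ξ j ω = 0} + μ {ω | ppS ξ (j+1) ω = 0}
      simp only [hQ]
      exact hA j
  have hrle : ∀ j, ppr μ ξ j ≤ 1 := by
    intro j
    induction j with
    | zero => exact le_of_eq rfl
    | succ j ih => exact (hrmono j).trans ih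
  have hBQ : ∀ (j : ℕ) (z : Fin d → ℤ),
      μ {ω | ppS ξ j ω = z} + μ {ω | ppS ξ (j+1) ω = z}
        ≤ μ {ω | ppS ξ j ω = 0} + μ {ω | ppS ξ (j+1) ω = 0} := by
    intro j z
    simp only [hQ]
    exact hB j z
  refine pp_compare a b (ppr μ ξ)
    (fun m => pp_a_le_two hmeas φ m)
    (fun m => pp_a_le_two hmeas (fun _ => 0) m)
    hrle rfl hrmono ?_ ?_ ?_ n
  · rw [hb]
    show (∑' x : Fin d → ℤ, μ (ppE ξ (fun _ => 0) x 0)) ≤ a 0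
    rw [pp_b0 hmeas]
    exact pp_a0 hmeas φ
  · exact fun N => (pp_key_eq hmeas hindep hlaw N).symm
  · exact fun N => pp_key_le hmeas hindep hlaw hBQ φ N
end

section
/- Let $Z$ be the simple symmetric random walk on $\mathbb{Z}^d$, $d\geq 1$, with $n$-step distribution $p_n(x):=\mathbb{P}^Z_0(Z_n=x)$. Then for all $n\geq 0$ and all $x\in\mathbb{Z}^d$: $p_n(x)+p_{n+1}(x)\leq p_n(0)+p_{n+1}(0)$. -/
open MeasureTheory ProbabilityTheory Finset
open scoped ENNReal

namespace SRW

noncomputable def nuF (d : ℕ) (y : Fin d → ℤ) : ℝ≥0∞ :=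
  if (∑ j, |y j|) = 1 then ((2 * d : ℝ≥0∞))⁻¹ else 0

noncomputable def PF (d : ℕ) : ℕ → (Fin d → ℤ) → ℝ≥0∞
  | 0 => fun x => if x = 0 then 1 else 0
  | (n+1) => fun x => ∑' y, nuF d y * PF d n (x - y)


lemma nuF_ne_zero {d : ℕ} {y : Fin d → ℤ} (h : nuF d y ≠ 0) : (∑ j, |y j|) = 1 := by
  by_contra hy; simp [nuF, hy] at h

section symm

variable {d : ℕ} (π : Equiv.Perm (Fin d)) (s : Fin d → ℤ)

private lemma ss (hs : ∀ j, s j = 1 ∨ s j = -1) (j : Fin d) (a : ℤ) : s j * (s j * a) = a := by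
  rcases hs j with h | h <;> rw [h] <;> ring

/-- signed permutation as an equiv -/
def sp (hs : ∀ j, s j = 1 ∨ s j = -1) : (Fin d → ℤ) ≃ (Fin d → ℤ) where
  toFun x := fun k => s k * x (π k)
  invFun x := fun k => s (π.symm k) * x (π.symm k)
  left_inv x := by
    funext k
    show s (π.symm k) * (s (π.symm k) * x (π (π.symm k))) = x k
    rw [Equiv.apply_symm_apply]
    exact ss s hs _ _
  right_inv x := by
    funext k
    show s k * (s (π.symm (π k)) * x (π.symm (π k))) = x k
    rw [Equiv.symm_apply_apply]
    exact ss s hs _ _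

lemma nuF_sp (hs : ∀ j, s j = 1 ∨ s j = -1) (z : Fin d → ℤ) : nuF d (fun k => s k * z (π k)) = nuF d z := by
  unfold nuF
  have : (∑ k, |s k * z (π k)|) = ∑ k, |z k| := by
    rw [← Equiv.sum_comp π (fun k => |z k|)]
    refine Finset.sum_congr rfl fun k _ => ?_
    rw [abs_mul]
    rcases hs k with h | h <;> simp [h]
  rw [this]

lemma PF_symm (hs : ∀ j, s j = 1 ∨ s j = -1) : ∀ n (x : Fin d → ℤ), PF d n (fun k => s k * x (π k)) = PF d n x := by
  intro n
  induction n with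
  | zero =>
    intro x
    have hiff : (fun k => s k * x (π k)) = 0 ↔ x = 0 := by
      constructor
      · intro h
        funext m
        show x m = 0
        have h2 : s (π.symm m) * x m = 0 := by
          have := congrFun h (π.symm m)
          simp only [Equiv.apply_symm_apply] at this
          simpa using this
        rcases hs (π.symm m) with hh | hh <;> rw [hh] at h2 <;> omega
      · intro h; subst h; funext k; simp
    simp only [PF]
    by_cases h : x = 0
    · rw [if_pos (hiff.mpr h), if_pos h]
    · rw [if_neg (fun hh => h (hiff.mp hh)), if_neg h]
  | succ n ih =>
    intro x
    show (∑' y, nuF d y * PF d n ((fun k => s k * x (π k)) - y))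
        = ∑' y, nuF d y * PF d n (x - y)
    rw [← (sp π s hs).tsum_eq (fun y => nuF d y * PF d n ((fun k => s k * x (π k)) - y))]
    refine tsum_congr fun z => ?_
    have h1 : nuF d (sp π s hs z) = nuF d z := nuF_sp π s hs z
    have h2 : (fun k => s k * x (π k)) - (sp π s hs z) = fun k => s k * ((x - z) (π k)) := by
      funext k
      simp only [Pi.sub_apply, sp, Equiv.coe_fn_mk]
      ring
    rw [h1, h2, ih (x - z)]

end symm



lemma unit_char {d : ℕ} {y : Fin d → ℤ} (h : (∑ j, |y j|) = 1) :
    ∃ j, y = Pi.single j 1 ∨ y = Pi.single j (-1) := by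
  have hex : ∃ j, y j ≠ 0 := by
    by_contra hall
    push_neg at hall
    simp [hall] at h
  obtain ⟨j, hj⟩ := hex
  have h1 : |y j| ≤ 1 := by
    rw [← h]
    exact Finset.single_le_sum (f := fun k => |y k|) (fun k _ => abs_nonneg _) (mem_univ j)
  have h2 : |y j| = 1 := by
    have := abs_pos.mpr hj; omega
  have h3 : ∀ k, k ≠ j → y k = 0 := by
    intro k hk
    have hsum : ∑ m ∈ univ.erase j, |y m| = 0 := by
      have h4 : ∑ m ∈ univ.erase j, |y m| + |y j| = 1 := by
        rw [Finset.sum_erase_add _ _ (mem_univ j)]; exact h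
      omega
    have h5 : |y k| = 0 := by
      have := Finset.sum_eq_zero_iff_of_nonneg
        (fun m (_ : m ∈ univ.erase j) => abs_nonneg (y m)) |>.mp hsum k (by simp [hk])
      simpa using this
    exact abs_eq_zero.mp h5
  refine ⟨j, ?_⟩
  rcases abs_eq (by norm_num : (0:ℤ) ≤ 1) |>.mp h2 with hy1 | hy1
  · left; funext k
    by_cases hk : k = j
    · subst hk; simp [hy1]
    · simp [Pi.single_apply, hk, h3 k hk]
  · right; funext k
    by_cases hk : k = j
    · subst hk; simp [hy1]
    · simp [Pi.single_apply, hk, h3 k hk]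

lemma unit_abs_le {d : ℕ} {y : Fin d → ℤ} (h : (∑ j, |y j|) = 1) (j : Fin d) : |y j| ≤ 1 := by
  rw [← h]
  exact Finset.single_le_sum (f := fun k => |y k|) (fun k _ => abs_nonneg _) (mem_univ j)

lemma unit_pair_le {d : ℕ} {y : Fin d → ℤ} (h : (∑ j, |y j|) = 1) {i j : Fin d} (hij : i ≠ j) :
    |y i| + |y j| ≤ 1 := by
  rw [← h]
  have : ({i, j} : Finset (Fin d)) ⊆ univ := subset_univ _
  calc |y i| + |y j| = ∑ k ∈ ({i, j} : Finset (Fin d)), |y k| := by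
        rw [Finset.sum_pair hij]
    _ ≤ ∑ k, |y k| :=
        Finset.sum_le_sum_of_subset_of_nonneg this (fun k _ _ => abs_nonneg _)

lemma unit_sum_odd {d : ℕ} {y : Fin d → ℤ} (h : (∑ j, |y j|) = 1) :
    (∑ j, y j) = 1 ∨ (∑ j, y j) = -1 := by
  obtain ⟨j, hy | hy⟩ := unit_char h <;> subst hy <;>
    [left; right] <;> simp [Finset.sum_pi_single]

lemma PF_parity {d : ℕ} : ∀ (n : ℕ) (x : Fin d → ℤ), ¬ Even ((∑ j, x j) + (n : ℤ)) → PF d n x = 0 := by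
  intro n
  induction n with
  | zero =>
    intro x hx
    have hne : x ≠ 0 := by
      rintro rfl
      simp at hx
    simp only [PF, if_neg hne]
  | succ n ih =>
    intro x hx
    show (∑' y, nuF d y * PF d n (x - y)) = 0
    rw [ENNReal.tsum_eq_zero]
    intro y
    by_cases hy : nuF d y = 0
    · rw [hy, zero_mul]
    · have hu := nuF_ne_zero hy
      have hsub : (∑ j, (x - y) j) = (∑ j, x j) - ∑ j, y j := by
        simp [Finset.sum_sub_distrib]
      have hodd := unit_sum_odd hu
      rw [ih (x - y) ?_, mul_zero]
      rw [hsub]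
      simp only [Int.even_iff] at hx ⊢
      push_cast at hx ⊢
      omega



/-- boundary equality for the single-coordinate reflection -/
lemma PF_flip_eq {d : ℕ} (n : ℕ) (j : Fin d) (z : Fin d → ℤ) (hz : z j = -1) :
    PF d n (z + Pi.single j 2) = PF d n z := by
  have hs : ∀ k : Fin d, (if k = j then (-1:ℤ) else 1) = 1 ∨ (if k = j then (-1:ℤ) else 1) = -1 := by
    intro k; by_cases hk : k = j <;> simp [hk]
  have hsym := PF_symm (Equiv.refl (Fin d)) (fun k => if k = j then (-1:ℤ) else 1) hs n z
  rw [← hsym]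
  congr 1
  funext k
  by_cases hk : k = j
  · subst hk; simp [hz]
  · simp [hk, Pi.single_eq_of_ne hk]

/-- boundary equality for the swap-and-flip reflection in two coordinates -/
lemma PF_swapflip_eq {d : ℕ} (n : ℕ) {i j : Fin d} (hij : i ≠ j) (z : Fin d → ℤ)
    (hz : z i + z j = -1) :
    PF d n (z + Pi.single i 1 + Pi.single j 1) = PF d n z := by
  have hs : ∀ k : Fin d, (if k = i ∨ k = j then (-1:ℤ) else 1) = 1 ∨
      (if k = i ∨ k = j then (-1:ℤ) else 1) = -1 := by
    intro k; by_cases hk : k = i ∨ k = j <;> simp [hk]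
  have hsym := PF_symm (Equiv.swap i j) (fun k => if k = i ∨ k = j then (-1:ℤ) else 1) hs n z
  rw [← hsym]
  congr 1
  funext k
  by_cases hki : k = i
  · subst hki
    rw [if_pos (Or.inl rfl), Equiv.swap_apply_left]
    simp only [Pi.add_apply, Pi.single_eq_same, Pi.single_eq_of_ne hij]
    omega
  · by_cases hkj : k = j
    · subst hkj
      rw [if_pos (Or.inr rfl), Equiv.swap_apply_right]
      simp only [Pi.add_apply, Pi.single_eq_same, Pi.single_eq_of_ne hij.symm]
      omega
    · rw [if_neg (by tauto : ¬(k = i ∨ k = j)), Equiv.swap_apply_of_ne_of_ne hki hkj]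
      simp only [Pi.add_apply, Pi.single_eq_of_ne hki, Pi.single_eq_of_ne hkj]
      ring

/-- coordinatewise monotonicity by 2 -/
lemma PF_D {d : ℕ} : ∀ (n : ℕ) (x : Fin d → ℤ) (j : Fin d), 0 ≤ x j →
    PF d n (x + Pi.single j 2) ≤ PF d n x := by
  intro n
  induction n with
  | zero =>
    intro x j hx
    have hne : x + Pi.single j 2 ≠ 0 := by
      intro h
      have := congrFun h j
      simp at this
      omega
    show (if x + Pi.single j 2 = 0 then (1:ℝ≥0∞) else 0) ≤ _
    rw [if_neg hne]
    exact zero_le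
  | succ n ih =>
    intro x j hx
    show (∑' y, nuF d y * PF d n (x + Pi.single j 2 - y)) ≤ ∑' y, nuF d y * PF d n (x - y)
    refine ENNReal.tsum_le_tsum fun y => ?_
    by_cases hy : nuF d y = 0
    · rw [hy, zero_mul, zero_mul]
    · have hu := nuF_ne_zero hy
      have habs := unit_abs_le hu j
      have harg : x + Pi.single j 2 - y = (x - y) + Pi.single j 2 := by abel
      rw [harg]
      refine mul_le_mul_right ?_ _
      by_cases hyj : y j ≤ 0
      · exact ih (x - y) j (by simp only [Pi.sub_apply]; omega)
      · have hyj1 : y j = 1 := by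
          have h2 := le_abs_self (y j); omega
        by_cases hxj : 1 ≤ x j
        · exact ih (x - y) j (by simp only [Pi.sub_apply]; omega)
        · have hxj0 : x j = 0 := by omega
          exact le_of_eq (PF_flip_eq n j (x - y) (by simp only [Pi.sub_apply]; omega))

/-- diagonal monotonicity -/
lemma PF_C {d : ℕ} : ∀ (n : ℕ) (x : Fin d → ℤ) {i j : Fin d}, i ≠ j → 0 ≤ x i + x j →
    PF d n (x + Pi.single i 1 + Pi.single j 1) ≤ PF d n x := by
  intro n
  induction n with
  | zero =>
    intro x i j hij hx
    have hne : x + Pi.single i 1 + Pi.single j 1 ≠ 0 := by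
      intro h
      have h1 := congrFun h i
      have h2 := congrFun h j
      simp [Pi.single_eq_of_ne hij, Pi.single_eq_of_ne hij.symm] at h1 h2
      omega
    show (if _ = 0 then (1:ℝ≥0∞) else 0) ≤ _
    rw [if_neg hne]
    exact zero_le
  | succ n ih =>
    intro x i j hij hx
    show (∑' y, nuF d y * PF d n (x + Pi.single i 1 + Pi.single j 1 - y))
        ≤ ∑' y, nuF d y * PF d n (x - y)
    refine ENNReal.tsum_le_tsum fun y => ?_
    by_cases hy : nuF d y = 0
    · rw [hy, zero_mul, zero_mul]
    · have hu := nuF_ne_zero hy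
      have hpair := unit_pair_le hu hij
      have harg : x + Pi.single i 1 + Pi.single j 1 - y
          = (x - y) + Pi.single i 1 + Pi.single j 1 := by abel
      rw [harg]
      refine mul_le_mul_right ?_ _
      by_cases ht : 0 ≤ x i + x j - (y i + y j)
      · exact ih (x - y) hij (by simp only [Pi.sub_apply]; omega)
      · have hb : (x - y) i + (x - y) j = -1 := by
          simp only [Pi.sub_apply]
          have h1 : |y i| ≥ y i := le_abs_self _
          have h2 : |y j| ≥ y j := le_abs_self _
          omega
        exact le_of_eq (PF_swapflip_eq n hij (x - y) hb)



lemma even_sum_abs_iff {d : ℕ} (x : Fin d → ℤ) :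
    Even (∑ j, |x j|) ↔ Even (∑ j, x j) := by
  have h : Even (∑ j, (|x j| - x j)) := by
    refine Finset.even_sum _ fun j _ => ?_
    rcases le_or_gt 0 (x j) with h | h
    · rw [abs_of_nonneg h]; simp
    · rw [abs_of_neg h]; exact ⟨-x j, by ring⟩
  rw [Finset.sum_sub_distrib] at h
  obtain ⟨r, hr⟩ := h
  constructor <;> intro hh <;> rw [Int.even_iff] at hh ⊢ <;> omega

lemma sum_abs_sub_single {d : ℕ} (a : Fin d → ℤ) (j : Fin d) (c : ℤ)
    (h0 : 0 ≤ c) (hc : c ≤ a j) :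
    (∑ k : Fin d, |(a - Pi.single j c : Fin d → ℤ) k|) = (∑ k : Fin d, |a k|) - c := by
  have h1 : ∑ k ∈ univ.erase j, |(a - Pi.single j c : Fin d → ℤ) k| = ∑ k ∈ univ.erase j, |a k| := by
    refine Finset.sum_congr rfl fun k hk => ?_
    have hkj : k ≠ j := (Finset.mem_erase.mp hk).1
    simp [Pi.single_eq_of_ne hkj]
  have h2 : |(a - Pi.single j c : Fin d → ℤ) j| = |a j| - c := by
    simp only [Pi.sub_apply, Pi.single_eq_same]
    rw [abs_of_nonneg (by omega), abs_of_nonneg (by omega)]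
  have e1 := Finset.sum_erase_add univ (fun k => |(a - Pi.single j c : Fin d → ℤ) k|) (mem_univ j)
  have e2 := Finset.sum_erase_add univ (fun k => |a k|) (mem_univ j)
  omega

lemma PF_unit {d : ℕ} (hd : 0 < d) (n : ℕ) {y : Fin d → ℤ} (h : (∑ j, |y j|) = 1) :
    PF d n y = PF d n (Pi.single (⟨0, hd⟩ : Fin d) 1) := by
  set i0 : Fin d := ⟨0, hd⟩
  obtain ⟨j, hy⟩ := unit_char h
  have key : ∀ c : ℤ, c = 1 ∨ c = -1 →
      PF d n (Pi.single j c) = PF d n (Pi.single i0 1) := by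
    intro c hc
    have hs : ∀ k : Fin d, (if k = j then c else 1) = 1 ∨ (if k = j then c else 1) = -1 := by
      intro k; by_cases hk : k = j <;> simp [hk, hc]
    have hsym := PF_symm (Equiv.swap i0 j) (fun k => if k = j then c else 1) hs n
      (Pi.single i0 1)
    rw [← hsym]
    congr 1
    funext k
    by_cases hkj : k = j
    · subst hkj
      rw [if_pos rfl, Equiv.swap_apply_right, Pi.single_eq_same, Pi.single_eq_same, mul_one]
    · rw [if_neg hkj, one_mul, Pi.single_eq_of_ne hkj]
      by_cases hki : k = i0
      · subst hki
        rw [Equiv.swap_apply_left, Pi.single_eq_of_ne (by tauto : j ≠ i0)]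
      · rw [Equiv.swap_apply_of_ne_of_ne hki hkj, Pi.single_eq_of_ne hki]
  rcases hy with hy | hy <;> rw [hy]
  · exact key 1 (Or.inl rfl)
  · exact key (-1) (Or.inr rfl)

lemma PF_reduceN {d : ℕ} (hd : 0 < d) (n : ℕ) :
    ∀ (N : ℕ) (x : Fin d → ℤ), (∑ j, |x j|) ≤ (N : ℤ) →
      (Even (∑ j, x j) → PF d n x ≤ PF d n 0) ∧
      (¬ Even (∑ j, x j) → PF d n x ≤ PF d n (Pi.single (⟨0, hd⟩ : Fin d) 1)) := by
  intro N
  induction N with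
  | zero =>
    intro x hT
    have hx0 : x = 0 := by
      funext k
      have h1 : |x k| ≤ ∑ j, |x j| :=
        Finset.single_le_sum (f := fun j => |x j|) (fun j _ => abs_nonneg _) (mem_univ k)
      have h2 := abs_nonneg (x k)
      have h3 : |x k| = 0 := by push_cast at hT; omega
      simpa using abs_eq_zero.mp h3
    subst hx0
    refine ⟨fun _ => le_refl _, fun h => absurd (by simp) h⟩
  | succ N ihN =>
    intro x hT
    push_cast at hT
    set i0 : Fin d := ⟨0, hd⟩ with hi0
    set a : Fin d → ℤ := fun j => |x j| with ha
    have hs : ∀ j : Fin d, (if x j < 0 then (-1:ℤ) else 1) = 1 ∨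
        (if x j < 0 then (-1:ℤ) else 1) = -1 := by
      intro j; by_cases h : x j < 0 <;> simp [h]
    have hax : PF d n a = PF d n x := by
      have hsym := PF_symm (Equiv.refl (Fin d)) (fun j => if x j < 0 then (-1:ℤ) else 1) hs n x
      calc PF d n a
          = PF d n (fun k => (if x k < 0 then (-1:ℤ) else 1) * x ((Equiv.refl (Fin d)) k)) := by
            congr 1
            funext k
            show |x k| = (if x k < 0 then (-1:ℤ) else 1) * x k
            by_cases h : x k < 0
            · rw [if_pos h, abs_of_neg h]; ring
            · rw [if_neg h, abs_of_nonneg (by omega)]; ring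
        _ = PF d n x := hsym
    have habs_a : ∀ k, |a k| = |x k| := fun k => abs_abs (x k)
    have hTa : (∑ k : Fin d, |a k|) = ∑ k : Fin d, |x k| :=
      Finset.sum_congr rfl fun k _ => habs_a k
    have hpar : Even (∑ j, a j) ↔ Even (∑ j, x j) := even_sum_abs_iff x
    have hnn : ∀ j, 0 ≤ a j := fun j => abs_nonneg (x j)
    have habs' : (∑ k : Fin d, |a k|) = ∑ k : Fin d, a k :=
      Finset.sum_congr rfl fun k _ => abs_of_nonneg (hnn k)
    have hT' : (∑ k : Fin d, a k) ≤ (N : ℤ) + 1 := hT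
    suffices hmain : (Even (∑ j, a j) → PF d n a ≤ PF d n 0) ∧
        (¬ Even (∑ j, a j) → PF d n a ≤ PF d n (Pi.single i0 1)) by
      obtain ⟨hm1, hm2⟩ := hmain
      constructor
      · intro he; rw [← hax]; exact hm1 (hpar.mpr he)
      · intro he; rw [← hax]; exact hm2 (fun hh => he (hpar.mp hh))
    by_cases hbig : ∃ j, 2 ≤ a j
    · obtain ⟨j, hj⟩ := hbig
      set z : Fin d → ℤ := a - Pi.single j 2 with hzdef
      have hz : a = z + Pi.single j 2 := by rw [hzdef]; abel
      have hstep : PF d n a ≤ PF d n z := by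
        conv_lhs => rw [hz]
        refine PF_D n z j ?_
        have : z j = a j - 2 := by simp [hzdef]
        omega
      have hTz : (∑ k : Fin d, |z k|) ≤ (N : ℤ) := by
        have hss := sum_abs_sub_single a j 2 (by norm_num) hj
        rw [hzdef, hss]
        omega
      have hparz : Even (∑ k, z k) ↔ Even (∑ k, a k) := by
        have hsz : (∑ k, z k) = (∑ k, a k) - 2 := by
          rw [hzdef]
          simp only [Pi.sub_apply]
          rw [Finset.sum_sub_distrib, Fintype.sum_pi_single']
        rw [hsz]
        constructor <;> intro hh <;> rw [Int.even_iff] at hh ⊢ <;> omega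
      obtain ⟨ih1, ih2⟩ := ihN z hTz
      exact ⟨fun he => le_trans hstep (ih1 (hparz.mpr he)),
        fun he => le_trans hstep (ih2 (fun hh => he (hparz.mp hh)))⟩
    · push_neg at hbig
      by_cases hpairx : ∃ i j, i ≠ j ∧ 1 ≤ a i ∧ 1 ≤ a j
      · obtain ⟨i, j, hij, hi1, hj1⟩ := hpairx
        set a' : Fin d → ℤ := a - Pi.single i 1 with ha'def
        set z : Fin d → ℤ := a' - Pi.single j 1 with hzdef
        have ha'j : a' j = a j := by simp [ha'def, Pi.single_eq_of_ne hij.symm]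
        have hz : a = z + Pi.single i 1 + Pi.single j 1 := by rw [hzdef, ha'def]; abel
        have hzi : z i = a i - 1 := by
          simp [hzdef, ha'def, Pi.single_eq_of_ne hij]
        have hzj : z j = a j - 1 := by
          simp [hzdef, ha'def, Pi.single_eq_of_ne hij.symm]
        have hstep : PF d n a ≤ PF d n z := by
          conv_lhs => rw [hz]
          exact PF_C n z hij (by omega)
        have hTz : (∑ k : Fin d, |z k|) ≤ (N : ℤ) := by
          have s1 := sum_abs_sub_single a i 1 (by norm_num) hi1
          have s2 := sum_abs_sub_single a' j 1 (by norm_num) (by omega)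
          have s1' : (∑ k : Fin d, |a' k|) = (∑ k : Fin d, |a k|) - 1 := by
            rw [ha'def]; exact s1
          rw [hzdef, s2, s1']
          omega
        have hparz : Even (∑ k, z k) ↔ Even (∑ k, a k) := by
          have hsz : (∑ k, z k) = (∑ k, a k) - 2 := by
            rw [hzdef, ha'def]
            simp only [Pi.sub_apply]
            rw [Finset.sum_sub_distrib]
            conv_lhs => rw [Finset.sum_sub_distrib]
            rw [Fintype.sum_pi_single', Fintype.sum_pi_single']
            ring
          rw [hsz]
          constructor <;> intro hh <;> rw [Int.even_iff] at hh ⊢ <;> omega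
        obtain ⟨ih1, ih2⟩ := ihN z hTz
        exact ⟨fun he => le_trans hstep (ih1 (hparz.mpr he)),
          fun he => le_trans hstep (ih2 (fun hh => he (hparz.mp hh)))⟩
      · push_neg at hpairx
        by_cases h0 : a = 0
        · rw [h0]
          refine ⟨fun _ => le_refl _, fun h => absurd (by simp) h⟩
        · have hex : ∃ k, a k ≠ 0 := by
            by_contra hall; push_neg at hall; exact h0 (funext fun k => hall k)
          obtain ⟨k, hk⟩ := hex
          have hk1 : a k = 1 := by have := hbig k; have := hnn k; omega
          have hrest : ∀ m, m ≠ k → a m = 0 := by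
            intro m hm
            have := hpairx k m (fun h => hm h.symm) (by omega)
            have := hnn m
            omega
          have haeq : a = Pi.single k 1 := by
            funext m
            by_cases hm : m = k
            · subst hm; rw [Pi.single_eq_same]; exact hk1
            · rw [Pi.single_eq_of_ne hm]; exact hrest m hm
          have hsuma : (∑ j, a j) = 1 := by
            rw [haeq, Fintype.sum_pi_single']
          have hsum1 : (∑ j, |a j|) = 1 := by
            rw [Finset.sum_congr rfl (fun m _ => abs_of_nonneg (hnn m))]
            exact hsuma
          have hodd : ¬ Even (∑ j, a j) := by
            rw [hsuma]; rw [Int.even_iff]; omega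
          exact ⟨fun he => absurd he hodd,
            fun _ => le_of_eq (PF_unit hd n hsum1)⟩


lemma PF_even_le {d : ℕ} (hd : 0 < d) (n : ℕ) {x : Fin d → ℤ} (h : Even (∑ j, x j)) :
    PF d n x ≤ PF d n 0 :=
  (PF_reduceN hd n (∑ j, |x j|).toNat x (Int.self_le_toNat _)).1 h

lemma PF_odd_le {d : ℕ} (hd : 0 < d) (n : ℕ) {x : Fin d → ℤ} (h : ¬ Even (∑ j, x j)) :
    PF d n x ≤ PF d n (Pi.single (⟨0, hd⟩ : Fin d) 1) :=
  (PF_reduceN hd n (∑ j, |x j|).toNat x (Int.self_le_toNat _)).2 h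

lemma PF_succ_zero {d : ℕ} (hd : 0 < d) (htsum : (∑' y, nuF d y) = 1) (n : ℕ) :
    PF d (n+1) 0 = PF d n (Pi.single (⟨0, hd⟩ : Fin d) 1) := by
  show (∑' y, nuF d y * PF d n (0 - y)) = _
  have : ∀ y : Fin d → ℤ, nuF d y * PF d n (0 - y)
      = nuF d y * PF d n (Pi.single (⟨0, hd⟩ : Fin d) 1) := by
    intro y
    by_cases hy : nuF d y = 0
    · rw [hy, zero_mul, zero_mul]
    · have hu := nuF_ne_zero hy
      have hu' : (∑ j, |(0 - y : Fin d → ℤ) j|) = 1 := by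
        rw [← hu]
        exact Finset.sum_congr rfl fun j _ => by simp
      rw [PF_unit hd n hu']
  rw [tsum_congr this, ENNReal.tsum_mul_right, htsum, one_mul]

lemma PF_oddstep_le {d : ℕ} (hd : 0 < d) (htsum : (∑' y, nuF d y) = 1) (n : ℕ)
    {x : Fin d → ℤ} (h : ¬ Even (∑ j, x j)) :
    PF d (n+1) x ≤ PF d n 0 := by
  show (∑' y, nuF d y * PF d n (x - y)) ≤ _
  calc (∑' y, nuF d y * PF d n (x - y)) ≤ ∑' y, nuF d y * PF d n 0 := by
        refine ENNReal.tsum_le_tsum fun y => ?_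
        by_cases hy : nuF d y = 0
        · rw [hy, zero_mul, zero_mul]
        · refine mul_le_mul_right ?_ _
          refine PF_even_le hd n ?_
          have hodd := unit_sum_odd (nuF_ne_zero hy)
          have hsub : (∑ j, (x - y) j) = (∑ j, x j) - ∑ j, y j := by
            simp [Finset.sum_sub_distrib]
          rw [hsub]
          rw [Int.even_iff] at h ⊢
          omega
    _ = PF d n 0 := by rw [ENNReal.tsum_mul_right, htsum, one_mul]

lemma PF_main {d : ℕ} (hd : 0 < d) (htsum : (∑' y, nuF d y) = 1) (n : ℕ) (x : Fin d → ℤ) :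
    PF d n x + PF d (n+1) x ≤ PF d n 0 + PF d (n+1) 0 := by
  by_cases hE : Even (∑ j, x j) <;> by_cases hpx : Even ((∑ j, x j) + (n : ℤ))
  · -- even x, parity matches n
    have h1 : PF d (n+1) x = 0 := by
      refine PF_parity (n+1) x ?_
      rw [Int.even_iff] at hpx ⊢
      push_cast at hpx ⊢
      omega
    rw [h1, add_zero]
    exact le_trans (PF_even_le hd n hE) le_self_add
  · have h1 : PF d n x = 0 := by
      refine PF_parity n x hpx
    rw [h1, zero_add]
    exact le_trans (PF_even_le hd (n+1) hE) le_add_self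
  · -- odd x, σ + n even → n odd; PF (n+1) x = 0, PF n x ≤ PF n e = PF (n+1) 0
    have h1 : PF d (n+1) x = 0 := by
      refine PF_parity (n+1) x ?_
      rw [Int.even_iff] at hpx ⊢
      push_cast at hpx ⊢
      omega
    rw [h1, add_zero]
    calc PF d n x ≤ PF d n (Pi.single (⟨0, hd⟩ : Fin d) 1) := PF_odd_le hd n hE
      _ = PF d (n+1) 0 := (PF_succ_zero hd htsum n).symm
      _ ≤ PF d n 0 + PF d (n+1) 0 := le_add_self
  · have h1 : PF d n x = 0 := PF_parity n x hpx
    rw [h1, zero_add]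
    exact le_trans (PF_oddstep_le hd htsum n hE) le_self_add





variable {d : ℕ} {Ω : Type*} [MeasurableSpace Ω] (μ : Measure Ω) [IsProbabilityMeasure μ]
  (ξ : ℕ → Ω → (Fin d → ℤ))

lemma tsum_nuF (hlaw : ∀ i (x : Fin d → ℤ),
      μ {ω | ξ i ω = x} = if (∑ j, |x j|) = 1 then ((2 * d : ℝ≥0∞))⁻¹ else 0)
    (hmeas : ∀ i, Measurable (ξ i)) :
    (∑' y, nuF d y) = 1 := by
  have huniv : (Set.univ : Set Ω) = ⋃ y : Fin d → ℤ, {ω | ξ 0 ω = y} := by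
    ext ω
    simp only [Set.mem_univ, Set.mem_iUnion, Set.mem_setOf_eq, true_iff]
    exact ⟨ξ 0 ω, rfl⟩
  have hdisj : Pairwise (Function.onFun Disjoint fun y : Fin d → ℤ => {ω | ξ 0 ω = y}) := by
    intro y y' hyy'
    refine Set.disjoint_left.mpr fun ω h1 h2 => hyy' ?_
    rw [← h1, ← h2]
  have hm : ∀ y : Fin d → ℤ, MeasurableSet {ω | ξ 0 ω = y} := fun y =>
    (hmeas 0) (measurableSet_singleton y)
  have h1 : (1 : ℝ≥0∞) = μ (Set.univ) := (measure_univ).symm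
  rw [h1, huniv, measure_iUnion hdisj hm]
  refine tsum_congr fun y => ?_
  rw [hlaw 0 y]
  rfl

lemma link (hlaw : ∀ i (x : Fin d → ℤ),
      μ {ω | ξ i ω = x} = if (∑ j, |x j|) = 1 then ((2 * d : ℝ≥0∞))⁻¹ else 0)
    (hmeas : ∀ i, Measurable (ξ i))
    (hindep : iIndepFun ξ μ) :
    ∀ (m : ℕ) (x : Fin d → ℤ), μ {ω | ∑ i ∈ Finset.range m, ξ i ω = x} = PF d m x := by
  intro m
  induction m with
  | zero =>
    intro x
    show μ {ω | ∑ i ∈ (∅ : Finset ℕ), ξ i ω = x} = _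
    by_cases hx : x = 0
    · subst hx
      have : {ω : Ω | ∑ i ∈ (∅ : Finset ℕ), ξ i ω = 0} = Set.univ := by
        ext ω; simp
      rw [this, measure_univ]
      show _ = if (0 : Fin d → ℤ) = 0 then (1:ℝ≥0∞) else 0
      rw [if_pos rfl]
    · have : {ω : Ω | ∑ i ∈ (∅ : Finset ℕ), ξ i ω = x} = ∅ := by
        ext ω; simpa using fun h => hx (by rw [← h])
      rw [this, measure_empty]
      show (0:ℝ≥0∞) = if x = 0 then (1:ℝ≥0∞) else 0
      rw [if_neg hx]
  | succ m ih =>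
    intro x
    have hset : {ω | ∑ i ∈ Finset.range (m+1), ξ i ω = x}
        = ⋃ y : Fin d → ℤ,
            ((fun ω => ∑ i ∈ Finset.range m, ξ i ω) ⁻¹' {x - y} ∩ ξ m ⁻¹' {y}) := by
      ext ω
      simp only [Set.mem_setOf_eq, Set.mem_iUnion, Set.mem_inter_iff, Set.mem_preimage,
        Set.mem_singleton_iff]
      constructor
      · intro h
        refine ⟨ξ m ω, ?_, rfl⟩
        rw [Finset.sum_range_succ] at h
        exact eq_sub_of_add_eq h
      · rintro ⟨y, h1, h2⟩
        rw [Finset.sum_range_succ, h1, h2]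
        abel
    have hSmeas : Measurable (fun ω => ∑ i ∈ Finset.range m, ξ i ω) :=
      Finset.measurable_sum _ fun i _ => hmeas i
    have hdisj : Pairwise (Function.onFun Disjoint fun y : Fin d → ℤ =>
        ((fun ω => ∑ i ∈ Finset.range m, ξ i ω) ⁻¹' {x - y} ∩ ξ m ⁻¹' {y})) := by
      intro y y' hyy'
      refine Set.disjoint_left.mpr fun ω h1 h2 => hyy' ?_
      have := h1.2; have := h2.2
      simp only [Set.mem_preimage, Set.mem_singleton_iff] at *
      rw [← h1.2, ← h2.2]
    have hm : ∀ y : Fin d → ℤ, MeasurableSet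
        ((fun ω => ∑ i ∈ Finset.range m, ξ i ω) ⁻¹' {x - y} ∩ ξ m ⁻¹' {y}) := fun y =>
      (hSmeas (measurableSet_singleton _)).inter ((hmeas m) (measurableSet_singleton _))
    rw [hset, measure_iUnion hdisj hm]
    show _ = ∑' y, nuF d y * PF d m (x - y)
    refine tsum_congr fun y => ?_
    have hin : IndepFun (∑ i ∈ Finset.range m, ξ i) (ξ m) μ :=
      hindep.indepFun_sum_range_succ hmeas m
    have := hin.measure_inter_preimage_eq_mul {x - y} {y}
      (measurableSet_singleton _) (measurableSet_singleton _)
    have hpre : (∑ i ∈ Finset.range m, ξ i) ⁻¹' {x - y}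
        = (fun ω => ∑ i ∈ Finset.range m, ξ i ω) ⁻¹' {x - y} := by
      ext ω; simp [Finset.sum_apply]
    rw [hpre] at this
    rw [this]
    have e1 : μ ((fun ω => ∑ i ∈ Finset.range m, ξ i ω) ⁻¹' {x - y}) = PF d m (x - y) := by
      rw [← ih (x - y)]; rfl
    have e2 : μ (ξ m ⁻¹' {y}) = nuF d y := by
      rw [show (ξ m ⁻¹' {y} : Set Ω) = {ω | ξ m ω = y} from rfl, hlaw m y]; rfl
    rw [e1, e2, mul_comm]


end SRW

/-- For the simple symmetric random walk on `ℤ^d` (i.i.d. increments `ξ` uniform on the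
`2d` unit vectors), with `p_m(x) = P(ξ 0 + ⋯ + ξ (m-1) = x)`, one has
`p_n(x) + p_{n+1}(x) ≤ p_n(0) + p_{n+1}(0)` for all `n ≥ 0` and `x ∈ ℤ^d`. -/
theorem srw_pn_sum_le_at_zero
    (d : ℕ) (hd : 1 ≤ d)
    {Ω : Type*} [MeasurableSpace Ω] (μ : Measure Ω) [IsProbabilityMeasure μ]
    (ξ : ℕ → Ω → (Fin d → ℤ))
    (hmeas : ∀ i, Measurable (ξ i))
    (hindep : iIndepFun ξ μ)
    (hlaw : ∀ i (x : Fin d → ℤ),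
      μ {ω | ξ i ω = x} = if (∑ j, |x j|) = 1 then ((2 * d : ℝ≥0∞))⁻¹ else 0)
    (n : ℕ) (x : Fin d → ℤ) :
    μ {ω | ∑ i ∈ Finset.range n, ξ i ω = x} +
        μ {ω | ∑ i ∈ Finset.range (n + 1), ξ i ω = x} ≤
      μ {ω | ∑ i ∈ Finset.range n, ξ i ω = 0} +
        μ {ω | ∑ i ∈ Finset.range (n + 1), ξ i ω = 0} := by
  have hd0 : 0 < d := hd
  have htsum := SRW.tsum_nuF μ ξ hlaw hmeas
  have hlink := SRW.link μ ξ hlaw hmeas hindep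
  rw [hlink n x, hlink (n+1) x, hlink n 0, hlink (n+1) 0]
  exact SRW.PF_main hd0 htsum n x
end

section
/- Let $Z$ be the simple symmetric random walk on $\mathbb{Z}^d$, $d\geq 1$, with $n$-step distribution $p_n(x):=\mathbb{P}^Z_0(Z_n=x)$, and let $e_1=(1,0,\dots,0)$. Then for every odd $n\in\mathbb{N}$ and every $x=(x_1,\dots,x_d)\in\mathbb{Z}^d$ with $|x|_1:=\sum_{i=1}^d|x_i|$ odd, one has $p_n(x)\leq p_n(e_1)$. -/
open MeasureTheory ProbabilityTheory Finset
open scoped ENNReal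

namespace SRW


/-- a step: a coordinate and a sign -/
abbrev Stp (d : ℕ) := Fin d × Bool

/-- the vector of a step -/
def sv {d : ℕ} (a : Stp d) : Fin d → ℤ :=
  fun j => if j = a.1 then (if a.2 then 1 else -1) else 0

lemma sv_self {d : ℕ} (a : Stp d) : sv a a.1 = if a.2 then 1 else -1 := by
  simp [sv]

lemma sv_ne {d : ℕ} (a : Stp d) {j : Fin d} (h : j ≠ a.1) : sv a j = 0 := by
  simp [sv, h]

lemma sv_inj {d : ℕ} : Function.Injective (sv (d := d)) := by
  intro a b h
  have h1 := congrFun h a.1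
  have h2 := congrFun h b.1
  rcases a with ⟨i, σ⟩; rcases b with ⟨i', σ'⟩
  by_cases hii : i = i'
  · subst hii
    cases σ <;> cases σ' <;>
      first | rfl | (exfalso; have := congrFun h i; simp [sv] at this)
  · exfalso
    have h1 := congrFun h i
    rw [sv_self, sv_ne ⟨i', σ'⟩ (by simpa using hii)] at h1
    cases σ <;> simp at h1

lemma abs_sum_sv {d : ℕ} (a : Stp d) : ∑ j, |sv a j| = 1 := by
  rw [Finset.sum_eq_single a.1]
  · rcases a with ⟨i, b⟩; cases b <;> simp [sv]
  · intro j _ hj; rw [sv_ne a hj]; simp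
  · simp

/-- the set of walks of length n ending at x -/
def wkSet (d n : ℕ) (x : Fin d → ℤ) : Finset (Fin n → Stp d) :=
  Finset.univ.filter (fun s => ∑ k, sv (s k) = x)

def N (d n : ℕ) (x : Fin d → ℤ) : ℕ := (wkSet d n x).card

/-- count of sign-sequences supported on T with given ±1 sum -/
def bcnt {κ : Type*} [Fintype κ] [DecidableEq κ] (T : Finset κ) (m : ℤ) : ℕ :=
  (Finset.univ.filter (fun σ : κ → Bool =>
    (∀ k ∉ T, σ k = false) ∧ (∑ k ∈ T, (if σ k then (1:ℤ) else -1)) = m)).card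

lemma sum_signs {κ : Type*} [Fintype κ] [DecidableEq κ] (T : Finset κ) (σ : κ → Bool) :
    (∑ k ∈ T, (if σ k then (1:ℤ) else -1)) = 2 * (T.filter (fun k => σ k = true)).card - T.card := by
  rw [← Finset.sum_filter_add_sum_filter_not T (fun k => σ k = true)]
  have h1 : ∀ k ∈ T.filter (fun k => σ k = true), (if σ k then (1:ℤ) else -1) = 1 := by
    intro k hk; simp only [mem_filter] at hk; simp [hk.2]
  have h2 : ∀ k ∈ T.filter (fun k => ¬ σ k = true), (if σ k then (1:ℤ) else -1) = -1 := by
    intro k hk; simp only [mem_filter] at hk; simp [hk.2]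
  rw [Finset.sum_congr rfl h1, Finset.sum_congr rfl h2]
  have := Finset.card_filter_add_card_filter_not (s := T) (p := fun k => σ k = true)
  simp only [Finset.sum_const, nsmul_eq_mul, mul_one, mul_neg_one]
  omega

lemma bcnt_eq_choose {κ : Type*} [Fintype κ] [DecidableEq κ] (T : Finset κ) (a : ℕ)
    (ha : a ≤ T.card) : bcnt T (2 * a - T.card) = T.card.choose a := by
  rw [bcnt, ← Finset.card_powersetCard a T]
  apply Finset.card_bij (fun σ _ => T.filter (fun k => σ k = true))
  · intro σ hσ
    simp only [mem_filter, mem_univ, true_and] at hσ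
    rw [Finset.mem_powersetCard]
    refine ⟨Finset.filter_subset _ _, ?_⟩
    have := sum_signs T σ
    rw [hσ.2] at this
    omega
  · intro σ hσ σ' hσ' h
    simp only [mem_filter, mem_univ, true_and] at hσ hσ'
    funext k
    by_cases hk : k ∈ T
    · have : k ∈ T.filter (fun k => σ k = true) ↔ k ∈ T.filter (fun k => σ' k = true) := by rw [h]
      simp only [mem_filter, hk, true_and] at this
      cases hσk : σ k <;> cases hσ'k : σ' k <;> simp_all
    · rw [hσ.1 k hk, hσ'.1 k hk]
  · intro A hA
    rw [Finset.mem_powersetCard] at hA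
    refine ⟨fun k => decide (k ∈ A), ?_, ?_⟩
    · simp only [mem_filter, mem_univ, true_and]
      constructor
      · intro k hk
        simp only [decide_eq_false_iff_not]
        exact fun h => hk (hA.1 h)
      · rw [sum_signs]
        have : T.filter (fun k => decide (k ∈ A) = true) = A := by
          ext k; simp only [mem_filter, decide_eq_true_eq]
          exact ⟨fun h => h.2, fun h => ⟨hA.1 h, h⟩⟩
        rw [this, hA.2]
    · ext k; simp only [mem_filter, decide_eq_true_eq]
      exact ⟨fun h => h.2, fun h => ⟨hA.1 h, h⟩⟩

lemma bcnt_eq_zero {κ : Type*} [Fintype κ] [DecidableEq κ] (T : Finset κ) (m : ℤ)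
    (h : ¬ ∃ a : ℕ, a ≤ T.card ∧ m = 2 * a - T.card) : bcnt T m = 0 := by
  rw [bcnt, Finset.card_eq_zero, Finset.filter_eq_empty_iff]
  rintro σ - ⟨-, hs⟩
  rw [sum_signs] at hs
  exact h ⟨(T.filter (fun k => σ k = true)).card, Finset.card_filter_le _ _, hs.symm⟩

lemma choose_mono_up {c b b' : ℕ} (h1 : b ≤ b') (h2 : 2 * b' ≤ c) :
    c.choose b ≤ c.choose b' := by
  induction b', h1 using Nat.le_induction with
  | base => exact le_rfl
  | succ b'' hb ih =>
    refine (ih (by omega)).trans (Nat.choose_le_succ_of_lt_half_left ?_)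
    omega

/-- key 1-D monotonicity -/
lemma bcnt_mono {κ : Type*} [Fintype κ] [DecidableEq κ] (T : Finset κ) {m m' : ℤ}
    (habs : m'.natAbs ≤ m.natAbs) (hpar : Even (m - m')) : bcnt T m ≤ bcnt T m' := by
  -- reduce to formulas
  by_cases hex : ∃ a : ℕ, a ≤ T.card ∧ m = 2 * a - T.card
  · obtain ⟨a, ha, rfl⟩ := hex
    have hex' : ∃ a' : ℕ, a' ≤ T.card ∧ m' = 2 * a' - T.card := by
      rcases hpar with ⟨t, ht⟩
      refine ⟨(2 * a - 2 * t).toNat / 2 , by omega, by omega⟩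
    obtain ⟨a', ha', rfl⟩ := hex'
    rw [bcnt_eq_choose T a ha, bcnt_eq_choose T a' ha']
    set c := T.card
    have hb : c.choose a = c.choose (min a (c - a)) := by
      rcases le_total a (c - a) with h | h
      · rw [min_eq_left h]
      · rw [min_eq_right h, ← Nat.choose_symm ha]
    have hb' : c.choose a' = c.choose (min a' (c - a')) := by
      rcases le_total a' (c - a') with h | h
      · rw [min_eq_left h]
      · rw [min_eq_right h, ← Nat.choose_symm ha']
    rw [hb, hb']
    apply choose_mono_up ?_ ?_ <;> omega
  · rw [bcnt_eq_zero T m hex]; exact Nat.zero_le _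


section Fiber

variable {d n : ℕ}

def psi (S : Finset (Fin d)) (s : Fin n → Stp d) (k : Fin n) : Option (Stp d) :=
  if (s k).1 ∈ S then none else some (s k)

def Tset (r : Fin n → Option (Stp d)) : Finset (Fin n) :=
  univ.filter (fun k => r k = none)

def side (S : Finset (Fin d)) (r : Fin n → Option (Stp d)) (x : Fin d → ℤ) : Prop :=
  (∀ k a, r k = some a → a.1 ∉ S) ∧ (∀ j ∉ S, (∑ k, Option.elim (r k) 0 sv j) = x j)

lemma psi_coord_mem {S : Finset (Fin d)} {s : Fin n → Stp d} {r : Fin n → Option (Stp d)}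
    (h : psi S s = r) {k : Fin n} (hk : k ∈ Tset r) : (s k).1 ∈ S := by
  have := congrFun h k
  simp only [Tset, mem_filter, mem_univ, true_and] at hk
  rw [hk] at this
  by_contra hc
  rw [psi, if_neg hc] at this
  exact Option.some_ne_none _ this

lemma psi_eq_of_not_mem {S : Finset (Fin d)} {s : Fin n → Stp d} {r : Fin n → Option (Stp d)}
    (h : psi S s = r) {k : Fin n} (hk : k ∉ Tset r) : r k = some (s k) ∧ (s k).1 ∉ S := by
  have := congrFun h k
  simp only [Tset, mem_filter, mem_univ, true_and] at hk
  by_cases hc : (s k).1 ∈ S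
  · rw [psi, if_pos hc] at this; exact absurd this.symm hk
  · rw [psi, if_neg hc] at this; exact ⟨this.symm, hc⟩

lemma fiber_sum_out {S : Finset (Fin d)} {s : Fin n → Stp d} {r : Fin n → Option (Stp d)}
    (h : psi S s = r) {j : Fin d} (hj : j ∉ S) :
    ∑ k, sv (s k) j = ∑ k, Option.elim (r k) 0 sv j := by
  apply Finset.sum_congr rfl
  intro k _
  by_cases hk : k ∈ Tset r
  · have h1 : (s k).1 ∈ S := psi_coord_mem h hk
    simp only [Tset, mem_filter, mem_univ, true_and] at hk
    rw [hk]
    simp only [Option.elim]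
    exact sv_ne _ (fun hc => hj (hc ▸ h1))
  · rw [(psi_eq_of_not_mem h hk).1]; rfl

lemma fiber_sum_in {S : Finset (Fin d)} {s : Fin n → Stp d} {r : Fin n → Option (Stp d)}
    (h : psi S s = r) {j : Fin d} (hj : j ∈ S) :
    ∑ k, sv (s k) j = ∑ k ∈ Tset r, sv (s k) j := by
  rw [← Finset.sum_subset (Finset.subset_univ (Tset r))]
  intro k _ hk
  exact sv_ne _ (fun hc => (psi_eq_of_not_mem h hk).2 (hc ▸ hj))

lemma fib_eq_zero (S : Finset (Fin d)) (x : Fin d → ℤ) (r : Fin n → Option (Stp d))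
    (hside : ¬ side S r x) :
    ((wkSet d n x).filter (fun s => psi S s = r)).card = 0 := by
  rw [Finset.card_eq_zero, Finset.filter_eq_empty_iff]
  intro s hs hpsi
  apply hside
  constructor
  · intro k a hk
    by_cases hT : k ∈ Tset r
    · simp only [Tset, mem_filter, mem_univ, true_and] at hT
      rw [hT] at hk; exact absurd hk (by simp)
    · obtain ⟨h1, h2⟩ := psi_eq_of_not_mem hpsi hT
      rw [h1] at hk
      rw [← Option.some_inj.mp hk]
      exact h2
  · intro j hj
    rw [← fiber_sum_out hpsi hj]
    simp only [wkSet, mem_filter, mem_univ, true_and] at hs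
    simpa using congrFun hs j

/-- fiber cardinality for `S = {i}` -/
lemma fibA_eq (i : Fin d) (x : Fin d → ℤ) (r : Fin n → Option (Stp d))
    (hside : side {i} r x) :
    ((wkSet d n x).filter (fun s => psi {i} s = r)).card = bcnt (Tset r) (x i) := by
  rw [bcnt]
  apply Finset.card_bij (fun s _ => fun k => if k ∈ Tset r then (s k).2 else false)
  · -- maps to
    rintro s hs
    simp only [mem_filter, mem_univ, true_and] at hs ⊢
    obtain ⟨hsum, hpsi⟩ := hs
    simp only [wkSet, mem_filter, mem_univ, true_and] at hsum
    constructor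
    · intro k hk; rw [if_neg hk]
    · have hgi : ∑ k, sv (s k) i = x i := by
        have h0 := congrFun hsum i
        rwa [Finset.sum_apply] at h0
      have hxi : ∑ k ∈ Tset r, sv (s k) i = x i :=
        (fiber_sum_in hpsi (Finset.mem_singleton_self i)).symm.trans hgi
      rw [← hxi]
      apply Finset.sum_congr rfl
      intro k hk
      have hb : (if k ∈ Tset r then (s k).2 else false) = (s k).2 := if_pos hk
      simp only [hb]
      have h1 : (s k).1 = i := by simpa using psi_coord_mem hpsi hk
      rw [← h1, sv_self]
  · -- inj
    intro s hs s' hs' h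
    simp only [mem_filter] at hs hs'
    funext k
    by_cases hk : k ∈ Tset r
    · have e1 : (s k).1 = i := by simpa using psi_coord_mem hs.2 hk
      have e2 : (s' k).1 = i := by simpa using psi_coord_mem hs'.2 hk
      have e3 := congrFun h k
      rw [if_pos hk, if_pos hk] at e3
      exact Prod.ext (e1.trans e2.symm) e3
    · have e1 := (psi_eq_of_not_mem hs.2 hk).1
      have e2 := (psi_eq_of_not_mem hs'.2 hk).1
      rw [e1] at e2
      exact Option.some_inj.mp e2
  · -- surj
    intro σ hσ
    simp only [mem_filter, mem_univ, true_and] at hσ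
    obtain ⟨hnorm, hsum⟩ := hσ
    refine ⟨fun k => (r k).elim (i, σ k) id, ?_, ?_⟩
    · have hpsi : psi {i} (fun k => (r k).elim (i, σ k) id) = r := by
        funext k
        rcases hrk : r k with _ | a
        · simp [psi, hrk]
        · have ha := hside.1 k a hrk
          simp only [psi, hrk, Option.elim, id]
          rw [if_neg ha]
      simp only [mem_filter, mem_univ, true_and]
      refine ⟨?_, hpsi⟩
      simp only [wkSet, mem_filter, mem_univ, true_and]
      funext j
      rw [Finset.sum_apply]
      by_cases hj : j = i
      · subst hj
        rw [fiber_sum_in hpsi (Finset.mem_singleton_self j), ← hsum]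
        apply Finset.sum_congr rfl
        intro k hk
        simp only [Tset, mem_filter, mem_univ, true_and] at hk
        simp [hk, sv]
      · have hj' : j ∉ ({i} : Finset (Fin d)) := by simpa using hj
        rw [fiber_sum_out hpsi hj', hside.2 j hj']
    · funext k
      by_cases hk : k ∈ Tset r
      · have hrk : r k = none := by
          simpa [Tset] using hk
        rw [if_pos hk]
        simp [hrk, Option.elim]
      · rw [if_neg hk, hnorm k hk]

/-- step A : changing one coordinate to something of smaller abs, same parity -/
lemma stepA (i : Fin d) (x x' : Fin d → ℤ) (hoff : ∀ j, j ≠ i → x j = x' j)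
    (habs : (x' i).natAbs ≤ (x i).natAbs) (hpar : Even (x i - x' i)) :
    N d n x ≤ N d n x' := by
  rw [N, N, Finset.card_eq_sum_card_fiberwise
      (f := fun s => psi {i} s) (t := (univ : Finset (Fin n → Option (Stp d))))
      (fun s _ => mem_univ _),
    Finset.card_eq_sum_card_fiberwise
      (f := fun s => psi {i} s) (t := (univ : Finset (Fin n → Option (Stp d))))
      (fun s _ => mem_univ _)]
  apply Finset.sum_le_sum
  intro r _
  by_cases hside : side {i} r x
  · have hside' : side {i} r x' := by
      refine ⟨hside.1, fun j hj => (hside.2 j hj).trans (hoff j (by simpa using hj))⟩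
    rw [fibA_eq i x r hside, fibA_eq i x' r hside']
    exact bcnt_mono _ habs hpar
  · rw [fib_eq_zero _ x r hside]
    exact Nat.zero_le _

lemma pair_uv {i j : Fin d} (hij : i ≠ j) (a : Stp d) (ha : a.1 = i ∨ a.1 = j) :
    ((if a.2 then (1:ℤ) else -1) = sv a i + sv a j) ∧
    ((if (a.2 == decide (a.1 = i)) then (1:ℤ) else -1) = sv a i - sv a j) := by
  rcases a with ⟨c, b⟩
  simp only at ha
  rcases ha with rfl | rfl
  · cases b <;> simp [sv, hij, Ne.symm hij]
  · cases b <;> simp [sv, hij, Ne.symm hij]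

lemma mem_pair_iff {i j c : Fin d} : c ∈ ({i, j} : Finset (Fin d)) ↔ c = i ∨ c = j := by
  simp

/-- fiber cardinality for `S = {i,j}` -/
lemma fibB_eq (i j : Fin d) (hij : i ≠ j) (x : Fin d → ℤ) (r : Fin n → Option (Stp d))
    (hside : side {i, j} r x) :
    ((wkSet d n x).filter (fun s => psi {i, j} s = r)).card
      = bcnt (Tset r) (x i + x j) * bcnt (Tset r) (x i - x j) := by
  have hprod : bcnt (Tset r) (x i + x j) * bcnt (Tset r) (x i - x j)
      = ((univ : Finset ((Fin n → Bool) × (Fin n → Bool))).filter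
          (fun p => ((∀ k ∉ Tset r, p.1 k = false) ∧
              (∑ k ∈ Tset r, (if p.1 k then (1:ℤ) else -1)) = x i + x j)
            ∧ ((∀ k ∉ Tset r, p.2 k = false) ∧
              (∑ k ∈ Tset r, (if p.2 k then (1:ℤ) else -1)) = x i - x j))).card := by
    rw [bcnt, bcnt, ← Finset.card_product]
    congr 1
    ext p
    simp only [Finset.mem_product, mem_filter, mem_univ, true_and]
  rw [hprod]
  apply Finset.card_bij (fun s _ =>
    ((fun k => if k ∈ Tset r then (s k).2 else false),
     (fun k => if k ∈ Tset r then ((s k).2 == decide ((s k).1 = i)) else false)))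
  · -- maps to
    rintro s hs
    simp only [mem_filter, mem_univ, true_and] at hs ⊢
    obtain ⟨hsum, hpsi⟩ := hs
    simp only [wkSet, mem_filter, mem_univ, true_and] at hsum
    have hgi : ∑ k ∈ Tset r, sv (s k) i = x i := by
      have h0 := congrFun hsum i
      rw [Finset.sum_apply] at h0
      exact (fiber_sum_in hpsi (by simp : i ∈ ({i,j} : Finset (Fin d)))).symm.trans h0
    have hgj : ∑ k ∈ Tset r, sv (s k) j = x j := by
      have h0 := congrFun hsum j
      rw [Finset.sum_apply] at h0
      exact (fiber_sum_in hpsi (by simp : j ∈ ({i,j} : Finset (Fin d)))).symm.trans h0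
    constructor
    · refine ⟨fun k hk => if_neg hk, ?_⟩
      have hcong : ∑ k ∈ Tset r, (if (if k ∈ Tset r then (s k).2 else false) = true then (1:ℤ) else -1)
           = ∑ k ∈ Tset r, (sv (s k) i + sv (s k) j) := by
        apply Finset.sum_congr rfl
        intro k hk
        have hb : (if k ∈ Tset r then (s k).2 else false) = (s k).2 := if_pos hk
        simp only [hb]
        exact (pair_uv hij (s k) (mem_pair_iff.mp (psi_coord_mem hpsi hk))).1
      rw [hcong, Finset.sum_add_distrib, hgi, hgj]
    · refine ⟨fun k hk => if_neg hk, ?_⟩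
      have hcong : ∑ k ∈ Tset r, (if (if k ∈ Tset r then ((s k).2 == decide ((s k).1 = i)) else false) = true then (1:ℤ) else -1)
           = ∑ k ∈ Tset r, (sv (s k) i - sv (s k) j) := by
        apply Finset.sum_congr rfl
        intro k hk
        have hb : (if k ∈ Tset r then ((s k).2 == decide ((s k).1 = i)) else false)
            = ((s k).2 == decide ((s k).1 = i)) := if_pos hk
        simp only [hb]
        exact (pair_uv hij (s k) (mem_pair_iff.mp (psi_coord_mem hpsi hk))).2
      rw [hcong, Finset.sum_sub_distrib, hgi, hgj]
  · -- inj
    intro s hs s' hs' h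
    simp only [mem_filter] at hs hs'
    have hu := congrArg Prod.fst h
    have hv := congrArg Prod.snd h
    funext k
    by_cases hk : k ∈ Tset r
    · have e1 := mem_pair_iff.mp (psi_coord_mem hs.2 hk)
      have e2 := mem_pair_iff.mp (psi_coord_mem hs'.2 hk)
      have eu := congrFun hu k
      have ev := congrFun hv k
      simp only [if_pos hk] at eu ev
      have hb2 : (s k).2 = (s' k).2 := eu
      have hdec : decide ((s k).1 = i) = decide ((s' k).1 = i) := by
        rw [hb2] at ev
        cases hbb : (s' k).2 <;> rw [hbb] at ev <;>
          cases hd1 : decide ((s k).1 = i) <;> cases hd2 : decide ((s' k).1 = i) <;>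
            simp_all
      have hc : (s k).1 = (s' k).1 := by
        cases hd1 : decide ((s k).1 = i) <;> rw [hd1] at hdec
        · have n1 : ¬ (s k).1 = i := of_decide_eq_false hd1
          have n2 : ¬ (s' k).1 = i := of_decide_eq_false hdec.symm
          rw [e1.resolve_left n1, e2.resolve_left n2]
        · have n1 : (s k).1 = i := of_decide_eq_true hd1
          have n2 : (s' k).1 = i := of_decide_eq_true hdec.symm
          rw [n1, n2]
      exact Prod.ext hc hb2
    · have e1 := (psi_eq_of_not_mem hs.2 hk).1
      have e2 := (psi_eq_of_not_mem hs'.2 hk).1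
      rw [e1] at e2
      exact Option.some_inj.mp e2
  · -- surj
    rintro ⟨σu, σv⟩ hσ
    simp only [mem_filter, mem_univ, true_and] at hσ
    obtain ⟨⟨hnu, hsu⟩, hnv, hsv⟩ := hσ
    set s : Fin n → Stp d := fun k => (r k).elim (if σu k == σv k then i else j, σu k) id with hs_def
    have hpsi : psi {i, j} s = r := by
      funext k
      rcases hrk : r k with _ | a
      · have h1 : s k = (if σu k == σv k then i else j, σu k) := by simp [hs_def, hrk]
        have h2 : (s k).1 ∈ ({i,j} : Finset (Fin d)) := by rw [h1]; split <;> simp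
        simp only [psi, if_pos h2, hrk]
      · have hsk : s k = a := by simp [hs_def, hrk]
        have ha := hside.1 k a hrk
        simp [psi, hsk, hrk, ha]
    have hTk : ∀ k ∈ Tset r, s k = (if σu k == σv k then i else j, σu k) := by
      intro k hk
      simp only [Tset, mem_filter, mem_univ, true_and] at hk
      simp [hs_def, hk]
    have key : ∀ k ∈ Tset r,
        (2:ℤ) * sv (s k) i = (if σu k then (1:ℤ) else -1) + (if σv k then (1:ℤ) else -1)
        ∧ (2:ℤ) * sv (s k) j = (if σu k then (1:ℤ) else -1) - (if σv k then (1:ℤ) else -1) := by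
      intro k hk
      rw [hTk k hk]
      cases hu : σu k <;> cases hv : σv k <;>
        constructor <;> simp [sv, hij, Ne.symm hij] <;> omega
    refine ⟨s, ?_, ?_⟩
    · simp only [mem_filter, mem_univ, true_and]
      refine ⟨?_, hpsi⟩
      simp only [wkSet, mem_filter, mem_univ, true_and]
      funext l
      rw [Finset.sum_apply]
      by_cases hl : l ∈ ({i, j} : Finset (Fin d))
      · have e2i : (2:ℤ) * ∑ k ∈ Tset r, sv (s k) i = (x i + x j) + (x i - x j) := by
          rw [Finset.mul_sum, Finset.sum_congr rfl (fun k hk => (key k hk).1),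
            Finset.sum_add_distrib, hsu, hsv]
        have e2j : (2:ℤ) * ∑ k ∈ Tset r, sv (s k) j = (x i + x j) - (x i - x j) := by
          rw [Finset.mul_sum, Finset.sum_congr rfl (fun k hk => (key k hk).2),
            Finset.sum_sub_distrib, hsu, hsv]
        rcases mem_pair_iff.mp hl with rfl | rfl
        · rw [fiber_sum_in hpsi hl]; linarith
        · rw [fiber_sum_in hpsi hl]; linarith
      · rw [fiber_sum_out hpsi hl, hside.2 l hl]
    · have : ∀ k, (if k ∈ Tset r then (s k).2 else false) = σu k ∧
          (if k ∈ Tset r then ((s k).2 == decide ((s k).1 = i)) else false) = σv k := by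
        intro k
        by_cases hk : k ∈ Tset r
        · rw [if_pos hk, if_pos hk, hTk k hk]
          constructor
          · rfl
          · cases hu : σu k <;> cases hv : σv k <;> simp [hij, Ne.symm hij]
        · rw [if_neg hk, if_neg hk, hnu k hk, hnv k hk]
          exact ⟨rfl, rfl⟩
      exact Prod.ext (funext fun k => (this k).1) (funext fun k => (this k).2)

/-- step B : turning two coordinates equal to 1 into 0 -/
lemma stepB (i j : Fin d) (hij : i ≠ j) (x x' : Fin d → ℤ)
    (hoff : ∀ l, l ≠ i → l ≠ j → x l = x' l) (hxi : x i = 1) (hxj : x j = 1)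
    (hxi' : x' i = 0) (hxj' : x' j = 0) : N d n x ≤ N d n x' := by
  rw [N, N, Finset.card_eq_sum_card_fiberwise
      (f := fun s => psi {i, j} s) (t := (univ : Finset (Fin n → Option (Stp d))))
      (fun s _ => mem_univ _),
    Finset.card_eq_sum_card_fiberwise
      (f := fun s => psi {i, j} s) (t := (univ : Finset (Fin n → Option (Stp d))))
      (fun s _ => mem_univ _)]
  apply Finset.sum_le_sum
  intro r _
  by_cases hside : side {i, j} r x
  · have hside' : side {i, j} r x' := by
      refine ⟨hside.1, fun l hl => (hside.2 l hl).trans ?_⟩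
      simp only [Finset.mem_insert, Finset.mem_singleton, not_or] at hl
      exact hoff l hl.1 hl.2
    rw [fibB_eq i j hij x r hside, fibB_eq i j hij x' r hside']
    rw [hxi, hxj, hxi', hxj']
    norm_num
    exact Nat.mul_le_mul_right _ (bcnt_mono _ (by norm_num) (by norm_num))
  · rw [fib_eq_zero _ x r hside]
    exact Nat.zero_le _


end Fiber
section Chain

variable {d n : ℕ}

lemma sv_permStep (π : Equiv.Perm (Fin d)) (a : Stp d) (j : Fin d) :
    sv (π a.1, a.2) j = sv a (π.symm j) := by
  simp only [sv]
  by_cases h : j = π a.1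
  · have h2 : π.symm j = a.1 := by rw [h, π.symm_apply_apply]
    rw [if_pos h, if_pos h2]
  · have h2 : ¬ π.symm j = a.1 := fun hc => h (by rw [← hc, π.apply_symm_apply])
    rw [if_neg h, if_neg h2]

lemma N_perm (π : Equiv.Perm (Fin d)) (x : Fin d → ℤ) :
    N d n (fun j => x (π j)) = N d n x := by
  rw [N, N, wkSet, wkSet]
  refine Finset.card_bij' (fun s _ => fun k => (π (s k).1, (s k).2))
    (fun s _ => fun k => (π.symm (s k).1, (s k).2)) ?hi ?hj ?li ?ri
  case hi =>
    intro s hs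
    simp only [mem_filter, mem_univ, true_and] at hs ⊢
    funext j
    rw [Finset.sum_apply]
    have : ∀ k, sv (π (s k).1, (s k).2) j = sv (s k) (π.symm j) := fun k => by
      have := sv_permStep π (s k) j
      simpa using this
    rw [Finset.sum_congr rfl (fun k _ => this k)]
    have h0 := congrFun hs (π.symm j)
    rw [Finset.sum_apply] at h0
    rw [h0, π.apply_symm_apply]
  case hj =>
    intro s hs
    simp only [mem_filter, mem_univ, true_and] at hs ⊢
    funext j
    rw [Finset.sum_apply]
    have : ∀ k, sv (π.symm (s k).1, (s k).2) j = sv (s k) (π j) := fun k => by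
      have := sv_permStep π.symm (s k) j
      simpa using this
    rw [Finset.sum_congr rfl (fun k _ => this k)]
    have h0 := congrFun hs (π j)
    rw [Finset.sum_apply] at h0
    rw [h0]
  case li =>
    intro s _
    funext k
    simp
  case ri =>
    intro s _
    funext k
    simp

lemma N_basis (hd : 1 ≤ d) (i : Fin d) :
    N d n (fun j => if j = i then 1 else 0)
      = N d n (fun j : Fin d => if (j:ℕ) = 0 then (1:ℤ) else 0) := by
  set z : Fin d := ⟨0, hd⟩ with hz
  have he : (fun j : Fin d => if (j:ℕ) = 0 then (1:ℤ) else 0)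
      = fun j => if j = z then 1 else 0 := by
    funext j
    congr 1
    simp [Fin.ext_iff, hz]
  rw [he]
  have he2 : (fun j : Fin d => if j = i then (1:ℤ) else 0)
      = fun j => (fun l => if l = z then (1:ℤ) else 0) ((Equiv.swap z i) j) := by
    funext j
    by_cases hj : j = i
    · subst hj
      simp [Equiv.swap_apply_right]
    · have : Equiv.swap z i j ≠ z := by
        intro hc
        have := congrArg (Equiv.swap z i) hc
        rw [Equiv.swap_apply_self, Equiv.swap_apply_left] at this
        exact hj this
      simp [hj, this]
  rw [he2]
  exact N_perm (Equiv.swap z i) (fun l => if l = z then (1:ℤ) else 0)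

lemma N_le_parity (x : Fin d → ℤ) :
    N d n x ≤ N d n (fun i => if Odd (x i) then 1 else 0) := by
  have main : ∀ t : ℕ, t ≤ d →
      N d n x ≤ N d n (fun j => if (j:ℕ) < t then (if Odd (x j) then 1 else 0) else x j) := by
    intro t
    induction t with
    | zero =>
      intro _
      have h0 : (fun j : Fin d => if (j:ℕ) < 0 then (if Odd (x j) then (1:ℤ) else 0) else x j) = x := by
        funext j; simp
      rw [h0]
    | succ t ih =>
      intro ht
      refine (ih (Nat.le_of_succ_le ht)).trans ?_
      apply stepA ⟨t, ht⟩
      · intro j hj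
        have hjt : (j : ℕ) ≠ t := fun hc => hj (Fin.ext hc)
        by_cases h1 : (j:ℕ) < t
        · rw [if_pos h1, if_pos (Nat.lt_succ_of_lt h1)]
        · rw [if_neg h1, if_neg (by omega)]
      · -- habs
        have hXI : (fun j : Fin d => if (j:ℕ) < t then (if Odd (x j) then (1:ℤ) else 0) else x j) ⟨t, ht⟩ = x ⟨t, ht⟩ := by simp
        have hXI' : (fun j : Fin d => if (j:ℕ) < t+1 then (if Odd (x j) then (1:ℤ) else 0) else x j) ⟨t, ht⟩ = (if Odd (x ⟨t, ht⟩) then (1:ℤ) else 0) := by simp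
        simp only [hXI, hXI']
        by_cases h : Odd (x ⟨t, ht⟩)
        · rw [if_pos h]
          have hne : x ⟨t, ht⟩ ≠ 0 := by rintro h0; rw [h0] at h; simp at h
          have : 1 ≤ (x ⟨t, ht⟩).natAbs := Int.natAbs_pos.mpr hne
          simpa using this
        · rw [if_neg h]; simp
      · -- hpar
        have hXI : (fun j : Fin d => if (j:ℕ) < t then (if Odd (x j) then (1:ℤ) else 0) else x j) ⟨t, ht⟩ = x ⟨t, ht⟩ := by simp
        have hXI' : (fun j : Fin d => if (j:ℕ) < t+1 then (if Odd (x j) then (1:ℤ) else 0) else x j) ⟨t, ht⟩ = (if Odd (x ⟨t, ht⟩) then (1:ℤ) else 0) := by simp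
        simp only [hXI, hXI']
        by_cases h : Odd (x ⟨t, ht⟩)
        · rw [if_pos h]
          rcases h with ⟨c, hc⟩
          exact ⟨c, by omega⟩
        · rw [if_neg h]
          rw [Int.not_odd_iff_even] at h
          simpa using h
  have := main d le_rfl
  refine this.trans (le_of_eq ?_)
  congr 1
  funext j
  rw [if_pos j.isLt]

lemma N_ones (hd : 1 ≤ d) : ∀ m : ℕ, ∀ ε : Fin d → ℤ, (∀ i, ε i = 0 ∨ ε i = 1) →
    (univ.filter (fun i => ε i = 1)).card = 2*m+1 →
    N d n ε ≤ N d n (fun j : Fin d => if (j:ℕ) = 0 then (1:ℤ) else 0) := by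
  intro m
  induction m with
  | zero =>
    intro ε hε hcard
    obtain ⟨i, hi⟩ := Finset.card_eq_one.mp hcard
    have hεi : ε = fun j => if j = i then 1 else 0 := by
      funext j
      by_cases hj : j = i
      · subst hj
        have : j ∈ univ.filter (fun l => ε l = 1) := by rw [hi]; exact Finset.mem_singleton_self j
        simp only [mem_filter] at this
        rw [this.2, if_pos rfl]
      · rw [if_neg hj]
        rcases hε j with h | h
        · exact h
        · exfalso
          have : j ∈ univ.filter (fun l => ε l = 1) := by simp [h]
          rw [hi] at this
          exact hj (Finset.mem_singleton.mp this)
    rw [hεi]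
    exact le_of_eq (N_basis hd i)
  | succ m ih =>
    intro ε hε hcard
    have h2 : 1 < (univ.filter (fun i => ε i = 1)).card := by omega
    obtain ⟨i, hi, j, hj, hij⟩ := Finset.one_lt_card.mp h2
    simp only [mem_filter, mem_univ, true_and] at hi hj
    set ε' : Fin d → ℤ := fun l => if l = i then 0 else if l = j then 0 else ε l with hε'
    have hstep : N d n ε ≤ N d n ε' := by
      apply stepB i j hij
      · intro l hli hlj
        simp [hε', hli, hlj]
      · exact hi
      · exact hj
      · simp [hε']
      · simp [hε', Ne.symm hij]
    refine hstep.trans (ih ε' ?_ ?_)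
    · intro l
      by_cases hli : l = i
      · left; simp [hε', hli]
      · by_cases hlj : l = j
        · left; simp [hε', hli, hlj]
        · simpa [hε', hli, hlj] using hε l
    · have hset : univ.filter (fun l => ε' l = 1)
          = ((univ.filter (fun l => ε l = 1)).erase i).erase j := by
        ext l
        simp only [mem_filter, mem_univ, true_and, Finset.mem_erase]
        constructor
        · intro h
          by_cases hli : l = i
          · exfalso; rw [hli] at h; simp [hε'] at h
          · by_cases hlj : l = j
            · exfalso; rw [hlj] at h; simp [hε', Ne.symm hij] at h
            · refine ⟨hlj, hli, ?_⟩
              simpa [hε', hli, hlj] using h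
        · rintro ⟨hlj, hli, h⟩
          simpa [hε', hli, hlj] using h
      rw [hset, Finset.card_erase_of_mem, Finset.card_erase_of_mem]
      · rw [hcard]
        omega
      · simp [mem_filter, hi]
      · simp only [Finset.mem_erase, mem_filter, mem_univ, true_and]
        exact ⟨Ne.symm hij, hj⟩

lemma N_main (hd : 1 ≤ d) (x : Fin d → ℤ) (hx : Odd (∑ i, |x i|)) :
    N d n x ≤ N d n (fun j : Fin d => if (j:ℕ) = 0 then (1:ℤ) else 0) := by
  refine (N_le_parity x).trans ?_
  have hodd : Odd ((univ.filter (fun i => (if Odd (x i) then (1:ℤ) else 0) = 1)).card) := by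
    have h1 : ∑ i, |x i| = ((∑ i, (x i).natAbs : ℕ) : ℤ) := by
      push_cast
      rfl
    rw [h1, Int.odd_coe_nat, Finset.odd_sum_iff_odd_card_odd] at hx
    have h2 : (univ.filter (fun i => (if Odd (x i) then (1:ℤ) else 0) = 1))
        = univ.filter (fun i => Odd ((x i).natAbs)) := by
      ext i
      simp only [mem_filter, mem_univ, true_and, Int.natAbs_odd]
      by_cases h : Odd (x i) <;> simp [h]
    rw [h2]
    exact hx
  obtain ⟨m, hm⟩ := hodd
  exact N_ones hd m _ (fun i => by by_cases h : Odd (x i) <;> simp [h]) (by omega)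

end Chain

section Prob
open MeasureTheory ProbabilityTheory
open scoped ENNReal

variable {d : ℕ}

lemma N_zero (x : Fin d → ℤ) : N d 0 x = if (0 : Fin d → ℤ) = x then 1 else 0 := by
  rw [N, wkSet]
  by_cases hx : (0 : Fin d → ℤ) = x
  · rw [if_pos hx]
    have : (univ.filter (fun s : Fin 0 → Stp d => ∑ k, sv (s k) = x)) = univ := by
      apply Finset.filter_true_of_mem
      intro s _
      rw [← hx]
      simp
    rw [this]
    simp [Finset.card_univ]
  · rw [if_neg hx]
    rw [Finset.card_eq_zero, Finset.filter_eq_empty_iff]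
    intro s _
    rw [show (∑ k, sv (s k)) = 0 by simp]
    exact hx

lemma N_succ (n : ℕ) (x : Fin d → ℤ) :
    N d (n+1) x = ∑ a : Stp d, N d n (x - sv a) := by
  rw [N, Finset.card_eq_sum_card_fiberwise
    (f := fun s : Fin (n+1) → Stp d => s (Fin.last n)) (t := (univ : Finset (Stp d)))
    (fun s _ => mem_univ _)]
  apply Finset.sum_congr rfl
  intro a _
  rw [N, wkSet]
  apply Finset.card_bij' (fun s _ => fun k : Fin n => s k.castSucc)
    (fun t _ => Fin.snoc t a) ?hi ?hj ?li ?ri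
  case hi =>
    intro s hs
    simp only [wkSet, mem_filter, mem_univ, true_and] at hs ⊢
    obtain ⟨hsum, hlast⟩ := hs
    rw [Fin.sum_univ_castSucc, hlast] at hsum
    rw [← hsum]
    abel
  case hj =>
    intro t ht
    simp only [wkSet, mem_filter, mem_univ, true_and] at ht ⊢
    constructor
    · rw [Fin.sum_univ_castSucc]
      simp only [Fin.snoc_castSucc, Fin.snoc_last]
      rw [ht]
      abel
    · simp [Fin.snoc_last]
  case li =>
    intro s hs
    simp only [mem_filter, mem_univ, true_and] at hs
    have := Fin.snoc_init_self s
    rw [show s (Fin.last n) = a from hs.2] at this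
    exact this
  case ri =>
    intro t _
    funext k
    simp [Fin.snoc_castSucc]

theorem prob_eq {Ω : Type*} [MeasurableSpace Ω] (μ : Measure Ω) [IsProbabilityMeasure μ]
    (hd : 1 ≤ d) (ξ : ℕ → Ω → (Fin d → ℤ))
    (hmeas : ∀ i, Measurable (ξ i))
    (hindep : iIndepFun ξ μ)
    (hlaw : ∀ i (x : Fin d → ℤ),
      μ {ω | ξ i ω = x} = if (∑ j, |x j|) = 1 then ((2 * d : ℝ≥0∞))⁻¹ else 0) :
    ∀ n (x : Fin d → ℤ),
      μ {ω | ∑ i ∈ Finset.range n, ξ i ω = x}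
        = ((2 * d : ℝ≥0∞))⁻¹ ^ n * (N d n x : ℝ≥0∞) := by
  have htwo : (2 * d : ℝ≥0∞) ≠ 0 :=
    mul_ne_zero two_ne_zero (Nat.cast_ne_zero.mpr (by omega))
  have htop : (2 * d : ℝ≥0∞) ≠ ⊤ :=
    ENNReal.mul_ne_top (by simp) (by simp)
  intro n
  induction n with
  | zero =>
    intro x
    by_cases hx : (0 : Fin d → ℤ) = x
    · have : {ω : Ω | ∑ i ∈ Finset.range 0, ξ i ω = x} = Set.univ := by
        ext ω; simp [← hx]
      rw [this, measure_univ, N_zero, if_pos hx]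
      simp
    · have : {ω : Ω | ∑ i ∈ Finset.range 0, ξ i ω = x} = ∅ := by
        ext ω
        simp only [Finset.range_zero, Finset.sum_empty, Set.mem_setOf_eq, Set.mem_empty_iff_false,
          iff_false]
        exact fun h => hx h
      rw [this, measure_empty, N_zero, if_neg hx]
      simp
  | succ n ih =>
    intro x
    classical
    -- the finite set of unit step vectors
    set U : Finset (Fin d → ℤ) := Finset.univ.image (sv (d := d)) with hU
    have hUcard : U.card = 2 * d := by
      rw [hU, Finset.card_image_of_injective _ sv_inj, Finset.card_univ]
      simp [Fintype.card_prod]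
      ring
    have hlawU : ∀ v ∈ U, μ {ω | ξ n ω = v} = (2 * (d:ℝ≥0∞))⁻¹ := by
      intro v hv
      obtain ⟨a, -, rfl⟩ := Finset.mem_image.mp hv
      rw [hlaw n (sv a), if_pos (abs_sum_sv a)]
    have hmeasv : ∀ (m : ℕ) (v : Fin d → ℤ), MeasurableSet {ω : Ω | ξ m ω = v} := by
      intro m v
      have : {ω : Ω | ξ m ω = v} = ξ m ⁻¹' {v} := rfl
      rw [this]
      exact (hmeas m) (measurableSet_singleton v)
    -- G = event that the (n+1)-st step is a unit vector
    set G : Set Ω := ⋃ v ∈ U, {ω | ξ n ω = v} with hG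
    have hGmeas : MeasurableSet G :=
      MeasurableSet.biUnion U.countable_toSet (fun v _ => hmeasv n v)
    have hGdisj : (U : Set (Fin d → ℤ)).PairwiseDisjoint (fun v => {ω : Ω | ξ n ω = v}) := by
      intro v _ w _ hvw
      apply Set.disjoint_left.mpr
      intro ω h1 h2
      exact hvw ((h1 : ξ n ω = v).symm.trans h2)
    have hGone : μ G = 1 := by
      rw [hG, measure_biUnion_finset hGdisj (fun v _ => hmeasv n v)]
      rw [Finset.sum_congr rfl hlawU, Finset.sum_const, hUcard]
      rw [nsmul_eq_mul]
      push_cast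
      rw [ENNReal.mul_inv_cancel htwo htop]
    have hGcompl : μ Gᶜ = 0 := by
      rw [measure_compl hGmeas (by rw [hGone]; exact ENNReal.one_ne_top)]
      rw [hGone, measure_univ, tsub_self]
    set A : Set Ω := {ω | ∑ i ∈ Finset.range (n+1), ξ i ω = x} with hA
    have hAG : A ∩ G = ⋃ v ∈ U, ({ω | ∑ i ∈ Finset.range n, ξ i ω = x - v} ∩ {ω | ξ n ω = v}) := by
      ext ω
      simp only [hA, hG, Set.mem_inter_iff, Set.mem_iUnion, Set.mem_setOf_eq, exists_prop]
      constructor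
      · rintro ⟨hsum, v, hv, hξ⟩
        refine ⟨v, hv, ?_, hξ⟩
        rw [Finset.sum_range_succ, hξ] at hsum
        rw [← hsum]
        abel
      · rintro ⟨v, hv, hsum, hξ⟩
        refine ⟨?_, v, hv, hξ⟩
        rw [Finset.sum_range_succ, hξ, hsum]
        abel
    have hSmeas : ∀ (y : Fin d → ℤ), MeasurableSet {ω : Ω | ∑ i ∈ Finset.range n, ξ i ω = y} := by
      intro y
      have hm : Measurable (fun ω => ∑ i ∈ Finset.range n, ξ i ω) :=
        Finset.measurable_sum _ (fun i _ => hmeas i)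
      exact hm (measurableSet_singleton y)
    have hindep2 : IndepFun (∑ i ∈ Finset.range n, ξ i) (ξ n) μ :=
      hindep.indepFun_sum_range_succ hmeas n
    have hterm : ∀ v ∈ U,
        μ ({ω | ∑ i ∈ Finset.range n, ξ i ω = x - v} ∩ {ω | ξ n ω = v})
          = μ {ω | ∑ i ∈ Finset.range n, ξ i ω = x - v} * μ {ω | ξ n ω = v} := by
      intro v _
      have h1 : {ω : Ω | ∑ i ∈ Finset.range n, ξ i ω = x - v}
          = (∑ i ∈ Finset.range n, ξ i) ⁻¹' {x - v} := by
        ext ω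
        simp [Finset.sum_apply]
      have h2 : {ω : Ω | ξ n ω = v} = (ξ n) ⁻¹' {v} := rfl
      rw [h1, h2]
      exact hindep2.measure_inter_preimage_eq_mul _ _
        (measurableSet_singleton _) (measurableSet_singleton _)
    have hμA : μ A = μ (A ∩ G) := by
      have h1 : μ (A ∩ G) + μ (A \ G) = μ A := measure_inter_add_diff A hGmeas
      have h2 : μ (A \ G) = 0 :=
        le_antisymm (le_trans (measure_mono (Set.diff_subset_compl A G)) hGcompl.le) zero_le
      rw [← h1, h2, add_zero]
    rw [hμA, hAG, measure_biUnion_finset ?disj ?meas]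
    case disj =>
      intro v _ w _ hvw
      apply Set.disjoint_left.mpr
      rintro ω ⟨-, h1⟩ ⟨-, h2⟩
      exact hvw ((h1 : ξ n ω = v).symm.trans h2)
    case meas =>
      intro v _
      exact (hSmeas (x - v)).inter (hmeasv n v)
    have hstep : ∀ v ∈ U,
        μ ({ω | ∑ i ∈ Finset.range n, ξ i ω = x - v} ∩ {ω | ξ n ω = v})
          = (2 * (d:ℝ≥0∞))⁻¹ ^ n * (N d n (x - v) : ℝ≥0∞) * (2 * (d:ℝ≥0∞))⁻¹ := by
      intro v hv
      rw [hterm v hv, ih (x - v), hlawU v hv]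
    rw [Finset.sum_congr rfl hstep]
    rw [hU, Finset.sum_image (fun a _ b _ h => sv_inj h)]
    have : ∀ a : Stp d,
        (2 * (d:ℝ≥0∞))⁻¹ ^ n * (N d n (x - sv a) : ℝ≥0∞) * (2 * (d:ℝ≥0∞))⁻¹
          = (2 * (d:ℝ≥0∞))⁻¹ ^ (n+1) * (N d n (x - sv a) : ℝ≥0∞) := by
      intro a
      ring
    rw [Finset.sum_congr rfl (fun a _ => this a), ← Finset.mul_sum, N_succ]
    push_cast
    rfl

end Prob

end SRW

/-- For the simple symmetric random walk on `ℤ^d` (i.i.d. increments `ξ` uniform on the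
`2d` unit vectors), with `p_n(x) = P(ξ 0 + ⋯ + ξ (n-1) = x)` and `e₁` the first standard
basis vector: if `n` is odd and `|x|₁ = ∑ i |x i|` is odd, then `p_n(x) ≤ p_n(e₁)`. -/
theorem srw_pn_odd_le_e1
    (d : ℕ) (hd : 1 ≤ d)
    {Ω : Type*} [MeasurableSpace Ω] (μ : Measure Ω) [IsProbabilityMeasure μ]
    (ξ : ℕ → Ω → (Fin d → ℤ))
    (hmeas : ∀ i, Measurable (ξ i))
    (hindep : iIndepFun ξ μ)
    (hlaw : ∀ i (x : Fin d → ℤ),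
      μ {ω | ξ i ω = x} = if (∑ j, |x j|) = 1 then ((2 * d : ℝ≥0∞))⁻¹ else 0)
    (n : ℕ) (hn : Odd n)
    (x : Fin d → ℤ) (hx : Odd (∑ i, |x i|)) :
    μ {ω | ∑ i ∈ Finset.range n, ξ i ω = x} ≤
      μ {ω | ∑ i ∈ Finset.range n, ξ i ω = fun j : Fin d => if (j : ℕ) = 0 then 1 else 0} := by
  rw [SRW.prob_eq μ hd ξ hmeas hindep hlaw n x,
      SRW.prob_eq μ hd ξ hmeas hindep hlaw n _]
  exact mul_le_mul_right (by exact_mod_cast SRW.N_main hd x hx) _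
end

section
/- Let $Z$ be a random walk on $\mathbb{Z}^d$ with i.i.d. increments of law $p$, with $n$-step distribution $p_n(x):=\mathbb{P}^Z_0(Z_n=x)$, $p_0=\delta_0$. Assume (a) $p_n(0)\geq p_{n+1}(0)$ for all $n\geq 0$, and (b) $p_n(0)\geq p_n(x)$ for all $n\geq 0$ and all $x\in\mathbb{Z}^d$. Then for every deterministic sequence $\phi=(\phi_i)_{i\geq 0}$ in $\mathbb{Z}^d$ and every $n\in\mathbb{N}$, $\sum_{x\in\mathbb{Z}^d}\mathbb{P}^Z_x(\tau_\phi\leq n)\geq\sum_{x\in\mathbb{Z}^d}\mathbb{P}^Z_x(\tau_0\leq n)$, where $\tau_\phi:=\min\{m\geq 0: Z_m=\phi_m\}$ and $\tau_0$ is the case $\phi\equiv 0$. -/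
open MeasureTheory ProbabilityTheory Finset
open scoped ENNReal

set_option linter.unusedSectionVars false
set_option linter.unusedVariables false
set_option maxHeartbeats 1000000

private lemma pascal_swap {M : Type*} [AddCommMonoid M] (f : ℕ → ℕ → M) (N : ℕ) :
    ∑ m ∈ Finset.range N, ∑ j ∈ Finset.range m, f m j
      = ∑ j ∈ Finset.range N, ∑ m ∈ Finset.Ico (j + 1) N, f m j := by
  induction N with
  | zero => simp
  | succ N ih =>
    rw [Finset.sum_range_succ, ih,
      Finset.sum_range_succ (fun j => ∑ m ∈ Finset.Ico (j + 1) (N + 1), f m j),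
      Finset.Ico_self, Finset.sum_empty, add_zero, ← Finset.sum_add_distrib]
    exact Finset.sum_congr rfl fun j hj =>
      (Finset.sum_Ico_succ_top (Nat.succ_le_of_lt (Finset.mem_range.mp hj)) _).symm

section PascalAux

variable {d : ℕ} {Ω : Type*} [MeasurableSpace Ω] {μ : Measure Ω}
  {ξ : ℕ → Ω → (Fin d → ℤ)}

private lemma pascal_conv (hmeas : ∀ i, Measurable (ξ i))
    (hindep : iIndepFun ξ μ)
    {p : (Fin d → ℤ) → ℝ≥0∞} (hlaw : ∀ i (x : Fin d → ℤ), μ {ω | ξ i ω = x} = p x)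
    {s : Finset ℕ} {j : ℕ} (hj : j ∉ s) (y : Fin d → ℤ) :
    μ {ω | (∑ i ∈ s, ξ i ω) + ξ j ω = y}
      = ∑' z : Fin d → ℤ, μ {ω | ∑ i ∈ s, ξ i ω = y - z} * p z := by
  have hS : Measurable fun ω => ∑ i ∈ s, ξ i ω := Finset.measurable_sum s fun i _ => hmeas i
  have hcover : {ω | (∑ i ∈ s, ξ i ω) + ξ j ω = y}
      = ⋃ z : Fin d → ℤ, ({ω | ∑ i ∈ s, ξ i ω = y - z} ∩ {ω | ξ j ω = z}) := by
    ext ω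
    simp only [Set.mem_setOf_eq, Set.mem_iUnion, Set.mem_inter_iff]
    constructor
    · intro h
      exact ⟨ξ j ω, eq_sub_of_add_eq h, rfl⟩
    · rintro ⟨z, h1, rfl⟩
      rw [h1]; abel
  rw [hcover, measure_iUnion]
  · refine tsum_congr fun z => ?_
    have hind : IndepFun (fun ω => ∑ i ∈ s, ξ i ω) (ξ j) μ := by
      have h := hindep.indepFun_finsetSum_of_notMem hmeas hj
      have heq : (∑ i ∈ s, ξ i) = fun ω => ∑ i ∈ s, ξ i ω := by
        ext ω; simp [Finset.sum_apply]
      rwa [heq] at h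
    have h2 := hind.measure_inter_preimage_eq_mul {y - z} {z}
      (measurableSet_singleton _) (measurableSet_singleton _)
    rw [← hlaw j z]
    exact h2
  · intro z z' hzz'
    rw [Function.onFun, Set.disjoint_left]
    rintro ω ⟨-, h1⟩ ⟨-, h2⟩
    exact hzz' (h1.symm.trans h2)
  · intro z
    exact (hS (measurableSet_singleton _)).inter (hmeas j (measurableSet_singleton _))

private lemma pascal_law (hmeas : ∀ i, Measurable (ξ i))
    (hindep : iIndepFun ξ μ)
    {p : (Fin d → ℤ) → ℝ≥0∞} (hlaw : ∀ i (x : Fin d → ℤ), μ {ω | ξ i ω = x} = p x)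
    {pn : ℕ → (Fin d → ℤ) → ℝ≥0∞}
    (hpn : ∀ m x, pn m x = μ {ω | ∑ i ∈ Finset.range m, ξ i ω = x}) :
    ∀ (k m : ℕ) (y : Fin d → ℤ),
      μ {ω | ∑ i ∈ Finset.Ico m (m + k), ξ i ω = y} = pn k y := by
  intro k
  induction k with
  | zero => intro m y; rw [hpn]; simp
  | succ k ih =>
    intro m y
    have h1 : {ω | ∑ i ∈ Finset.Ico m (m + (k + 1)), ξ i ω = y}
        = {ω | (∑ i ∈ Finset.Ico m (m + k), ξ i ω) + ξ (m + k) ω = y} := by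
      ext ω
      rw [Set.mem_setOf_eq, Set.mem_setOf_eq, ← add_assoc,
        Finset.sum_Ico_succ_top (Nat.le_add_right m k)]
    have h2 : pn (k + 1) y
        = ∑' z : Fin d → ℤ, μ {ω | ∑ i ∈ Finset.range k, ξ i ω = y - z} * p z := by
      rw [hpn]
      have h3 : {ω | ∑ i ∈ Finset.range (k + 1), ξ i ω = y}
          = {ω | (∑ i ∈ Finset.range k, ξ i ω) + ξ k ω = y} := by
        ext ω
        rw [Set.mem_setOf_eq, Set.mem_setOf_eq, Finset.sum_range_succ]
      rw [h3, pascal_conv hmeas hindep hlaw (by simp) y]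
    rw [h1, pascal_conv hmeas hindep hlaw (by simp) y, h2]
    exact tsum_congr fun z => by rw [ih m (y - z), hpn]

private lemma pascal_total [IsProbabilityMeasure μ] (hmeas : ∀ i, Measurable (ξ i)) (m : ℕ) :
    ∑' y : Fin d → ℤ, μ {ω | ∑ i ∈ Finset.range m, ξ i ω = y} = 1 := by
  have hS : Measurable fun ω => ∑ i ∈ Finset.range m, ξ i ω :=
    Finset.measurable_sum _ fun i _ => hmeas i
  have hdisj : Pairwise (Function.onFun Disjoint
      (fun y : Fin d → ℤ => {ω | ∑ i ∈ Finset.range m, ξ i ω = y})) := by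
    intro z z' hzz'
    rw [Function.onFun, Set.disjoint_left]
    intro ω h1 h2
    exact hzz' ((Set.mem_setOf_eq ▸ h1).symm.trans h2)
  have hU := measure_iUnion (μ := μ) hdisj (fun z => hS (measurableSet_singleton _))
  rw [← hU]
  have h : (⋃ y : Fin d → ℤ, {ω | ∑ i ∈ Finset.range m, ξ i ω = y}) = Set.univ := by
    ext ω; simp
  rw [h, measure_univ]

end PascalAux

private def pascalT {d : ℕ} {Ω : Type*} (ξ : ℕ → Ω → (Fin d → ℤ))
    (ψ : ℕ → (Fin d → ℤ)) (x : Fin d → ℤ) (m : ℕ) : Set Ω :=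
  {ω | (∑ i ∈ Finset.range m, ξ i ω) = ψ m - x ∧
    ∀ k < m, (∑ i ∈ Finset.range k, ξ i ω) ≠ ψ k - x}

section PascalAux2

variable {d : ℕ} {Ω : Type*} [MeasurableSpace Ω] {μ : Measure Ω}
  {ξ : ℕ → Ω → (Fin d → ℤ)}

private lemma pascalT_meas (hmeas : ∀ i, Measurable (ξ i)) (ψ : ℕ → (Fin d → ℤ))
    (x : Fin d → ℤ) (m : ℕ) : MeasurableSet (pascalT ξ ψ x m) := by
  have hS : ∀ k, Measurable fun ω => ∑ i ∈ Finset.range k, ξ i ω :=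
    fun k => Finset.measurable_sum _ fun i _ => hmeas i
  have h : pascalT ξ ψ x m =
      {ω | (∑ i ∈ Finset.range m, ξ i ω) = ψ m - x} ∩
      ⋂ k, ⋂ _ : k < m, {ω | (∑ i ∈ Finset.range k, ξ i ω) = ψ k - x}ᶜ := by
    ext ω
    simp [pascalT]
  rw [h]
  exact ((hS m) (measurableSet_singleton _)).inter
    (MeasurableSet.iInter fun k => MeasurableSet.iInter fun _ =>
      ((hS k) (measurableSet_singleton _)).compl)

private lemma pascalT_disj (ψ : ℕ → (Fin d → ℤ)) (x : Fin d → ℤ) :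
    ∀ {a b : ℕ}, a ≠ b → Disjoint (pascalT ξ ψ x a) (pascalT ξ ψ x b) := by
  have h : ∀ {a b : ℕ}, a < b → Disjoint (pascalT ξ ψ x a) (pascalT ξ ψ x b) := by
    intro a b hab
    rw [Set.disjoint_left]
    rintro ω ⟨ha1, -⟩ ⟨-, hb2⟩
    exact hb2 a hab ha1
  intro a b hab
  rcases hab.lt_or_gt with h' | h'
  · exact h h'
  · exact (h h').symm

private lemma pascalT_indep (hmeas : ∀ i, Measurable (ξ i))
    (hindep : iIndepFun ξ μ)
    (ψ : ℕ → (Fin d → ℤ)) (x : Fin d → ℤ) {m N : ℕ} (hmN : m ≤ N) (c : Fin d → ℤ) :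
    μ (pascalT ξ ψ x m ∩ {ω | ∑ i ∈ Finset.Ico m N, ξ i ω = c})
      = μ (pascalT ξ ψ x m) * μ {ω | ∑ i ∈ Finset.Ico m N, ξ i ω = c} := by
  classical
  have hXY := hindep.indepFun_finset (Finset.range m) (Finset.Ico m N)
      (by simp only [Finset.disjoint_left, Finset.mem_range, Finset.mem_Ico]; omega) hmeas
  set A : Set ({i // i ∈ Finset.range m} → (Fin d → ℤ)) :=
    {t | (∑ i ∈ Finset.range m, if h : i ∈ Finset.range m then t ⟨i, h⟩ else 0) = ψ m - x ∧
      ∀ k < m, (∑ i ∈ Finset.range k, if h : i ∈ Finset.range m then t ⟨i, h⟩ else 0)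
        ≠ ψ k - x} with hA
  set B : Set ({i // i ∈ Finset.Ico m N} → (Fin d → ℤ)) := {t | (∑ i, t i) = c} with hB
  have key : ∀ (ω : Ω) (k : ℕ), k ≤ m →
      (∑ i ∈ Finset.range k,
        if h : i ∈ Finset.range m then (fun j : {i // i ∈ Finset.range m} => ξ j ω) ⟨i, h⟩ else 0)
        = ∑ i ∈ Finset.range k, ξ i ω := by
    intro ω k hk
    refine Finset.sum_congr rfl fun i hi => ?_
    rw [dif_pos (Finset.mem_range.mpr (lt_of_lt_of_le (Finset.mem_range.mp hi) hk))]
  have e1 : (fun ω (i : {i // i ∈ Finset.range m}) => ξ i ω) ⁻¹' A = pascalT ξ ψ x m := by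
    ext ω
    simp only [Set.mem_preimage, hA, Set.mem_setOf_eq, pascalT,
      key ω m le_rfl]
    constructor
    · rintro ⟨h1, h2⟩
      exact ⟨h1, fun k hk => by rw [← key ω k (le_of_lt hk)]; exact h2 k hk⟩
    · rintro ⟨h1, h2⟩
      exact ⟨h1, fun k hk => by rw [key ω k (le_of_lt hk)]; exact h2 k hk⟩
  have e2 : (fun ω (i : {i // i ∈ Finset.Ico m N}) => ξ i ω) ⁻¹' B
      = {ω | ∑ i ∈ Finset.Ico m N, ξ i ω = c} := by
    ext ω
    simp only [Set.mem_preimage, hB, Set.mem_setOf_eq]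
    rw [Finset.sum_coe_sort (Finset.Ico m N) (fun i => ξ i ω)]
  rw [← e1, ← e2]
  exact hXY.measure_inter_preimage_eq_mul A B .of_discrete .of_discrete

private lemma pascal_decompE (ψ : ℕ → (Fin d → ℤ)) (x : Fin d → ℤ) (n : ℕ) :
    {ω | ∃ m ≤ n, x + ∑ i ∈ Finset.range m, ξ i ω = ψ m}
      = ⋃ m ∈ Finset.range (n + 1), pascalT ξ ψ x m := by
  classical
  ext ω
  simp only [Set.mem_setOf_eq, Set.mem_iUnion, Finset.mem_range, Nat.lt_succ_iff, pascalT]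
  constructor
  · rintro ⟨m, hm, hx⟩
    have hm' : (∑ i ∈ Finset.range m, ξ i ω) = ψ m - x := by rw [← hx]; abel
    have hex : ∃ k, (∑ i ∈ Finset.range k, ξ i ω) = ψ k - x := ⟨m, hm'⟩
    exact ⟨Nat.find hex, le_trans (Nat.find_le hm') hm,
      Nat.find_spec hex, fun k hk => Nat.find_min hex hk⟩
  · rintro ⟨m, hm, h1, -⟩
    exact ⟨m, hm, by rw [h1]; abel⟩

private lemma pascal_decompHit (ψ : ℕ → (Fin d → ℤ)) (x : Fin d → ℤ) (N : ℕ) :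
    {ω | (∑ i ∈ Finset.range N, ξ i ω) = ψ N - x}
      = ⋃ m ∈ Finset.range (N + 1),
          (pascalT ξ ψ x m ∩ {ω | ∑ i ∈ Finset.Ico m N, ξ i ω = ψ N - ψ m}) := by
  classical
  ext ω
  simp only [Set.mem_setOf_eq, Set.mem_iUnion, Set.mem_inter_iff, Finset.mem_range,
    Nat.lt_succ_iff, pascalT]
  constructor
  · intro h
    have hex : ∃ k, (∑ i ∈ Finset.range k, ξ i ω) = ψ k - x := ⟨N, h⟩
    have hmN : Nat.find hex ≤ N := Nat.find_le h
    have hspec := Nat.find_spec hex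
    refine ⟨Nat.find hex, hmN, ⟨hspec, fun k hk => Nat.find_min hex hk⟩, ?_⟩
    have hsum := Finset.sum_range_add_sum_Ico (fun i => ξ i ω) hmN
    have h2 : ∑ i ∈ Finset.Ico (Nat.find hex) N, ξ i ω
        = (∑ i ∈ Finset.range N, ξ i ω) - ∑ i ∈ Finset.range (Nat.find hex), ξ i ω := by
      rw [← hsum]; abel
    rw [h2, h, hspec]
    abel
  · rintro ⟨m, hmN, ⟨h1, -⟩, h2⟩
    rw [← Finset.sum_range_add_sum_Ico (fun i => ξ i ω) hmN, h1, h2]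
    abel

end PascalAux2

section PascalAux3

variable {d : ℕ} {Ω : Type*} [MeasurableSpace Ω] {μ : Measure Ω}
  {ξ : ℕ → Ω → (Fin d → ℤ)}

private lemma pascal_key2 (hmeas : ∀ i, Measurable (ξ i))
    (hindep : iIndepFun ξ μ)
    {p : (Fin d → ℤ) → ℝ≥0∞} (hlaw : ∀ i (x : Fin d → ℤ), μ {ω | ξ i ω = x} = p x)
    {pn : ℕ → (Fin d → ℤ) → ℝ≥0∞}
    (hpn : ∀ m x, pn m x = μ {ω | ∑ i ∈ Finset.range m, ξ i ω = x})
    (ψ : ℕ → (Fin d → ℤ)) (x : Fin d → ℤ) (N : ℕ) :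
    μ {ω | (∑ i ∈ Finset.range N, ξ i ω) = ψ N - x}
      = ∑ m ∈ Finset.range (N + 1), μ (pascalT ξ ψ x m) * pn (N - m) (ψ N - ψ m) := by
  have hdisj : Set.PairwiseDisjoint ↑(Finset.range (N + 1))
      (fun m => pascalT ξ ψ x m ∩ {ω | ∑ i ∈ Finset.Ico m N, ξ i ω = ψ N - ψ m}) :=
    fun a _ b _ hab => Disjoint.mono Set.inter_subset_left Set.inter_subset_left
      (pascalT_disj ψ x hab)
  have hm' : ∀ m, m ∈ Finset.range (N + 1) → MeasurableSet
      (pascalT ξ ψ x m ∩ {ω | ∑ i ∈ Finset.Ico m N, ξ i ω = ψ N - ψ m}) :=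
    fun m _ => (pascalT_meas hmeas ψ x m).inter
      ((Finset.measurable_sum _ fun i _ => hmeas i) (measurableSet_singleton _))
  rw [pascal_decompHit ψ x N, measure_biUnion_finset hdisj hm']
  refine Finset.sum_congr rfl fun m hm => ?_
  have hmN : m ≤ N := Nat.lt_succ_iff.mp (Finset.mem_range.mp hm)
  rw [pascalT_indep hmeas hindep ψ x hmN _]
  congr 1
  have hIco : Finset.Ico m N = Finset.Ico m (m + (N - m)) := by
    rw [Nat.add_sub_cancel' hmN]
  rw [hIco, pascal_law hmeas hindep hlaw hpn (N - m) m (ψ N - ψ m)]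

private lemma pascal_renewal [IsProbabilityMeasure μ] (hmeas : ∀ i, Measurable (ξ i))
    (hindep : iIndepFun ξ μ)
    {p : (Fin d → ℤ) → ℝ≥0∞} (hlaw : ∀ i (x : Fin d → ℤ), μ {ω | ξ i ω = x} = p x)
    {pn : ℕ → (Fin d → ℤ) → ℝ≥0∞}
    (hpn : ∀ m x, pn m x = μ {ω | ∑ i ∈ Finset.range m, ξ i ω = x})
    (ψ : ℕ → (Fin d → ℤ)) (N : ℕ) :
    ∑ m ∈ Finset.range (N + 1),
        (∑' x : Fin d → ℤ, μ (pascalT ξ ψ x m)) * pn (N - m) (ψ N - ψ m) = 1 := by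
  calc ∑ m ∈ Finset.range (N + 1),
        (∑' x : Fin d → ℤ, μ (pascalT ξ ψ x m)) * pn (N - m) (ψ N - ψ m)
      = ∑ m ∈ Finset.range (N + 1),
          ∑' x : Fin d → ℤ, μ (pascalT ξ ψ x m) * pn (N - m) (ψ N - ψ m) :=
        Finset.sum_congr rfl fun m _ => (ENNReal.tsum_mul_right).symm
    _ = ∑' x : Fin d → ℤ, ∑ m ∈ Finset.range (N + 1),
          μ (pascalT ξ ψ x m) * pn (N - m) (ψ N - ψ m) :=
        (Summable.tsum_finsetSum fun i _ => ENNReal.summable).symm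
    _ = ∑' x : Fin d → ℤ, μ {ω | (∑ i ∈ Finset.range N, ξ i ω) = ψ N - x} :=
        tsum_congr fun x => (pascal_key2 hmeas hindep hlaw hpn ψ x N).symm
    _ = ∑' y : Fin d → ℤ, μ {ω | (∑ i ∈ Finset.range N, ξ i ω) = y} :=
        (Equiv.subLeft (ψ N)).tsum_eq (fun y => μ {ω | (∑ i ∈ Finset.range N, ξ i ω) = y})
    _ = 1 := pascal_total hmeas N

private lemma pascal_Esum (hmeas : ∀ i, Measurable (ξ i)) (ψ : ℕ → (Fin d → ℤ)) (n : ℕ) :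
    ∑' x : Fin d → ℤ, μ {ω | ∃ m ≤ n, x + ∑ i ∈ Finset.range m, ξ i ω = ψ m}
      = ∑ m ∈ Finset.range (n + 1), ∑' x : Fin d → ℤ, μ (pascalT ξ ψ x m) := by
  rw [← Summable.tsum_finsetSum fun i _ => ENNReal.summable]
  refine tsum_congr fun x => ?_
  have hdisj : Set.PairwiseDisjoint ↑(Finset.range (n + 1)) (pascalT ξ ψ x) :=
    fun a _ b _ hab => pascalT_disj ψ x hab
  rw [pascal_decompE ψ x n, measure_biUnion_finset hdisj fun m _ => pascalT_meas hmeas ψ x m]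

end PascalAux3

private lemma pascal_compare {u v q : ℕ → ℝ≥0∞}
    (hq0 : q 0 = 1) (hqmono : ∀ k, q (k + 1) ≤ q k)
    (hv : ∀ N, ∑ m ∈ Finset.range (N + 1), v m * q (N - m) = 1)
    (hu : ∀ N, 1 ≤ ∑ m ∈ Finset.range (N + 1), u m * q (N - m)) :
    ∀ N, ∑ m ∈ Finset.range (N + 1), v m ≤ ∑ m ∈ Finset.range (N + 1), u m := by
  intro N
  induction N using Nat.strong_induction_on with
  | _ N IH =>
    set c : ℕ → ℝ≥0∞ := fun j => q (N - (j + 1)) - q (N - j) with hc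
    have hbc : ∀ j, j < N → q (N - (j + 1)) = q (N - j) + c j := by
      intro j hj
      have hle : q (N - j) ≤ q (N - (j + 1)) := by
        have h' : N - j = (N - (j + 1)) + 1 := by omega
        rw [h']; exact hqmono _
      show q (N - (j + 1)) = q (N - j) + (q (N - (j + 1)) - q (N - j))
      exact ((tsub_add_cancel_of_le hle).symm).trans (add_comm _ _)
    have tele : ∀ m, m ≤ N → q (N - m) = q N + ∑ j ∈ Finset.range m, c j := by
      intro m
      induction m with
      | zero => intro _; simp
      | succ m ihm =>
        intro h
        rw [hbc m (by omega), ihm (by omega), Finset.sum_range_succ, add_assoc]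
    have rearr : ∀ w : ℕ → ℝ≥0∞,
        ∑ m ∈ Finset.range (N + 1), w m * q (N - m)
          = q N * (∑ m ∈ Finset.range (N + 1), w m)
            + ∑ j ∈ Finset.range N, (∑ m ∈ Finset.Ico (j + 1) (N + 1), w m) * c j := by
      intro w
      have e1 : ∀ m ∈ Finset.range (N + 1), w m * q (N - m)
          = w m * q N + ∑ j ∈ Finset.range m, w m * c j := by
        intro m hm
        rw [tele m (Nat.lt_succ_iff.mp (Finset.mem_range.mp hm)), mul_add, Finset.mul_sum]
      rw [Finset.sum_congr rfl e1, Finset.sum_add_distrib]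
      congr 1
      · rw [← Finset.sum_mul, mul_comm]
      · rw [pascal_swap (fun m j => w m * c j) (N + 1), Finset.sum_range_succ,
          Finset.Ico_self, Finset.sum_empty, add_zero]
        exact Finset.sum_congr rfl fun j _ => by rw [← Finset.sum_mul]
    have split : ∀ (w : ℕ → ℝ≥0∞) (j : ℕ), j < N →
        ∑ m ∈ Finset.range (N + 1), w m
          = ∑ m ∈ Finset.range (j + 1), w m + ∑ m ∈ Finset.Ico (j + 1) (N + 1), w m :=
      fun w j hj => (Finset.sum_range_add_sum_Ico w (by omega)).symm
    have hqN0 : q (N - N) = 1 := by rw [Nat.sub_self]; exact hq0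
    have expand : ∀ w : ℝ≥0∞,
        w * (q N + ∑ j ∈ Finset.range N, c j)
          = q N * w + ∑ j ∈ Finset.range N, w * c j := by
      intro w
      rw [mul_add, Finset.mul_sum, mul_comm w (q N)]
    calc ∑ m ∈ Finset.range (N + 1), v m
        = (∑ m ∈ Finset.range (N + 1), v m) * q (N - N) := by rw [hqN0, mul_one]
      _ = (∑ m ∈ Finset.range (N + 1), v m) * (q N + ∑ j ∈ Finset.range N, c j) := by
          rw [← tele N le_rfl]
      _ = q N * (∑ m ∈ Finset.range (N + 1), v m)
            + ∑ j ∈ Finset.range N, (∑ m ∈ Finset.range (N + 1), v m) * c j :=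
          expand _
      _ = q N * (∑ m ∈ Finset.range (N + 1), v m)
            + ∑ j ∈ Finset.range N,
                ((∑ m ∈ Finset.range (j + 1), v m) * c j
                  + (∑ m ∈ Finset.Ico (j + 1) (N + 1), v m) * c j) := by
          congr 1
          refine Finset.sum_congr rfl fun j hj => ?_
          rw [← add_mul, ← split v j (Finset.mem_range.mp hj)]
      _ = (q N * (∑ m ∈ Finset.range (N + 1), v m)
            + ∑ j ∈ Finset.range N, (∑ m ∈ Finset.Ico (j + 1) (N + 1), v m) * c j)
            + ∑ j ∈ Finset.range N, (∑ m ∈ Finset.range (j + 1), v m) * c j := by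
          rw [Finset.sum_add_distrib]; ring
      _ = ∑ m ∈ Finset.range (N + 1), v m * q (N - m)
            + ∑ j ∈ Finset.range N, (∑ m ∈ Finset.range (j + 1), v m) * c j := by
          rw [← rearr v]
      _ ≤ ∑ m ∈ Finset.range (N + 1), u m * q (N - m)
            + ∑ j ∈ Finset.range N, (∑ m ∈ Finset.range (j + 1), u m) * c j := by
          refine add_le_add ?_ (Finset.sum_le_sum fun j hj =>
            mul_le_mul_left (IH j (Finset.mem_range.mp hj)) _)
          rw [hv N]; exact hu N
      _ = (q N * (∑ m ∈ Finset.range (N + 1), u m)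
            + ∑ j ∈ Finset.range N, (∑ m ∈ Finset.Ico (j + 1) (N + 1), u m) * c j)
            + ∑ j ∈ Finset.range N, (∑ m ∈ Finset.range (j + 1), u m) * c j := by
          rw [rearr u]
      _ = q N * (∑ m ∈ Finset.range (N + 1), u m)
            + ∑ j ∈ Finset.range N,
                ((∑ m ∈ Finset.range (j + 1), u m) * c j
                  + (∑ m ∈ Finset.Ico (j + 1) (N + 1), u m) * c j) := by
          rw [Finset.sum_add_distrib]; ring
      _ = q N * (∑ m ∈ Finset.range (N + 1), u m)
            + ∑ j ∈ Finset.range N, (∑ m ∈ Finset.range (N + 1), u m) * c j := by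
          congr 1
          refine Finset.sum_congr rfl fun j hj => ?_
          rw [← add_mul, ← split u j (Finset.mem_range.mp hj)]
      _ = (∑ m ∈ Finset.range (N + 1), u m) * (q N + ∑ j ∈ Finset.range N, c j) :=
          (expand _).symm
      _ = (∑ m ∈ Finset.range (N + 1), u m) * q (N - N) := by rw [← tele N le_rfl]
      _ = ∑ m ∈ Finset.range (N + 1), u m := by rw [hqN0, mul_one]

/-- **Discrete-time Pascal principle of Moreau–Oshanin–Bénichou–Coppey.**  `Z` is a
random walk on `ℤ^d` with i.i.d. increments `ξ` of law `p`; `pn m x` is its `m`-step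
distribution (`pn 0 = δ_0`).  Assume `pn n 0 ≥ pn (n+1) 0` and `pn n 0 ≥ pn n x` for all
`n ≥ 0` and `x`.  Then, summing over all starting points `x`, the single moving trap `φ`
catches at least as many walkers by time `n` as the trap sitting at the origin, where
`τ_φ ≤ n` is the event `∃ m ≤ n, Z m = φ m`. -/
theorem moreau_pascal
    (d : ℕ) (hd : 1 ≤ d)
    (p : (Fin d → ℤ) → ℝ≥0∞) (hsum : ∑' x : Fin d → ℤ, p x = 1)
    {Ω : Type*} [MeasurableSpace Ω] (μ : Measure Ω) [IsProbabilityMeasure μ]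
    (ξ : ℕ → Ω → (Fin d → ℤ))
    (hmeas : ∀ i, Measurable (ξ i))
    (hindep : iIndepFun ξ μ)
    (hlaw : ∀ i (x : Fin d → ℤ), μ {ω | ξ i ω = x} = p x)
    (pn : ℕ → (Fin d → ℤ) → ℝ≥0∞)
    (hpn : ∀ m x, pn m x = μ {ω | ∑ i ∈ Finset.range m, ξ i ω = x})
    (hA : ∀ m : ℕ, pn (m + 1) 0 ≤ pn m 0)
    (hB : ∀ (m : ℕ) (x : Fin d → ℤ), pn m x ≤ pn m 0)
    (φ : ℕ → (Fin d → ℤ)) (n : ℕ) :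
    ∑' x : Fin d → ℤ, μ {ω | ∃ m ≤ n, x + ∑ i ∈ Finset.range m, ξ i ω = 0} ≤
      ∑' x : Fin d → ℤ, μ {ω | ∃ m ≤ n, x + ∑ i ∈ Finset.range m, ξ i ω = φ m} := by
  classical
  have hpn00 : pn 0 0 = 1 := by rw [hpn]; simp
  have hren_v : ∀ N, ∑ m ∈ Finset.range (N + 1),
      (∑' x : Fin d → ℤ, μ (pascalT ξ (fun _ => (0 : Fin d → ℤ)) x m)) * pn (N - m) 0 = 1 := by
    intro N
    have h := pascal_renewal hmeas hindep hlaw hpn (fun _ => (0 : Fin d → ℤ)) N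
    simpa using h
  have hren_u : ∀ N, (1 : ℝ≥0∞) ≤ ∑ m ∈ Finset.range (N + 1),
      (∑' x : Fin d → ℤ, μ (pascalT ξ φ x m)) * pn (N - m) 0 := by
    intro N
    rw [← pascal_renewal hmeas hindep hlaw hpn φ N]
    exact Finset.sum_le_sum fun m _ => mul_le_mul_right (hB _ _) _
  have claim := pascal_compare hpn00 hA hren_v hren_u n
  have E0 := pascal_Esum (μ := μ) hmeas (fun _ => (0 : Fin d → ℤ)) n
  have Eφ := pascal_Esum (μ := μ) hmeas φ n
  rw [E0, Eφ]
  exact claim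
end

section
/- Let $Z=(Z_n)_{n\geq 0}$ be the simple symmetric random walk on $\mathbb{Z}$ started at $0$, and let $\phi=(\phi_n)_{n\geq 0}$ be the deterministic sequence with $\phi_n=0$ for even $n$ and $\phi_n=1$ for odd $n$. Then almost surely $\lim_{n\to\infty}\frac{|R_n(Z-\phi)|}{|R_n(Z)|}=\frac{1}{2}$, where $R_n(W):=\{W_i:0\leq i\leq n\}$ denotes the range of a path $W$ up to time $n$. In particular, the additive-perturbation inequality $\mathbb{E}[|R_n(Z-\phi)|]\geq\mathbb{E}[|R_n(Z)|]$ fails for the simple symmetric random walk for all large $n$. -/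
open MeasureTheory ProbabilityTheory Finset Filter
open scoped ENNReal

private lemma ivt_aux (s : ℕ → ℤ) (h : ∀ i, |s (i+1) - s i| ≤ 1) :
    ∀ (d a : ℕ) (v : ℤ), s a ≤ v → v ≤ s (a + d) → ∃ j, j ≤ d ∧ s (a + j) = v := by
  intro d
  induction d with
  | zero => exact fun a v h1 h2 => ⟨0, le_rfl, le_antisymm h1 h2⟩
  | succ d ih =>
    intro a v h1 h2
    by_cases hc : s (a+1) ≤ v
    · obtain ⟨j, hj, hjv⟩ := ih (a+1) v hc
        (by rw [show a + 1 + d = a + (d + 1) by omega]; exact h2)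
      exact ⟨j+1, by omega, by rw [show a + (j+1) = a + 1 + j by omega]; exact hjv⟩
    · push_neg at hc
      have hb := abs_le.mp (h a)
      have hv : v = s a := by omega
      exact ⟨0, Nat.zero_le _, by simpa using hv.symm⟩

private lemma card_image_steps (s : ℕ → ℤ) (h : ∀ i, |s (i+1) - s i| ≤ 1) (n : ℕ) :
    ∃ m M : ℤ, m ≤ M ∧ (∃ a, a ≤ n ∧ s a = m) ∧ (∃ b, b ≤ n ∧ s b = M) ∧
      (∀ i, i ≤ n → m ≤ s i ∧ s i ≤ M) ∧
      (((Finset.range (n+1)).image s).card : ℤ) = M - m + 1 := by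
  have hne : ((Finset.range (n+1)).image s).Nonempty :=
    (Finset.nonempty_range_iff.mpr (Nat.succ_ne_zero n)).image s
  set t := (Finset.range (n+1)).image s with ht
  set m := t.min' hne with hm
  set M := t.max' hne with hM
  have hmem : ∀ i, i ≤ n → s i ∈ t := fun i hi =>
    Finset.mem_image.mpr ⟨i, Finset.mem_range.mpr (by omega), rfl⟩
  obtain ⟨a, ha, has⟩ := Finset.mem_image.mp (t.min'_mem hne)
  obtain ⟨b, hb, hbs⟩ := Finset.mem_image.mp (t.max'_mem hne)
  rw [Finset.mem_range] at ha hb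
  have hmM : m ≤ M := t.min'_le M (t.max'_mem hne)
  have hIcc : t = Finset.Icc m M := by
    apply Finset.ext; intro x
    simp only [Finset.mem_Icc]
    constructor
    · intro hx; exact ⟨t.min'_le x hx, t.le_max' x hx⟩
    · rintro ⟨h1, h2⟩
      rcases le_total a b with hab | hab
      · obtain ⟨j, hj, hjv⟩ := ivt_aux s h (b - a) a x (has ▸ h1)
          (by rw [show a + (b - a) = b by omega]; exact hbs ▸ h2)
        exact hjv ▸ hmem (a + j) (by omega)
      · have h' : ∀ i, |(fun k => -s k) (i+1) - (fun k => -s k) i| ≤ 1 := by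
          intro i
          have he : (fun k => -s k) (i+1) - (fun k => -s k) i = -(s (i+1) - s i) := by ring
          rw [he, abs_neg]; exact h i
        obtain ⟨j, hj, hjv⟩ := ivt_aux (fun k => -s k) h' (a - b) b (-x)
          (by simpa using hbs ▸ h2)
          (by rw [show b + (a - b) = a by omega]; simpa using has ▸ h1)
        have hx : s (b + j) = x := by simpa using congrArg Neg.neg hjv
        exact hx ▸ hmem (b + j) (by omega)
  refine ⟨m, M, hmM, ⟨a, by omega, has⟩, ⟨b, by omega, hbs⟩,
    fun i hi => ⟨t.min'_le _ (hmem i hi), t.le_max' _ (hmem i hi)⟩, ?_⟩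
  rw [hIcc, Int.card_Icc]
  omega

private lemma srw_card_bounds (z : ℕ → ℤ) (hz0 : z 0 = 0)
    (hstep : ∀ i, z (i+1) = z i + 1 ∨ z (i+1) = z i - 1) (n : ℕ) :
    ((((Finset.range (n+1)).image z).card : ℤ) ≤
        2 * (((Finset.range (n+1)).image (fun i => z i - (if Even i then 0 else 1))).card : ℤ)) ∧
    (2 * (((Finset.range (n+1)).image (fun i => z i - (if Even i then 0 else 1))).card : ℤ) ≤
        (((Finset.range (n+1)).image z).card : ℤ) + 2) ∧
    (∀ a b, a ≤ n → b ≤ n → z b - z a + 1 ≤ (((Finset.range (n+1)).image z).card : ℤ)) := by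
  have hsz : ∀ i, |z (i+1) - z i| ≤ 1 := by
    intro i; rcases hstep i with h | h <;> simp [h]
  have hpar : ∀ k : ℕ, z k % 2 = (k : ℤ) % 2 := by
    intro k
    induction k with
    | zero => simp [hz0]
    | succ k ih => rcases hstep k with h | h <;> push_cast <;> omega
  set w : ℕ → ℤ := fun i => z i - (if Even i then 0 else 1) with hw
  have hweven : ∀ k, w k % 2 = 0 := by
    intro k
    have hp := hpar k
    rcases Nat.even_or_odd k with he | ho
    · have hk2 : (k : ℤ) % 2 = 0 := by have := Nat.even_iff.mp he; omega
      simp only [hw]; rw [if_pos he]; omega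
    · have hk2 : (k : ℤ) % 2 = 1 := by have := Nat.odd_iff.mp ho; omega
      simp only [hw]; rw [if_neg (Nat.not_even_iff_odd.mpr ho)]; omega
  set v : ℕ → ℤ := fun i => w i / 2 with hv
  have h2v : ∀ k, 2 * v k = w k := by
    intro k; have := hweven k; simp only [hv]; omega
  have hwstep : ∀ i, |w (i+1) - w i| ≤ 2 := by
    intro i
    have h1 := abs_le.mp (hsz i)
    simp only [hw]
    rcases Nat.even_or_odd i with he | ho
    · rw [if_pos he, if_neg (by simpa [Nat.even_add_one] using he)]
      rw [abs_le]; omega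
    · rw [if_neg (Nat.not_even_iff_odd.mpr ho),
        if_pos (by simp [Nat.even_add_one, Nat.not_even_iff_odd.mpr ho])]
      rw [abs_le]; omega
  have hsv : ∀ i, |v (i+1) - v i| ≤ 1 := by
    intro i
    have h1 := abs_le.mp (hwstep i)
    have h2 := h2v i
    have h3 := h2v (i+1)
    rw [abs_le]
    omega
  obtain ⟨mz, Mz, hmMz, ⟨az, haz, hazs⟩, ⟨bz, hbz, hbzs⟩, hbdz, hcz⟩ := card_image_steps z hsz n
  obtain ⟨mv, Mv, hmMv, ⟨av, hav, havs⟩, ⟨bv, hbv, hbvs⟩, hbdv, hcv⟩ := card_image_steps v hsv n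
  have himg : (Finset.range (n+1)).image w
      = ((Finset.range (n+1)).image v).image (fun x => 2 * x) := by
    rw [Finset.image_image]
    exact Finset.image_congr (fun i _ => (h2v i).symm)
  have hcard : ((Finset.range (n+1)).image w).card = ((Finset.range (n+1)).image v).card := by
    rw [himg]
    exact Finset.card_image_of_injective _ (mul_right_injective₀ two_ne_zero)
  have hwz : ∀ i, z i - 1 ≤ w i ∧ w i ≤ z i := by
    intro i; simp only [hw]; split <;> omega
  have h1 : 2 * Mv ≤ Mz := by
    have e1 := (hwz bv).2
    have e2 := (hbdz bv hbv).2
    have e3 := h2v bv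
    omega
  have h2 : Mz - 1 ≤ 2 * Mv := by
    have e1 := (hwz bz).1
    have e2 := (hbdv bz hbz).2
    have e3 := h2v bz
    omega
  have h3 : mz ≤ 2 * mv + 1 := by
    have e1 := (hwz av).1
    have e2 := (hbdz av hav).1
    have e3 := h2v av
    omega
  have h4 : 2 * mv ≤ mz := by
    have e1 := (hwz az).2
    have e2 := (hbdv az haz).1
    have e3 := h2v az
    omega
  have hcw : (((Finset.range (n+1)).image w).card : ℤ) = Mv - mv + 1 := by
    rw [hcard]; exact hcv
  refine ⟨by rw [hcz, hcw]; omega, by rw [hcz, hcw]; omega, ?_⟩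
  intro a b ha hb
  have e1 := (hbdz a ha).1
  have e2 := (hbdz b hb).2
  omega

private lemma tendsto_ratio (z : ℕ → ℤ) (hz0 : z 0 = 0)
    (hstep : ∀ i, z (i+1) = z i + 1 ∨ z (i+1) = z i - 1)
    (hruns : ∀ L : ℕ, ∃ a, ∀ j, j < L + 1 → z (a + j + 1) = z (a + j) + 1) :
    Tendsto (fun n : ℕ =>
      ((((Finset.range (n+1)).image (fun i => z i - (if Even i then 0 else 1))).card : ℝ) /
        (((Finset.range (n+1)).image z).card : ℝ))) atTop (nhds (1 / 2)) := by
  have hb := fun n => srw_card_bounds z hz0 hstep n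
  have hpos : ∀ n : ℕ, (0 : ℝ) < (((Finset.range (n+1)).image z).card : ℝ) := by
    intro n
    have : 0 < ((Finset.range (n+1)).image z).card := Finset.card_pos.mpr
      ((Finset.nonempty_range_iff.mpr (Nat.succ_ne_zero n)).image z)
    exact_mod_cast this
  have htop : Tendsto (fun n : ℕ => (((Finset.range (n+1)).image z).card : ℝ)) atTop atTop := by
    rw [tendsto_atTop]
    intro b
    obtain ⟨L, hL⟩ := exists_nat_ge b
    obtain ⟨a, ha⟩ := hruns L
    have hz_run : ∀ m, m ≤ L + 1 → z (a + m) = z a + m := by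
      intro m
      induction m with
      | zero => intro _; simp
      | succ m ih =>
        intro hm
        have e : z (a + m + 1) = z (a + m) + 1 := ha m (by omega)
        rw [show a + (m+1) = a + m + 1 by omega, e, ih (by omega)]
        push_cast; ring
    rw [eventually_atTop]
    refine ⟨a + L + 1, fun n hn => ?_⟩
    have h3 := ((hb n).2.2) a (a + (L+1)) (by omega) (by omega)
    rw [hz_run (L+1) le_rfl] at h3
    have hLc : (L : ℤ) ≤ (((Finset.range (n+1)).image z).card : ℤ) := by push_cast at h3 ⊢; omega
    have : (L : ℝ) ≤ (((Finset.range (n+1)).image z).card : ℝ) := by exact_mod_cast hLc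
    linarith
  have hupperT : Tendsto (fun n : ℕ =>
      1/2 + (((Finset.range (n+1)).image z).card : ℝ)⁻¹) atTop (nhds (1/2)) := by
    have h0 : Tendsto (fun n : ℕ => (((Finset.range (n+1)).image z).card : ℝ)⁻¹)
        atTop (nhds 0) := htop.inv_tendsto_atTop
    simpa using tendsto_const_nhds.add h0
  refine tendsto_of_tendsto_of_tendsto_of_le_of_le (g := fun _ => (1:ℝ)/2)
    tendsto_const_nhds hupperT ?_ ?_
  · intro n
    have h1 : (((Finset.range (n+1)).image z).card : ℝ) ≤
        2 * (((Finset.range (n+1)).image (fun i => z i - (if Even i then 0 else 1))).card : ℝ) := by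
      exact_mod_cast (hb n).1
    rw [le_div_iff₀ (hpos n)]
    linarith
  · intro n
    have h2 : 2 * (((Finset.range (n+1)).image (fun i => z i - (if Even i then 0 else 1))).card : ℝ)
        ≤ (((Finset.range (n+1)).image z).card : ℝ) + 2 := by
      exact_mod_cast (hb n).2.1
    rw [div_le_iff₀ (hpos n)]
    have e : (1/2 + (((Finset.range (n+1)).image z).card : ℝ)⁻¹) *
        (((Finset.range (n+1)).image z).card : ℝ)
        = (((Finset.range (n+1)).image z).card : ℝ)/2 + 1 := by
      field_simp
    rw [e]
    linarith

private lemma runs_ae {Ω : Type*} [MeasurableSpace Ω] (μ : Measure Ω) [IsProbabilityMeasure μ]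
    (ξ : ℕ → Ω → ℤ) (hmeas : ∀ i, Measurable (ξ i))
    (hprod : ∀ S : Finset ℕ, μ (⋂ i ∈ S, ξ i ⁻¹' ({1} : Set ℤ)) = 2⁻¹ ^ S.card) :
    ∀ᵐ ω ∂μ, ∀ L : ℕ, ∃ a : ℕ, ∀ j, j < L + 1 → ξ (a + j) ω = 1 := by
  rw [ae_all_iff]
  intro L
  set l := L + 1 with hl
  have hl0 : 0 < l := Nat.succ_pos L
  set blk : ℕ → Finset ℕ := fun k => (Finset.range l).image (fun j => k * l + j) with hblk
  set A : ℕ → Set Ω := fun k => ⋂ i ∈ blk k, ξ i ⁻¹' ({1} : Set ℤ) with hA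
  have hAmeas : ∀ k, MeasurableSet (A k) := by
    intro k
    rw [hA]
    exact Finset.measurableSet_biInter _ (fun i _ => (hmeas i) (measurableSet_singleton 1))
  have hdiv : ∀ k j, j < l → (k * l + j) / l = k := by
    intro k j hj
    rw [Nat.add_comm, Nat.add_mul_div_right _ _ hl0, Nat.div_eq_of_lt hj, Nat.zero_add]
  have hblkcard : ∀ k, (blk k).card = l := by
    intro k
    rw [hblk]
    rw [Finset.card_image_of_injective _ (fun a b h => by omega), Finset.card_range]
  have hAk : ∀ k, μ (A k) = 2⁻¹ ^ l := by
    intro k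
    rw [hA]
    rw [hprod (blk k), hblkcard k]
  have hindepA : iIndepSet A μ := by
    rw [iIndepSet_iff_meas_biInter hAmeas]
    intro s
    have hint : (⋂ k ∈ s, A k) = ⋂ i ∈ s.biUnion blk, ξ i ⁻¹' ({1} : Set ℤ) := by
      rw [Finset.set_biInter_biUnion]
    have hdisj : ∀ k1 ∈ (s : Set ℕ), ∀ k2 ∈ (s : Set ℕ), k1 ≠ k2 →
        Disjoint (blk k1) (blk k2) := by
      intro k1 _ k2 _ hne
      refine Finset.disjoint_left.mpr ?_
      intro i hi1 hi2
      simp only [hblk, Finset.mem_image, Finset.mem_range] at hi1 hi2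
      obtain ⟨j1, hj1, e1⟩ := hi1
      obtain ⟨j2, hj2, e2⟩ := hi2
      exact absurd (by rw [← hdiv k1 j1 hj1, e1, ← e2, hdiv k2 j2 hj2]) hne
    rw [hint, hprod, Finset.card_biUnion hdisj]
    rw [Finset.sum_congr rfl (fun k _ => hblkcard k), Finset.sum_const, smul_eq_mul]
    rw [Finset.prod_congr rfl (fun k _ => hAk k), Finset.prod_const, ← pow_mul, mul_comm]
  have htsum : (∑' k, μ (A k)) = ∞ := by
    rw [tsum_congr hAk]
    exact ENNReal.tsum_const_eq_top_of_ne_zero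
      (pow_ne_zero _ (ENNReal.inv_ne_zero.mpr ENNReal.ofNat_ne_top))
  have hbc := measure_limsup_eq_one hAmeas hindepA htsum
  have hae : ∀ᵐ ω ∂μ, ω ∈ limsup A atTop := by
    rw [ae_iff]
    have hcompl : {ω | ¬ ω ∈ limsup A atTop} = (limsup A atTop)ᶜ := rfl
    rw [hcompl, measure_compl (MeasurableSet.measurableSet_limsup hAmeas) (measure_ne_top μ _), hbc,
      measure_univ, tsub_self]
  filter_upwards [hae] with ω hω
  rw [mem_limsup_iff_frequently_mem] at hω
  obtain ⟨k, hk⟩ := hω.exists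
  refine ⟨k * l, fun j hj => ?_⟩
  rw [hA] at hk
  have hmem : k * l + j ∈ blk k := by
    rw [hblk]
    exact Finset.mem_image.mpr ⟨j, Finset.mem_range.mpr hj, rfl⟩
  simpa using Set.mem_iInter₂.mp hk _ hmem

private lemma card_le_aux (z : ℕ → ℤ) (hz0 : z 0 = 0)
    (hstep : ∀ i, z (i+1) = z i + 1 ∨ z (i+1) = z i - 1) (n : ℕ) (hn : 1 ≤ n) :
    ((Finset.range (n+1)).image (fun i => z i - (if Even i then 0 else 1))).card ≤
      ((Finset.range (n+1)).image z).card := by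
  obtain ⟨h1, h2, hbd⟩ := srw_card_bounds z hz0 hstep n
  have hcz2 : (2:ℤ) ≤ (((Finset.range (n+1)).image z).card : ℤ) := by
    rcases hstep 0 with h | h <;> have h' : z 1 = z 0 + 1 ∨ z 1 = z 0 - 1 := by
        first | exact Or.inl h | exact Or.inr h
    all_goals {
      have hb1 := hbd 0 1 (by omega) (by omega)
      have hb2 := hbd 1 0 (by omega) (by omega)
      omega }
  omega

private lemma card_lt_aux (z : ℕ → ℤ) (hz0 : z 0 = 0)
    (hstep : ∀ i, z (i+1) = z i + 1 ∨ z (i+1) = z i - 1) (n : ℕ) (hn : 3 ≤ n)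
    (e1 : z 1 = z 0 + 1) (e2 : z 2 = z 1 + 1) (e3 : z 3 = z 2 + 1) :
    ((Finset.range (n+1)).image (fun i => z i - (if Even i then 0 else 1))).card + 1 ≤
      ((Finset.range (n+1)).image z).card := by
  obtain ⟨h1, h2, hbd⟩ := srw_card_bounds z hz0 hstep n
  have hcz4 : (4:ℤ) ≤ (((Finset.range (n+1)).image z).card : ℤ) := by
    have := hbd 0 3 (by omega) (by omega); omega
  omega

private lemma card_meas {Ω : Type*} [MeasurableSpace Ω] (f : ℕ → Ω → ℤ)
    (hf : ∀ i, Measurable (f i)) (n : ℕ) :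
    Measurable (fun ω => (((Finset.range (n+1)).image (fun i => f i ω)).card : ℝ≥0∞)) := by
  have himg : ∀ ω : Ω, ((Finset.range (n+1)).image (fun i => f i ω)) =
      (Finset.univ.image (fun i : Fin (n+1) => f i ω)) := by
    intro ω; apply Finset.ext; intro x
    simp only [Finset.mem_image, Finset.mem_range, Finset.mem_univ, true_and]
    constructor
    · rintro ⟨i, hi, e⟩; exact ⟨⟨i, hi⟩, e⟩
    · rintro ⟨i, e⟩; exact ⟨i, i.isLt, e⟩
  have he : (fun ω => (((Finset.range (n+1)).image (fun i => f i ω)).card : ℝ≥0∞)) =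
      (fun u : Fin (n+1) → ℤ => ((Finset.univ.image u).card : ℝ≥0∞))
        ∘ (fun ω (i : Fin (n+1)) => f i ω) := by
    funext ω
    simp only [Function.comp_apply, himg ω]
  rw [he]
  exact (measurable_of_countable _).comp (measurable_pi_lambda _ fun i => hf i)

/-- **Failure of the additive-perturbation inequality for the simple symmetric random
walk on `ℤ`.**  `Z n = ξ 0 + ⋯ + ξ (n-1)` with `ξ` i.i.d. uniform on `{-1, +1}`, and
`φ n = 0` for even `n`, `φ n = 1` for odd `n`.  Then almost surely
`|R_n(Z - φ)| / |R_n(Z)| → 1/2` as `n → ∞`, and consequently the inequality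
`E[|R_n(Z - φ)|] ≥ E[|R_n(Z)|]` fails (with a strict reverse inequality) for all
sufficiently large `n`. -/
theorem additive_perturbation_fails_srw
    {Ω : Type*} [MeasurableSpace Ω] (μ : Measure Ω) [IsProbabilityMeasure μ]
    (ξ : ℕ → Ω → ℤ)
    (hmeas : ∀ i, Measurable (ξ i))
    (hindep : iIndepFun ξ μ)
    (hlaw : ∀ i (k : ℤ), μ {ω | ξ i ω = k} = if k = 1 ∨ k = -1 then 2⁻¹ else 0)
    (Z : ℕ → Ω → ℤ)
    (hZ : ∀ n ω, Z n ω = ∑ i ∈ Finset.range n, ξ i ω)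
    (φ : ℕ → ℤ)
    (hφ : ∀ n, φ n = if Even n then 0 else 1) :
    (∀ᵐ ω ∂μ, Tendsto
      (fun n : ℕ =>
        ((((Finset.range (n + 1)).image fun i => Z i ω - φ i).card : ℝ) /
          (((Finset.range (n + 1)).image fun i => Z i ω).card : ℝ)))
      atTop (nhds (1 / 2))) ∧
    ∃ N : ℕ, ∀ n ≥ N,
      ∫⁻ ω, (((Finset.range (n + 1)).image fun i => Z i ω - φ i).card : ℝ≥0∞) ∂μ <
        ∫⁻ ω, (((Finset.range (n + 1)).image fun i => Z i ω).card : ℝ≥0∞) ∂μ := by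
  have hsingle : ∀ i, μ (ξ i ⁻¹' ({1} : Set ℤ)) = 2⁻¹ := by
    intro i
    have e : ξ i ⁻¹' ({1} : Set ℤ) = {ω | ξ i ω = 1} := by ext ω; simp
    rw [e, hlaw i 1]
    simp
  have hprod : ∀ S : Finset ℕ, μ (⋂ i ∈ S, ξ i ⁻¹' ({1} : Set ℤ)) = 2⁻¹ ^ S.card := by
    intro S
    rw [hindep.measure_inter_preimage_eq_mul S (sets := fun _ => ({1} : Set ℤ))
      (fun i _ => measurableSet_singleton 1)]
    rw [Finset.prod_congr rfl (fun i _ => hsingle i), Finset.prod_const]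
  have hG : ∀ᵐ ω ∂μ, ∀ i, ξ i ω = 1 ∨ ξ i ω = -1 := by
    rw [ae_all_iff]
    intro i
    have hs : MeasurableSet (ξ i ⁻¹' ({1, -1} : Set ℤ)) :=
      (hmeas i) ((Set.finite_singleton (-1)).insert 1).measurableSet
    have hone : μ (ξ i ⁻¹' ({1, -1} : Set ℤ)) = 1 := by
      have hsplit : (ξ i ⁻¹' ({1, -1} : Set ℤ)) = ξ i ⁻¹' {1} ∪ ξ i ⁻¹' {-1} := by
        rw [← Set.preimage_union, Set.insert_eq]
      rw [hsplit, measure_union (Disjoint.preimage _ (by simp))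
        ((hmeas i) (measurableSet_singleton _))]
      have e1 : ξ i ⁻¹' ({1} : Set ℤ) = {ω | ξ i ω = 1} := by ext ω; simp
      have e2 : ξ i ⁻¹' ({-1} : Set ℤ) = {ω | ξ i ω = -1} := by ext ω; simp
      rw [e1, e2, hlaw i 1, hlaw i (-1)]
      norm_num [ENNReal.inv_two_add_inv_two]
    rw [ae_iff]
    have hcompl : {ω | ¬ (ξ i ω = 1 ∨ ξ i ω = -1)} = (ξ i ⁻¹' ({1, -1} : Set ℤ))ᶜ := by
      ext ω; simp [not_or]
    rw [hcompl, measure_compl hs (measure_ne_top μ _), hone, measure_univ, tsub_self]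
  have hrun := runs_ae μ ξ hmeas hprod
  have hZmeas : ∀ i, Measurable (Z i) := by
    intro i
    have e : Z i = fun ω => ∑ j ∈ Finset.range i, ξ j ω := funext fun ω => hZ i ω
    rw [e]
    exact Finset.measurable_sum _ fun j _ => hmeas j
  constructor
  · filter_upwards [hG, hrun] with ω hξ hruns
    simp only [hφ]
    have hz0 : (fun k => Z k ω) 0 = 0 := by simp [hZ]
    have hstepz : ∀ i, Z (i+1) ω = Z i ω + 1 ∨ Z (i+1) ω = Z i ω - 1 := by
      intro i
      have hsum : Z (i+1) ω = Z i ω + ξ i ω := by rw [hZ, hZ, Finset.sum_range_succ]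
      rcases hξ i with h | h
      · left; rw [hsum, h]
      · right; rw [hsum, h]; ring
    have hrunsz : ∀ L : ℕ, ∃ a, ∀ j, j < L + 1 → Z (a + j + 1) ω = Z (a + j) ω + 1 := by
      intro L
      obtain ⟨a, ha⟩ := hruns L
      refine ⟨a, fun j hj => ?_⟩
      rw [hZ, Finset.sum_range_succ, ← hZ, ha j hj]
    exact tendsto_ratio (fun k => Z k ω) hz0 hstepz hrunsz
  · refine ⟨3, fun n hn => ?_⟩
    simp only [hφ]
    set E : Set Ω := ⋂ i ∈ Finset.range 3, ξ i ⁻¹' ({1} : Set ℤ) with hE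
    have hEmeas : MeasurableSet E := by
      rw [hE]
      exact Finset.measurableSet_biInter _ fun i _ => (hmeas i) (measurableSet_singleton 1)
    have hEμ : μ E = 2⁻¹ ^ 3 := by rw [hE, hprod, Finset.card_range]
    have hwmeas : Measurable (fun ω => (((Finset.range (n+1)).image
        (fun i => Z i ω - (if Even i then 0 else 1))).card : ℝ≥0∞)) :=
      card_meas (fun i ω => Z i ω - (if Even i then 0 else 1))
        (fun i => (hZmeas i).sub measurable_const) n
    have hpt : ∀ᵐ ω ∂μ,
        (((Finset.range (n+1)).image (fun i => Z i ω - (if Even i then 0 else 1))).card : ℝ≥0∞)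
          + E.indicator (1 : Ω → ℝ≥0∞) ω
        ≤ (((Finset.range (n+1)).image (fun i => Z i ω)).card : ℝ≥0∞) := by
      filter_upwards [hG] with ω hξ
      have hz0 : (fun k => Z k ω) 0 = (0:ℤ) := by simp [hZ]
      have hstepz : ∀ i, Z (i+1) ω = Z i ω + 1 ∨ Z (i+1) ω = Z i ω - 1 := by
        intro i
        have hsum : Z (i+1) ω = Z i ω + ξ i ω := by rw [hZ, hZ, Finset.sum_range_succ]
        rcases hξ i with h | h
        · left; rw [hsum, h]
        · right; rw [hsum, h]; ring
      by_cases hωE : ω ∈ E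
      · rw [Set.indicator_of_mem hωE, Pi.one_apply]
        rw [hE] at hωE
        have hr : ∀ j, j < 3 → ξ j ω = 1 := by
          intro j hj
          have hm := Set.mem_iInter₂.mp hωE j (Finset.mem_range.mpr hj)
          simpa using hm
        have hstep1 : ∀ j, j < 3 → Z (j+1) ω = Z j ω + 1 := by
          intro j hj
          rw [hZ, Finset.sum_range_succ, ← hZ, hr j hj]
        have hc := card_lt_aux (fun k => Z k ω) hz0 hstepz n hn
          (hstep1 0 (by omega)) (hstep1 1 (by omega)) (hstep1 2 (by omega))
        exact_mod_cast hc
      · rw [Set.indicator_of_notMem hωE, add_zero]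
        exact_mod_cast card_le_aux (fun k => Z k ω) hz0 hstepz n (by omega)
    have hbound : (∫⁻ ω, (((Finset.range (n+1)).image
        (fun i => Z i ω - (if Even i then 0 else 1))).card : ℝ≥0∞) ∂μ) ≠ ⊤ := by
      have hle : ∀ ω, (((Finset.range (n+1)).image
          (fun i => Z i ω - (if Even i then 0 else 1))).card : ℝ≥0∞) ≤ ((n+1 : ℕ) : ℝ≥0∞) := by
        intro ω
        have hc := Finset.card_image_le (s := Finset.range (n+1))
          (f := fun i => Z i ω - (if Even i then 0 else 1))
        rw [Finset.card_range] at hc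
        exact_mod_cast hc
      refine ne_top_of_le_ne_top ?_ (lintegral_mono hle)
      rw [lintegral_const, measure_univ, mul_one]
      exact ENNReal.natCast_ne_top _
    calc (∫⁻ ω, (((Finset.range (n+1)).image
          (fun i => Z i ω - (if Even i then 0 else 1))).card : ℝ≥0∞) ∂μ)
        < (∫⁻ ω, (((Finset.range (n+1)).image
            (fun i => Z i ω - (if Even i then 0 else 1))).card : ℝ≥0∞) ∂μ) + μ E :=
          ENNReal.lt_add_right hbound
            (by rw [hEμ]; exact pow_ne_zero _ (ENNReal.inv_ne_zero.mpr ENNReal.ofNat_ne_top))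
      _ = ∫⁻ ω, ((((Finset.range (n+1)).image
            (fun i => Z i ω - (if Even i then 0 else 1))).card : ℝ≥0∞)
            + E.indicator (1 : Ω → ℝ≥0∞) ω) ∂μ := by
          rw [lintegral_add_left hwmeas, lintegral_indicator_one hEmeas]
      _ ≤ ∫⁻ ω, (((Finset.range (n+1)).image (fun i => Z i ω)).card : ℝ≥0∞) ∂μ :=
          lintegral_mono_ae hpt
end
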